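/- arXiv:1910.01222 — 9 statements merged into one kernel-verified Lean document; each statement's English description precedes it below -/
import Mathlib

section
/- Let R be a ring, let M be an R-module, and let M be the internal direct sum of a family of submodules (M_i)_{i∈I}. Then the endomorphism ring End_R(M) is centrally essential if and only if for every i ∈ I: (1) M_i is a fully invariant submodule of M, and (2) the ring End_R(M_i) is centrally essential. -/
/-- A ring `R` is centrally essential if for every nonzero `a : R` there exist
nonzero central elements `x, y` with `a * x = y`. -/
def IsCentrallyEssential (R : Type*) [Ring R] : Prop :=
  ∀ a : R, a ≠ 0 → ∃ x y : R, x ∈ Set.center R ∧ y ∈ Set.center R ∧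
    x ≠ 0 ∧ y ≠ 0 ∧ a * x = y

section Aux

variable {R : Type*} [Ring R] {M : Type*} [AddCommGroup M] [Module R M]
  {ι : Type*} [DecidableEq ι] {Mi : ι → Submodule R M}

/-- Projection onto the `i`-th summand of an internal direct sum. -/
noncomputable def projCE (h : DirectSum.IsInternal Mi) (i : ι) : M →ₗ[R] ↥(Mi i) :=
  (DirectSum.component R ι (fun i => ↥(Mi i)) i).comp
    (LinearEquiv.ofBijective (DirectSum.coeLinearMap Mi) h).symm.toLinearMap

lemma projCE_of_mem (h : DirectSum.IsInternal Mi) {i : ι} {x : M} (hx : x ∈ Mi i) :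
    projCE h i x = ⟨x, hx⟩ := by
  simpa [projCE, ← DirectSum.apply_eq_component] using
    h.ofBijective_coeLinearMap_of_mem hx

lemma projCE_of_mem_ne (h : DirectSum.IsInternal Mi) {i j : ι} (hij : j ≠ i) {x : M}
    (hx : x ∈ Mi j) : projCE h i x = 0 := by
  simpa [projCE, ← DirectSum.apply_eq_component] using
    h.ofBijective_coeLinearMap_of_mem_ne hij hx

/-- Extension of an endomorphism of a summand to the whole module (zero on the
other summands). -/
noncomputable def extCE (h : DirectSum.IsInternal Mi) (i : ι)
    (g : Module.End R ↥(Mi i)) : Module.End R M :=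
  (Mi i).subtype ∘ₗ g ∘ₗ projCE h i

lemma extCE_of_mem (h : DirectSum.IsInternal Mi) {i : ι} (g : Module.End R ↥(Mi i))
    {x : M} (hx : x ∈ Mi i) : extCE h i g x = g ⟨x, hx⟩ := by
  simp [extCE, projCE_of_mem h hx]

lemma extCE_of_mem_ne (h : DirectSum.IsInternal Mi) {i j : ι} (hij : j ≠ i)
    (g : Module.End R ↥(Mi i)) {x : M} (hx : x ∈ Mi j) : extCE h i g x = 0 := by
  simp [extCE, projCE_of_mem_ne h hij hx]

lemma extCE_mem (h : DirectSum.IsInternal Mi) {i : ι} (g : Module.End R ↥(Mi i))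
    (m : M) : extCE h i g m ∈ Mi i := by
  simp only [extCE, LinearMap.coe_comp, Function.comp_apply, Submodule.coe_subtype]
  exact (g (projCE h i m)).2

/-- Two endomorphisms agreeing on every summand are equal. -/
lemma endCE_ext (h : DirectSum.IsInternal Mi) {f g : Module.End R M}
    (H : ∀ i : ι, ∀ x ∈ Mi i, f x = g x) : f = g := by
  ext m
  have hm : m ∈ ⨆ i, Mi i := by rw [h.submodule_iSup_eq_top]; trivial
  refine Submodule.iSup_induction (motive := fun m => f m = g m) Mi hm H (by simp) ?_
  intro x y hx hy
  simp [map_add, hx, hy]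

lemma endCE_ne_zero (h : DirectSum.IsInternal Mi) {f : Module.End R M} (hf : f ≠ 0) :
    ∃ i : ι, ∃ x ∈ Mi i, f x ≠ 0 := by
  by_contra hc
  push_neg at hc
  exact hf (endCE_ext h (fun i x hx => by simpa using hc i x hx))

end Aux

/-- for an internal direct sum decomposition `M = ⨁ᵢ Mᵢ`, the endomorphism
ring of `M` is centrally essential iff each `Mᵢ` is fully invariant and each `End (Mᵢ)`
is centrally essential. -/
theorem endRing_isCentrallyEssential_iff_of_isInternal
    {R : Type*} [Ring R] {M : Type*} [AddCommGroup M] [Module R M]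
    {ι : Type*} [DecidableEq ι] (Mi : ι → Submodule R M)
    (h : DirectSum.IsInternal Mi) :
    IsCentrallyEssential (Module.End R M) ↔
      ∀ i : ι,
        (∀ f : Module.End R M, ∀ x ∈ Mi i, f x ∈ Mi i) ∧
        IsCentrallyEssential (Module.End R ↥(Mi i)) := by
  constructor
  · intro hCE i
    -- the idempotent projection onto `Mi i`
    obtain ⟨e, he_mem, he_fix, he_off⟩ :
        ∃ e : Module.End R M, (∀ m : M, e m ∈ Mi i) ∧ (∀ x ∈ Mi i, e x = x) ∧
          (∀ j : ι, j ≠ i → ∀ z ∈ Mi j, e z = 0) := by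
      refine ⟨extCE h i 1, extCE_mem h 1, fun x hx => ?_, fun j hj z hz => ?_⟩
      · simp [extCE_of_mem h 1 hx]
      · exact extCE_of_mem_ne h hj 1 hz
    have hee : e * e = e := by
      refine endCE_ext h fun j z hz => ?_
      by_cases hji : j = i
      · rw [hji] at hz
        rw [Module.End.mul_apply, he_fix _ hz, he_fix _ hz]
      · rw [Module.End.mul_apply, he_off j hji z hz, map_zero]
    -- `e` commutes with every endomorphism (idempotents in centrally essential
    -- rings are central)
    have hcomm : ∀ f : Module.End R M, e * f = f * e := by
      intro f
      have h1 : e * f - e * f * e = 0 := by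
        by_contra hne
        obtain ⟨x, y, hx, hy, hx0, hy0, hxy⟩ := hCE _ hne
        rw [Semigroup.mem_center_iff] at hx hy
        have hea : e * (e * f - e * f * e) = e * f - e * f * e := by
          simp only [mul_sub, ← mul_assoc, hee]
        have hae : (e * f - e * f * e) * e = 0 := by
          simp only [sub_mul, mul_assoc, hee, sub_self]
        have hey : e * y = y := by rw [← hxy, ← mul_assoc, hea]
        have hye : y * e = 0 := by
          rw [← hxy, mul_assoc, ← hx e, ← mul_assoc, hae, zero_mul]
        exact hy0 (by rw [← hey, hy e, hye])
      have h2 : f * e - e * f * e = 0 := by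
        by_contra hne
        obtain ⟨x, y, hx, hy, hx0, hy0, hxy⟩ := hCE _ hne
        rw [Semigroup.mem_center_iff] at hx hy
        have hbe : (f * e - e * f * e) * e = f * e - e * f * e := by
          simp only [sub_mul, mul_assoc, hee]
        have heb : e * (f * e - e * f * e) = 0 := by
          simp only [mul_sub, ← mul_assoc, hee, sub_self]
        have hye : y * e = y := by
          rw [← hxy, mul_assoc, ← hx e, ← mul_assoc, hbe]
        have hey : e * y = 0 := by rw [← hxy, ← mul_assoc, heb, zero_mul]
        exact hy0 (by rw [← hye, ← hy e, hey])
      have h1' : e * f = e * f * e := by rwa [sub_eq_zero] at h1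
      have h2' : f * e = e * f * e := by rwa [sub_eq_zero] at h2
      rw [h1', h2']
    have hinv : ∀ f : Module.End R M, ∀ x ∈ Mi i, f x ∈ Mi i := by
      intro f x hx
      have hfe : f (e x) = e (f x) := by
        have := congrArg (fun g : Module.End R M => g x) (hcomm f).symm
        simpa [Module.End.mul_apply] using this
      rw [he_fix x hx] at hfe
      rw [hfe]
      exact he_mem _
    refine ⟨hinv, ?_⟩
    -- centrally essential for the endomorphism ring of the summand
    intro a ha
    have hA : extCE h i a ≠ 0 := by
      intro hA0
      apply ha
      ext m
      have := congrArg (fun g : Module.End R M => g (m : M)) hA0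
      simp only [extCE_of_mem h a m.2, LinearMap.zero_apply] at this
      simpa using this
    obtain ⟨X, Y, hX, hY, hX0, hY0, hXY⟩ := hCE _ hA
    rw [Semigroup.mem_center_iff] at hX hY
    set x : Module.End R ↥(Mi i) := X.restrict (p := Mi i) (q := Mi i) (hinv X) with hxdef
    set y : Module.End R ↥(Mi i) := Y.restrict (p := Mi i) (q := Mi i) (hinv Y) with hydef
    have hxapp : ∀ m : ↥(Mi i), (x m : M) = X m := fun m =>
      X.restrict_coe_apply _ _
    have hyapp : ∀ m : ↥(Mi i), (y m : M) = Y m := fun m =>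
      Y.restrict_coe_apply _ _
    -- a * x = y
    have haxy : a * x = y := by
      ext m
      simp only [Module.End.mul_apply]
      have hm2 := congrArg (fun f : Module.End R M => f (m : M)) hXY
      simp only [Module.End.mul_apply] at hm2
      rw [extCE_of_mem h a (hinv X _ m.2)] at hm2
      calc ((a (x m) : M)) = ((a ⟨X (m : M), hinv X _ m.2⟩ : M)) :=
            congrArg _ (congrArg a (Subtype.ext (hxapp m)))
        _ = Y (m : M) := hm2
        _ = ((y m : M)) := (hyapp m).symm
    -- y ≠ 0 : Y vanishes off the i-th summand
    have hYoff : ∀ j : ι, j ≠ i → ∀ z ∈ Mi j, Y z = 0 := by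
      intro j hj z hz
      have hYX : Y = X * extCE h i a := by rw [← hXY, hX]
      rw [hYX, Module.End.mul_apply, extCE_of_mem_ne h hj _ hz, map_zero]
    have hy0 : y ≠ 0 := by
      intro hy0
      apply hY0
      refine endCE_ext h fun j z hz => ?_
      by_cases hji : j = i
      · rw [hji] at hz
        have := congrArg (fun g : Module.End R ↥(Mi i) => (g ⟨z, hz⟩ : M)) hy0
        simpa [hyapp] using this
      · simpa using hYoff j hji z hz
    have hx0 : x ≠ 0 := by
      intro hx0'
      rw [hx0', mul_zero] at haxy
      exact hy0 haxy.symm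
    have hxc : x ∈ Set.center (Module.End R ↥(Mi i)) := by
      rw [Semigroup.mem_center_iff]
      intro g
      ext m
      simp only [Module.End.mul_apply]
      have hc := congrArg (fun f : Module.End R M => f (m : M)) (hX (extCE h i g))
      simp only [Module.End.mul_apply] at hc
      rw [extCE_of_mem h g m.2] at hc
      calc ((g (x m) : M)) = extCE h i g (X (m : M)) := by
            rw [extCE_of_mem h g (hinv X _ m.2)]
            exact congrArg _ (congrArg g (Subtype.ext (hxapp m)))
        _ = X ((g m : M)) := hc
        _ = ((x (g m) : M)) := (hxapp _).symm
    have hyc : y ∈ Set.center (Module.End R ↥(Mi i)) := by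
      rw [Semigroup.mem_center_iff]
      intro g
      ext m
      simp only [Module.End.mul_apply]
      have hc := congrArg (fun f : Module.End R M => f (m : M)) (hY (extCE h i g))
      simp only [Module.End.mul_apply] at hc
      rw [extCE_of_mem h g m.2] at hc
      calc ((g (y m) : M)) = extCE h i g (Y (m : M)) := by
            rw [extCE_of_mem h g (hinv Y _ m.2)]
            exact congrArg _ (congrArg g (Subtype.ext (hyapp m)))
        _ = Y ((g m : M)) := hc
        _ = ((y (g m) : M)) := (hyapp _).symm
    exact ⟨x, y, hxc, hyc, hx0, hy0, haxy⟩
  · -- backwards direction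
    intro H a ha
    obtain ⟨i, m, hm, ham⟩ := endCE_ne_zero h ha
    obtain ⟨hinv, hCEi⟩ := H i
    set ai : Module.End R ↥(Mi i) := a.restrict (p := Mi i) (q := Mi i) (hinv a) with haidef
    have haiapp : ∀ z : ↥(Mi i), (ai z : M) = a z := fun z => a.restrict_coe_apply _ _
    have hai0 : ai ≠ 0 := by
      intro h0
      apply ham
      have := congrArg (fun g : Module.End R ↥(Mi i) => (g ⟨m, hm⟩ : M)) h0
      simpa [haiapp] using this
    obtain ⟨x, y, hx, hy, hx0, hy0, hxy⟩ := hCEi ai hai0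
    rw [Semigroup.mem_center_iff] at hx hy
    refine ⟨extCE h i x, extCE h i y, ?_, ?_, ?_, ?_, ?_⟩
    · rw [Semigroup.mem_center_iff]
      intro f
      refine endCE_ext h fun j z hz => ?_
      by_cases hji : j = i
      · rw [hji] at hz
        rw [Module.End.mul_apply, Module.End.mul_apply, extCE_of_mem h x hz,
          extCE_of_mem h x (hinv f z hz)]
        set fi : Module.End R ↥(Mi i) := f.restrict (p := Mi i) (q := Mi i) (hinv f) with hfidef
        have hcomm : fi * x = x * fi := hx fi
        have happ := congrArg (fun g : Module.End R ↥(Mi i) => (g ⟨z, hz⟩ : M)) hcomm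
        simp only [Module.End.mul_apply] at happ
        have h1 : ((fi (x ⟨z, hz⟩) : M)) = f ((x ⟨z, hz⟩ : M)) := f.restrict_coe_apply _ _
        have h2 : ((x (fi ⟨z, hz⟩) : M)) = (x ⟨f z, hinv f z hz⟩ : M) :=
          congrArg _ (congrArg x (Subtype.ext (f.restrict_coe_apply _ _)))
        rw [h1, h2] at happ
        exact happ
      · rw [Module.End.mul_apply, Module.End.mul_apply, extCE_of_mem_ne h hji _ hz,
          extCE_of_mem_ne h hji _ ((H j).1 f z hz), map_zero]
    · rw [Semigroup.mem_center_iff]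
      intro f
      refine endCE_ext h fun j z hz => ?_
      by_cases hji : j = i
      · rw [hji] at hz
        rw [Module.End.mul_apply, Module.End.mul_apply, extCE_of_mem h y hz,
          extCE_of_mem h y (hinv f z hz)]
        set fi : Module.End R ↥(Mi i) := f.restrict (p := Mi i) (q := Mi i) (hinv f) with hfidef
        have hcomm : fi * y = y * fi := hy fi
        have happ := congrArg (fun g : Module.End R ↥(Mi i) => (g ⟨z, hz⟩ : M)) hcomm
        simp only [Module.End.mul_apply] at happ
        have h1 : ((fi (y ⟨z, hz⟩) : M)) = f ((y ⟨z, hz⟩ : M)) := f.restrict_coe_apply _ _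
        have h2 : ((y (fi ⟨z, hz⟩) : M)) = (y ⟨f z, hinv f z hz⟩ : M) :=
          congrArg _ (congrArg y (Subtype.ext (f.restrict_coe_apply _ _)))
        rw [h1, h2] at happ
        exact happ
      · rw [Module.End.mul_apply, Module.End.mul_apply, extCE_of_mem_ne h hji _ hz,
          extCE_of_mem_ne h hji _ ((H j).1 f z hz), map_zero]
    · intro h0
      apply hx0
      ext z
      have := congrArg (fun g : Module.End R M => g (z : M)) h0
      simp only [extCE_of_mem h x z.2, LinearMap.zero_apply] at this
      simpa using this
    · intro h0
      apply hy0
      ext z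
      have := congrArg (fun g : Module.End R M => g (z : M)) h0
      simp only [extCE_of_mem h y z.2, LinearMap.zero_apply] at this
      simpa using this
    · refine endCE_ext h fun j z hz => ?_
      by_cases hji : j = i
      · rw [hji] at hz
        rw [Module.End.mul_apply, extCE_of_mem h x hz, extCE_of_mem h y hz,
          show a ((x ⟨z, hz⟩ : M)) = (ai (x ⟨z, hz⟩) : M) from (haiapp _).symm]
        have := congrArg (fun g : Module.End R ↥(Mi i) => (g ⟨z, hz⟩ : M)) hxy
        simpa [Module.End.mul_apply] using this
      · rw [Module.End.mul_apply, extCE_of_mem_ne h hji _ hz, map_zero,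
          extCE_of_mem_ne h hji _ hz]
end

section
/- Let p be a prime and let A be a nonzero abelian p-group (i.e., every element of A has order a power of p). The endomorphism ring End(A) is centrally essential if and only if A is isomorphic to a cyclic group ℤ/p^kℤ for some k ≥ 1 or A is isomorphic to the Prüfer group ℤ(p^∞). -/
/-- The quotient group `ℚ/ℤ`. -/
abbrev QmodZ : Type := ℚ ⧸ AddSubgroup.zmultiples (1 : ℚ)

/-- The `p`-primary component of an abelian group: the subgroup of elements
killed by a power of `p`. -/
def primaryComp (A : Type*) [AddCommGroup A] (p : ℕ) : AddSubgroup A where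
  carrier := {a | ∃ n : ℕ, p ^ n • a = 0}
  zero_mem' := ⟨0, smul_zero _⟩
  add_mem' := by
    rintro a b ⟨m, hm⟩ ⟨n, hn⟩
    refine ⟨m + n, ?_⟩
    have ha : p ^ (m + n) • a = 0 := by rw [pow_add, mul_comm, mul_smul, hm, smul_zero]
    have hb : p ^ (m + n) • b = 0 := by rw [pow_add, mul_smul, hn, smul_zero]
    rw [smul_add, ha, hb, add_zero]
  neg_mem' := by
    rintro a ⟨n, hn⟩
    exact ⟨n, by rw [smul_neg, hn, neg_zero]⟩

/-- The Prüfer group `ℤ(p^∞)`, realized as the `p`-primary component of `ℚ/ℤ`. -/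
def Prufer (p : ℕ) : AddSubgroup QmodZ := primaryComp QmodZ p

namespace CEAux
open AddSubgroup

noncomputable instance : DivisibleBy QmodZ ℤ :=
  inferInstanceAs (DivisibleBy (AddCircle (1:ℚ)) ℤ)

def mkq : ℚ →+ QmodZ := QuotientAddGroup.mk' _

lemma mkq_surj : Function.Surjective mkq := QuotientAddGroup.mk'_surjective _

lemma mkq_eq_zero (q : ℚ) : mkq q = 0 ↔ ∃ t : ℤ, (t : ℚ) = q := by
  rw [mkq, QuotientAddGroup.mk'_apply, QuotientAddGroup.eq_zero_iff, mem_zmultiples_iff]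
  simp [zsmul_eq_mul]

variable {p : ℕ} (hp : p.Prime)

/-- `1/p^n` in `ℚ/ℤ`. -/
def uu (p n : ℕ) : QmodZ := mkq (((p:ℚ)^n)⁻¹)

include hp

lemma ppow_pos (n : ℕ) : (0:ℚ) < (p:ℚ)^n := by
  have := hp.pos
  positivity

lemma uu_smul_eq (k m : ℕ) : (p:ℤ)^k • uu p (m+k) = uu p m := by
  rw [uu, uu, ← map_zsmul]
  congr 1
  rw [zsmul_eq_mul]
  push_cast
  rw [pow_add]
  field_simp
  rw [div_eq_div_iff (by have := hp.pos; positivity) (by have := hp.pos; positivity)]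
  ring

lemma uu_order (n : ℕ) : (p:ℤ)^n • uu p n = 0 := by
  have := uu_smul_eq hp n 0
  rw [Nat.zero_add] at this
  rw [this, uu, mkq_eq_zero]
  exact ⟨1, by norm_num⟩

lemma uu_one_ne : uu p 1 ≠ 0 := by
  rw [uu, Ne, mkq_eq_zero]
  rintro ⟨t, ht⟩
  have h1 : (1:ℚ) < (p:ℚ)^1 := by
    have h2 : (2:ℕ) ≤ p := hp.two_le
    have : (2:ℚ) ≤ (p:ℚ) := by exact_mod_cast h2
    rw [pow_one]; linarith
  have hpos : (0:ℚ) < ((p:ℚ)^1)⁻¹ := inv_pos.mpr (ppow_pos hp 1)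
  have hlt : ((p:ℚ)^1)⁻¹ < 1 := by
    rw [inv_lt_one_iff₀]; right; exact h1
  rw [← ht] at hpos hlt
  have h3 : (0:ℤ) < t := by exact_mod_cast hpos
  have h4 : (1:ℤ) ≤ t := h3
  have : (1:ℚ) ≤ (t:ℚ) := by exact_mod_cast h4
  linarith

lemma uu_exact (m : ℕ) : (p:ℤ)^m • uu p (m+1) ≠ 0 := by
  have h : uu p (m+1) = uu p (1+m) := by rw [Nat.add_comm]
  rw [h, uu_smul_eq hp m 1]
  exact uu_one_ne hp

/-- p-power torsion in `ℚ/ℤ` is "cyclic". -/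
lemma tor (n : ℕ) {x : QmodZ} (hx : (p:ℤ)^n • x = 0) : ∃ t : ℤ, x = t • uu p n := by
  obtain ⟨q, rfl⟩ := mkq_surj x
  rw [← map_zsmul, mkq_eq_zero] at hx
  obtain ⟨t, ht⟩ := hx
  refine ⟨t, ?_⟩
  rw [uu, ← map_zsmul]
  congr 1
  rw [zsmul_eq_mul] at ht ⊢
  push_cast at ht
  rw [ht, mul_comm ((p:ℚ)^n) q, mul_assoc, mul_inv_cancel₀ (ne_of_gt (ppow_pos hp n)), mul_one]

end CEAux

namespace CEAux
open AddSubgroup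

section ring
variable {R : Type*} [Ring R]

theorem ce_lemA (hce : IsCentrallyEssential R) {a e : R}
    (ha : a ≠ 0) (h1 : e * a = a) (h2 : a * e = 0) : False := by
  obtain ⟨x, y, hx, hy, hx0, hy0, hxy⟩ := hce a ha
  rw [Semigroup.mem_center_iff] at hx hy
  have h3 : e * y = y := by rw [← hxy, ← mul_assoc, h1]
  have h4 : y * e = 0 := by rw [← hxy, mul_assoc, ← hx e, ← mul_assoc, h2, zero_mul]
  exact hy0 (by rw [← h3, hy e, h4])

theorem ce_lemB (hce : IsCentrallyEssential R) {a e : R}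
    (ha : a ≠ 0) (h1 : e * a = 0) (h2 : a * e = a) : False := by
  obtain ⟨x, y, hx, hy, hx0, hy0, hxy⟩ := hce a ha
  rw [Semigroup.mem_center_iff] at hx hy
  have h3 : e * y = 0 := by rw [← hxy, ← mul_assoc, h1, zero_mul]
  have h4 : y * e = y := by rw [← hxy, mul_assoc, ← hx e, ← mul_assoc, h2]
  exact hy0 (by rw [← h4, ← hy e, h3])

end ring

section grp
variable {G : Type*} [AddCommGroup G] {p : ℕ} (hp : p.Prime)

lemma nz_smul (n : ℕ) (a : G) : (p:ℤ)^n • a = (p^n : ℕ) • a := by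
  rw [← Nat.cast_pow, natCast_zsmul]

include hp

/-- exact order p^(m+1) gives divisibility -/
lemma Ldvd {v : G} {m : ℕ} (h1 : (p:ℤ)^(m+1) • v = 0) (h2 : (p:ℤ)^m • v ≠ 0)
    {t : ℤ} (ht : t • v = 0) : (p:ℤ)^(m+1) ∣ t := by
  have hbez := Int.gcd_eq_gcd_ab t ((p:ℤ)^(m+1))
  have hgv : ((Int.gcd t ((p:ℤ)^(m+1)) : ℕ) : ℤ) • v = 0 := by
    rw [hbez, add_smul, mul_comm t, mul_smul, ht, smul_zero, zero_add, mul_comm, mul_smul, h1,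
      smul_zero]
  have hgdvd : Int.gcd t ((p:ℤ)^(m+1)) ∣ p^(m+1) := by
    have h5 := Int.gcd_dvd_right (a := t) (b := (p:ℤ)^(m+1))
    have h6 : ((Int.gcd t ((p:ℤ)^(m+1)) : ℕ) : ℤ) ∣ ((p^(m+1) : ℕ) : ℤ) := by push_cast; exact h5
    exact_mod_cast h6
  obtain ⟨i, hi, hgi⟩ := (Nat.dvd_prime_pow hp).mp hgdvd
  have hine : i = m + 1 := by
    by_contra hcon
    have him : i ≤ m := by omega
    apply h2
    obtain ⟨j, hj⟩ := Nat.exists_eq_add_of_le him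
    rw [hgi] at hgv
    push_cast at hgv
    rw [hj, pow_add, mul_comm, mul_smul, hgv, smul_zero]
  have h7 := Int.gcd_dvd_left (a := t) (b := (p:ℤ)^(m+1))
  rw [hgi, hine] at h7
  push_cast at h7
  exact h7

/-- every p^(m+1)-torsion elt of QmodZ is a multiple of any elt of exact order p^(m+1) -/
lemma Lgen {v x : QmodZ} {m : ℕ} (hv1 : (p:ℤ)^(m+1) • v = 0) (hv2 : (p:ℤ)^m • v ≠ 0)
    (hx : (p:ℤ)^(m+1) • x = 0) : ∃ s : ℤ, x = s • v := by
  obtain ⟨t, htv⟩ := tor hp (m+1) hv1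
  obtain ⟨r, hrx⟩ := tor hp (m+1) hx
  have hpt : ¬ (p:ℤ) ∣ t := by
    rintro ⟨c, rfl⟩
    apply hv2
    rw [htv, ← mul_smul]
    have hq : (p:ℤ)^m * ((p:ℤ)*c) = c * (p:ℤ)^(m+1) := by ring
    rw [hq, mul_smul, uu_order hp, smul_zero]
  have hcop : IsCoprime ((p:ℤ)^(m+1)) t :=
    IsCoprime.pow_left ((Prime.coprime_iff_not_dvd (Int.prime_iff_natAbs_prime.mpr (by simpa using hp))).mpr hpt)
  obtain ⟨a, b, hab⟩ := hcop
  have h0 : (a * (p:ℤ)^(m+1)) • uu p (m+1) = 0 := by rw [mul_smul, uu_order hp, smul_zero]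
  have huv : uu p (m+1) = (b*t) • uu p (m+1) := by
    nth_rewrite 1 [← one_smul ℤ (uu p (m+1))]
    rw [← hab, add_smul, h0, zero_add]
  refine ⟨r * b, ?_⟩
  rw [hrx, htv]
  nth_rewrite 1 [huv]
  rw [← mul_smul, ← mul_smul]
  congr 1
  ring

end grp
end CEAux

namespace CEAux
open AddSubgroup

section ext
variable {G : Type*} [AddCommGroup G]

/-- hom out of a cyclic subgroup -/
lemma hcyc {T : Type*} [AddCommGroup T] (v : G) (w : T)
    (h : ∀ t : ℤ, t • v = 0 → t • w = 0) :
    ∃ φ : ↥(zmultiples v) →+ T, φ ⟨v, mem_zmultiples v⟩ = w := by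
  have hmem : ∀ z : ↥(zmultiples v), ∃ t : ℤ, t • v = (z:G) := fun z => mem_zmultiples_iff.mp z.2
  choose c hc using hmem
  have key : ∀ (t : ℤ) (z : ↥(zmultiples v)), t • v = (z:G) → t • w = c z • w := by
    intro t z ht
    have : (t - c z) • v = 0 := by rw [sub_smul, ht, hc, sub_self]
    have := h _ this
    rw [sub_smul, sub_eq_zero] at this
    exact this
  refine ⟨AddMonoidHom.mk' (fun z => c z • w) ?_, ?_⟩
  · intro z1 z2
    have h1 : (c z1 + c z2) • v = ((z1 + z2 : ↥(zmultiples v)) : G) := by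
      rw [add_smul, hc, hc]; rfl
    have := key _ _ h1
    rw [add_smul] at this
    exact this.symm
  · have h1 : (1:ℤ) • v = ((⟨v, mem_zmultiples v⟩ : ↥(zmultiples v)) : G) := by
      rw [one_smul]
    have := key _ _ h1
    rw [one_smul] at this
    exact this.symm

/-- injectivity of ℚ/ℤ : extension of homs from subgroups -/
lemma ext_hom (B : AddSubgroup G) (f : ↥B →+ QmodZ) :
    ∃ g : G →+ QmodZ, ∀ (x : G) (hx : x ∈ B), g x = f ⟨x, hx⟩ := by
  obtain ⟨g, hg⟩ := (Module.Baer.of_divisible QmodZ).extension_property_addMonoidHom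
    B.subtype (fun a b hab => Subtype.ext hab) f
  exact ⟨g, fun x hx => DFunLike.congr_fun hg ⟨x, hx⟩⟩

/-- combined: extend a "partial hom" defined on one generator -/
lemma ext_cyc (v : G) (w : QmodZ) (h : ∀ t : ℤ, t • v = 0 → t • w = 0) :
    ∃ g : G →+ QmodZ, g v = w := by
  obtain ⟨φ, hφ⟩ := hcyc v w h
  obtain ⟨g, hg⟩ := ext_hom (zmultiples v) φ
  exact ⟨g, by rw [hg v (mem_zmultiples v), hφ]⟩

end ext
end CEAux



namespace CEAux
open AddSubgroup

section backward
variable {A : Type*} [AddCommGroup A]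

lemma ce_of_comm (hA : ∃ a : A, a ≠ 0)
    (hcomm : ∀ f g : AddMonoid.End A, f * g = g * f) :
    IsCentrallyEssential (AddMonoid.End A) := by
  intro a ha
  refine ⟨1, a, Set.one_mem_center, Semigroup.mem_center_iff.mpr (fun g => hcomm g a),
    ?_, ha, mul_one a⟩
  obtain ⟨a0, ha0⟩ := hA
  intro h
  apply ha0
  have h2 : a0 = (0 : AddMonoid.End A) a0 := by rw [← h]; rfl
  rwa [AddMonoid.End.zero_apply] at h2

lemma comm_end_of_equiv {B : Type*} [AddCommGroup B] (e : A ≃+ B)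
    (hcomm : ∀ f g : AddMonoid.End B, f * g = g * f) :
    ∀ f g : AddMonoid.End A, f * g = g * f := by
  intro f g
  apply DFunLike.ext
  intro x
  show f (g x) = g (f x)
  have h := hcomm ((e.toAddMonoidHom.comp f).comp e.symm.toAddMonoidHom)
    ((e.toAddMonoidHom.comp g).comp e.symm.toAddMonoidHom)
  have h2 := DFunLike.congr_fun h (e x)
  have h3 : e (f (e.symm (e (g (e.symm (e x)))))) = e (g (e.symm (e (f (e.symm (e x)))))) := h2
  simp only [AddEquiv.symm_apply_apply] at h3
  exact e.injective h3

lemma end_apply_zmod {n : ℕ} [NeZero n] (f : AddMonoid.End (ZMod n)) (x : ZMod n) :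
    f x = x * f 1 := by
  have h1 : x = (x.val : ℕ) • (1 : ZMod n) := by
    rw [nsmul_eq_mul, mul_one]
    exact (ZMod.natCast_rightInverse x).symm
  calc f x = f ((x.val : ℕ) • (1 : ZMod n)) := by rw [← h1]
    _ = (x.val : ℕ) • f 1 := map_nsmul f _ _
    _ = x * f 1 := by rw [nsmul_eq_mul, ZMod.natCast_rightInverse x]

lemma comm_end_zmod (n : ℕ) [NeZero n] :
    ∀ f g : AddMonoid.End (ZMod n), f * g = g * f := by
  intro f g
  apply DFunLike.ext
  intro x
  show f (g x) = g (f x)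
  rw [end_apply_zmod f (g x), end_apply_zmod g x, end_apply_zmod g (f x), end_apply_zmod f x]
  ring

variable {p : ℕ} (hp : p.Prime)
include hp

/-- generator of `p^(m+1)` torsion inside the Prüfer group -/
def UU (m : ℕ) : ↥(Prufer p) :=
  ⟨uu p (m+1), ⟨m+1, by rw [← nz_smul, uu_order hp]⟩⟩

lemma UU_order (m : ℕ) : (p:ℤ)^(m+1) • (UU hp m) = 0 := by
  apply Subtype.ext
  rw [AddSubgroup.coe_zsmul]
  exact uu_order hp (m+1)

lemma prufer_gen (m : ℕ) {z : ↥(Prufer p)} (hz : (p:ℤ)^(m+1) • z = 0) :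
    ∃ s : ℤ, z = s • UU hp m := by
  have hz' : (p:ℤ)^(m+1) • (z : QmodZ) = 0 := by
    rw [← AddSubgroup.coe_zsmul, hz, AddSubgroup.coe_zero]
  obtain ⟨s, hs⟩ := Lgen hp (uu_order hp (m+1)) (uu_exact hp m) hz'
  exact ⟨s, Subtype.ext (by rw [hs, AddSubgroup.coe_zsmul]; rfl)⟩

lemma comm_end_prufer :
    ∀ f g : AddMonoid.End ↥(Prufer p), f * g = g * f := by
  intro f g
  apply DFunLike.ext
  intro y
  show f (g y) = g (f y)
  obtain ⟨n, hn⟩ := y.2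
  have hy : (p:ℤ)^(n+1) • y = 0 := by
    apply Subtype.ext
    rw [AddSubgroup.coe_zsmul, AddSubgroup.coe_zero, pow_succ', mul_smul, nz_smul, hn, smul_zero]
  obtain ⟨r, hr⟩ := prufer_gen hp n hy
  have hend : ∀ h : AddMonoid.End ↥(Prufer p), ∃ s : ℤ, h (UU hp n) = s • UU hp n := by
    intro h
    apply prufer_gen hp n
    rw [← map_zsmul, UU_order hp, map_zero]
  obtain ⟨sf, hsf⟩ := hend f
  obtain ⟨sg, hsg⟩ := hend g
  have e1 : f (g y) = (r * (sg * sf)) • UU hp n := by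
    rw [hr, map_zsmul, hsg, map_zsmul, map_zsmul, hsf, smul_smul, smul_smul, mul_assoc]
  have e2 : g (f y) = (r * (sf * sg)) • UU hp n := by
    rw [hr, map_zsmul, hsf, map_zsmul, map_zsmul, hsg, smul_smul, smul_smul, mul_assoc]
  rw [e1, e2]
  congr 1
  ring

end backward
end CEAux

namespace CEAux
open AddSubgroup

section forward
variable {A : Type*} [AddCommGroup A] {p : ℕ} (hp : p.Prime)
include hp

omit hp in
lemma exists_height (hpgroup : ∀ a : A, ∃ n : ℕ, p ^ n • a = 0)
    (hnd : ¬ ∀ x : A, ∃ y : A, (p:ℤ) • y = x) :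
    ∃ (h : ℕ) (b : A), (p:ℤ)^(h+1) • b = 0 ∧ ¬ ∃ x, (p:ℤ)^(h+1) • x = (p:ℤ)^h • b := by
  by_contra hcon
  push_neg at hcon
  have div : ∀ (k : ℕ) (x : A), (p:ℤ)^k • x = 0 → ∃ y, (p:ℤ) • y = x := by
    intro k
    induction k with
    | zero =>
      intro x hx
      have hx0 : x = 0 := by simpa using hx
      exact ⟨0, by rw [hx0, smul_zero]⟩
    | succ k ih =>
      intro x hx
      obtain ⟨z, hz⟩ := hcon k x hx
      have h4 : (p:ℤ)^k • (x - (p:ℤ) • z) = 0 := by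
        rw [smul_sub, smul_smul, ← pow_succ, hz, sub_self]
      obtain ⟨y', hy'⟩ := ih _ h4
      exact ⟨y' + z, by rw [smul_add, hy', sub_add_cancel]⟩
  apply hnd
  intro x
  obtain ⟨n, hn⟩ := hpgroup x
  exact div n x (by rw [nz_smul]; exact hn)

lemma case_reduced (hpgroup : ∀ a : A, ∃ n : ℕ, p ^ n • a = 0)
    (hce : IsCentrallyEssential (AddMonoid.End A))
    (hnd : ¬ ∀ x : A, ∃ y : A, (p:ℤ) • y = x) :
    ∃ k : ℕ, 1 ≤ k ∧ Nonempty (A ≃+ ZMod (p ^ k)) := by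
  classical
  obtain ⟨h, b, hb1, hb2⟩ := exists_height hpgroup hnd
  -- the subgroup p^(h+1) A
  set S : AddSubgroup A :=
    { carrier := Set.range fun y : A => (p:ℤ)^(h+1) • y
      zero_mem' := ⟨0, smul_zero _⟩
      add_mem' := by rintro _ _ ⟨y1, rfl⟩ ⟨y2, rfl⟩; exact ⟨y1 + y2, smul_add _ _ _⟩
      neg_mem' := by rintro _ ⟨y, rfl⟩; exact ⟨-y, smul_neg _ _⟩ } with hS
  set q : A →+ A ⧸ S := QuotientAddGroup.mk' S with hqdef
  have hq0 : ∀ x : A, q ((p:ℤ)^(h+1) • x) = 0 := fun x =>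
    (QuotientAddGroup.eq_zero_iff _).mpr ⟨x, rfl⟩
  have hqb : (p:ℤ)^h • q b ≠ 0 := by
    intro hcon2
    rw [← map_zsmul] at hcon2
    exact hb2 (by obtain ⟨x, hx⟩ := (QuotientAddGroup.eq_zero_iff _).mp hcon2; exact ⟨x, hx⟩)
  have hbar1 : (p:ℤ)^(h+1) • q b = 0 := by rw [← map_zsmul]; exact hq0 b
  have cond : ∀ t : ℤ, t • (q b) = 0 → t • uu p (h+1) = 0 := by
    intro t ht
    obtain ⟨c, rfl⟩ := Ldvd hp hbar1 hqb ht
    rw [mul_comm, mul_smul, uu_order hp, smul_zero]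
  obtain ⟨gbar, hgbar⟩ := ext_cyc (q b) (uu p (h+1)) cond
  set g : A →+ QmodZ := gbar.comp q with hgdef
  have hgb : g b = uu p (h+1) := hgbar
  have gtor : ∀ x : A, (p:ℤ)^(h+1) • g x = 0 := by
    intro x
    have h5 : (p:ℤ)^(h+1) • q x = 0 := by rw [← map_zsmul]; exact hq0 x
    show (p:ℤ)^(h+1) • gbar (q x) = 0
    rw [← map_zsmul, h5, map_zero]
  have hτ : ∀ x : A, ∃ t : ℤ, g x = t • uu p (h+1) := fun x => tor hp (h+1) (gtor x)
  choose τ hτs using hτ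
  have hbex : (p:ℤ)^h • b ≠ 0 := fun hcon2 => hqb (by rw [← map_zsmul, hcon2, map_zero])
  have keyb : ∀ t t' : ℤ, t • uu p (h+1) = t' • uu p (h+1) → t • b = t' • b := by
    intro t t' hq2
    have h5 : (t - t') • uu p (h+1) = 0 := by rw [sub_smul, hq2, sub_self]
    obtain ⟨c, hc⟩ := Ldvd hp (uu_order hp (h+1)) (uu_exact hp h) h5
    have h6 : (t - t') • b = 0 := by rw [hc, mul_comm, mul_smul, hb1, smul_zero]
    rw [sub_smul, sub_eq_zero] at h6
    exact h6
  set E : AddMonoid.End A := AddMonoidHom.mk' (fun x => τ x • b) (by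
    intro x y
    rw [← add_smul]
    apply keyb
    rw [← hτs, map_add, hτs, hτs, add_smul]) with hEdef
  have hE : ∀ x, E x = τ x • b := fun _ => rfl
  have hgE : ∀ x, g (E x) = g x := by
    intro x
    rw [hE, map_zsmul, hgb, ← hτs]
  have hEE : ∀ x, E (E x) = E x := by
    intro x
    show τ (E x) • b = τ x • b
    apply keyb
    rw [← hτs, ← hτs]
    exact hgE x
  have hEb : E b = b := by
    have h5 := keyb (τ b) 1 (by rw [← hτs, hgb, one_smul])
    rw [one_smul] at h5
    exact h5
  have hker : ∀ x, g x = 0 → E x = 0 := by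
    intro x hx
    rw [hE]
    have h5 : τ x • uu p (h+1) = 0 := by rw [← hτs, hx]
    obtain ⟨c, hc⟩ := Ldvd hp (uu_order hp (h+1)) (uu_exact hp h) h5
    rw [hc, mul_comm, mul_smul, hb1, smul_zero]
  by_cases hall : ∀ x : A, E x = x
  · -- cyclic case
    have hcast : (zmultiplesHom A b) (((p^(h+1) : ℕ) : ℤ)) = 0 := by
      show ((p^(h+1) : ℕ) : ℤ) • b = 0
      push_cast
      exact hb1
    set φ : ZMod (p^(h+1)) →+ A := ZMod.lift _ ⟨zmultiplesHom A b, hcast⟩ with hφdef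
    have hφ : ∀ t : ℤ, φ ((t : ZMod (p^(h+1)))) = t • b := fun t => by
      rw [hφdef, ZMod.lift_coe]; rfl
    have hsurj : Function.Surjective φ := by
      intro x
      exact ⟨(τ x : ZMod (p^(h+1))), by rw [hφ]; rw [← hE, hall]⟩
    have hinj : Function.Injective φ := by
      rw [injective_iff_map_eq_zero]
      intro z hz
      obtain ⟨t, rfl⟩ := ZMod.intCast_surjective z
      rw [hφ] at hz
      obtain ⟨c, hc⟩ := Ldvd hp hb1 hbex hz
      rw [ZMod.intCast_zmod_eq_zero_iff_dvd]
      push_cast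
      exact ⟨c, hc⟩
    exact ⟨h+1, by omega, ⟨(AddEquiv.ofBijective φ ⟨hinj, hsurj⟩).symm⟩⟩
  · push_neg at hall
    obtain ⟨x₀, hx₀⟩ := hall
    set w : A := x₀ - E x₀ with hwdef
    have hw0 : w ≠ 0 := sub_ne_zero.mpr (Ne.symm hx₀)
    have hgw : g w = 0 := by rw [hwdef, map_sub, hgE, sub_self]
    have hW := hpgroup w
    have hfind : Nat.find hW ≠ 0 := by
      intro hcon2
      have := Nat.find_spec hW
      rw [hcon2] at this
      simp at this
      exact hw0 this
    obtain ⟨n', hn'⟩ := Nat.exists_eq_succ_of_ne_zero hfind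
    set w' : A := (p:ℤ)^n' • w with hw'def
    have hw'1 : (p:ℤ) • w' = 0 := by
      have h6 := Nat.find_spec hW
      rw [hn'] at h6
      rw [hw'def, smul_smul, ← pow_succ', nz_smul]
      exact h6
    have hw'0 : w' ≠ 0 := by
      rw [hw'def, nz_smul]
      exact Nat.find_min hW (by omega)
    have hgw' : g w' = 0 := by rw [hw'def, map_zsmul, hgw, smul_zero]
    have cond2 : ∀ t : ℤ, t • b = 0 → t • w' = 0 := by
      intro t ht
      obtain ⟨c, rfl⟩ := Ldvd hp hb1 hbex ht
      have h6 : (p:ℤ)^(h+1) * c = ((p:ℤ)^h * c) * p := by ring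
      rw [h6, mul_smul, hw'1, smul_zero]
    obtain ⟨hh, hhb⟩ := hcyc b w' cond2
    have hmem : ∀ x : A, E x ∈ zmultiples b := fun x => mem_zmultiples_iff.mpr ⟨τ x, rfl⟩
    set F : AddMonoid.End A := AddMonoidHom.mk' (fun x => hh ⟨E x, hmem x⟩) (by
      intro x y
      have h5 : (⟨E (x+y), hmem (x+y)⟩ : ↥(zmultiples b)) = ⟨E x, hmem x⟩ + ⟨E y, hmem y⟩ := by
        apply Subtype.ext
        rw [AddSubgroup.coe_add]
        exact map_add E x y
      show hh ⟨E (x+y), hmem (x+y)⟩ = hh ⟨E x, hmem x⟩ + hh ⟨E y, hmem y⟩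
      rw [h5, map_add]) with hFdef
    have hFapp : ∀ x, F x = hh ⟨E x, hmem x⟩ := fun _ => rfl
    have hFb : F b = w' := by
      rw [hFapp]
      have h5 : (⟨E b, hmem b⟩ : ↥(zmultiples b)) = ⟨b, mem_zmultiples b⟩ := Subtype.ext hEb
      rw [h5, hhb]
    have hF0 : F ≠ (0 : AddMonoid.End A) := by
      intro hcon2
      apply hw'0
      rw [← hFb, hcon2, AddMonoid.End.zero_apply]
    have hFE : F * E = F := by
      apply DFunLike.ext
      intro x
      show F (E x) = F x
      rw [hFapp, hFapp]
      congr 1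
      exact Subtype.ext (hEE x)
    have hgF : ∀ x, g (F x) = 0 := by
      intro x
      obtain ⟨t, ht⟩ := mem_zmultiples_iff.mp (hmem x)
      have h5 : (⟨E x, hmem x⟩ : ↥(zmultiples b)) = t • ⟨b, mem_zmultiples b⟩ := by
        apply Subtype.ext
        rw [AddSubgroup.coe_zsmul]
        exact ht.symm
      rw [hFapp, h5, map_zsmul, hhb, map_zsmul, hgw', smul_zero]
    have hEF : E * F = 0 := by
      apply DFunLike.ext
      intro x
      show E (F x) = (0 : AddMonoid.End A) x
      rw [AddMonoid.End.zero_apply]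
      exact hker _ (hgF x)
    exact (ce_lemB hce hF0 hEF hFE).elim

end forward
end CEAux

namespace CEAux
open AddSubgroup

section divisible
variable {A : Type*} [AddCommGroup A] {p : ℕ} (hp : p.Prime)
include hp

lemma case_divisible (hA : ∃ a : A, a ≠ 0) (hpgroup : ∀ a : A, ∃ n : ℕ, p ^ n • a = 0)
    (hce : IsCentrallyEssential (AddMonoid.End A))
    (hdiv : ∀ x : A, ∃ y : A, (p:ℤ) • y = x) :
    Nonempty (A ≃+ ↥(Prufer p)) := by
  classical
  -- an element of order p
  obtain ⟨a0, ha0⟩ := hA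
  have hW := hpgroup a0
  have hfind : Nat.find hW ≠ 0 := by
    intro hcon
    have h5 := Nat.find_spec hW
    rw [hcon] at h5
    simp at h5
    exact ha0 h5
  obtain ⟨n0, hn0⟩ := Nat.exists_eq_succ_of_ne_zero hfind
  set a₁ : A := (p:ℤ)^n0 • a0 with ha₁def
  have ha₁p : (p:ℤ) • a₁ = 0 := by
    have h6 := Nat.find_spec hW
    rw [hn0] at h6
    rw [ha₁def, smul_smul, ← pow_succ', nz_smul]
    exact h6
  have ha₁ne : a₁ ≠ 0 := by
    rw [ha₁def, nz_smul]
    exact Nat.find_min hW (by omega)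
  have ha₁1 : (p:ℤ)^(0+1) • a₁ = 0 := by rw [zero_add, pow_one]; exact ha₁p
  have ha₁e : (p:ℤ)^0 • a₁ ≠ 0 := by rw [pow_zero, one_smul]; exact ha₁ne
  -- the divisibility chain
  choose d hd using hdiv
  set t : ℕ → A := fun n => Nat.rec (motive := fun _ => A) a₁ (fun _ ih => d ih) n with htdef
  have ht0 : t 0 = a₁ := rfl
  have htS : ∀ n, (p:ℤ) • t (n+1) = t n := fun n => hd (t n)
  have hts : ∀ (j k : ℕ), (p:ℤ)^j • t (k+j) = t k := by
    intro j
    induction j with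
    | zero => intro k; simp
    | succ j ih =>
      intro k
      rw [pow_succ, mul_smul]
      have h5 : (p:ℤ) • t (k + (j+1)) = t (k + j) := htS (k+j)
      rw [h5]
      exact ih k
  have hta : ∀ n, (p:ℤ)^n • t n = a₁ := by
    intro n
    have h5 := hts n 0
    rw [Nat.zero_add] at h5
    rw [h5, ht0]
  have hto : ∀ n, (p:ℤ)^(n+1) • t n = 0 := by
    intro n
    rw [pow_succ', mul_smul, hta, ha₁p]
  -- the hom to ℚ/ℤ
  have cond : ∀ s : ℤ, s • a₁ = 0 → s • uu p 1 = 0 := by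
    intro s hs
    obtain ⟨c, hc⟩ := Ldvd hp (m := 0) ha₁1 ha₁e hs
    rw [zero_add, pow_one] at hc
    rw [hc, mul_comm, mul_smul]
    have h5 : (p:ℤ) • uu p 1 = 0 := by
      have := uu_order hp 1
      rwa [pow_one] at this
    rw [h5, smul_zero]
  obtain ⟨g, hga⟩ := ext_cyc a₁ (uu p 1) cond
  have hgta : ∀ n, (p:ℤ)^n • g (t n) = uu p 1 := fun n => by rw [← map_zsmul, hta, hga]
  have hgt1 : ∀ n, (p:ℤ)^(n+1) • g (t n) = 0 := fun n => by rw [← map_zsmul, hto, map_zero]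
  have hgtne : ∀ n, (p:ℤ)^n • g (t n) ≠ 0 := fun n => by rw [hgta]; exact uu_one_ne hp
  -- any hom to ℚ/ℤ has torsion values
  have tors : ∀ (c : A →+ QmodZ) (x : A), ∃ n : ℕ, (p:ℤ)^(n+1) • c x = 0 := by
    intro c x
    obtain ⟨n, hn⟩ := hpgroup x
    refine ⟨n, ?_⟩
    have h5 : (p:ℤ)^n • c x = 0 := by
      rw [← map_zsmul, nz_smul, hn, map_zero]
    rw [pow_succ', mul_smul, h5, smul_zero]
  -- bump lemmas
  have bump : ∀ (s : ℤ) (n j : ℕ), s • t n = (s * (p:ℤ)^j) • t (n + j) := by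
    intro s n j
    rw [mul_smul, hts j n]
  have gbump : ∀ (s : ℤ) (n j : ℕ), s • g (t n) = (s * (p:ℤ)^j) • g (t (n + j)) := by
    intro s n j
    have h5 := congrArg g (bump s n j)
    rwa [map_zsmul, map_zsmul] at h5
  -- injectivity on the chain subgroup
  have Dmain : ∀ (s : ℤ) (n : ℕ) (s' : ℤ) (j : ℕ),
      s • g (t n) = s' • g (t (n+j)) → s • t n = s' • t (n+j) := by
    intro s n s' j hgeq
    rw [bump s n j]
    rw [gbump s n j] at hgeq
    have h7 : ((s * (p:ℤ)^j) - s') • g (t (n+j)) = 0 := by rw [sub_smul, hgeq, sub_self]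
    obtain ⟨cc, hcc⟩ := Ldvd hp (hgt1 (n+j)) (hgtne (n+j)) h7
    have h8 : ((s * (p:ℤ)^j) - s') • t (n+j) = 0 := by
      rw [hcc, mul_comm, mul_smul, hto, smul_zero]
    rw [sub_smul, sub_eq_zero] at h8
    exact h8
  have Dinj : ∀ (s : ℤ) (n : ℕ) (s' : ℤ) (n' : ℕ),
      s • g (t n) = s' • g (t n') → s • t n = s' • t n' := by
    intro s n s' n' hgeq
    rcases le_total n n' with h5 | h5
    · obtain ⟨j, rfl⟩ := Nat.exists_eq_add_of_le h5
      exact Dmain s n s' j hgeq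
    · obtain ⟨j, rfl⟩ := Nat.exists_eq_add_of_le h5
      exact (Dmain s' n' s j hgeq.symm).symm
  have formZero : ∀ (s : ℤ) (n : ℕ), s • g (t n) = 0 → s • t n = 0 := by
    intro s n h5
    have h6 := Dinj s n 0 n (by rw [zero_smul]; exact h5)
    rwa [zero_smul] at h6
  have formAdd : ∀ (s : ℤ) (n : ℕ) (s' : ℤ) (n' : ℕ), ∃ (s'' : ℤ) (n'' : ℕ),
      s • t n + s' • t n' = s'' • t n'' ∧ s • g (t n) + s' • g (t n') = s'' • g (t n'') := by
    intro s n s' n'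
    rcases le_total n n' with h5 | h5
    · obtain ⟨j, rfl⟩ := Nat.exists_eq_add_of_le h5
      exact ⟨s * (p:ℤ)^j + s', n + j, by rw [add_smul, ← bump], by rw [add_smul, ← gbump]⟩
    · obtain ⟨j, rfl⟩ := Nat.exists_eq_add_of_le h5
      exact ⟨s + s' * (p:ℤ)^j, n' + j, by rw [add_smul, ← bump], by rw [add_smul, ← gbump]⟩
  -- the lifting construction
  have mkL : ∀ (c : A →+ QmodZ), ∃ L : AddMonoid.End A,
      (∀ x, g (L x) = c x) ∧ (∀ x, ∃ (s : ℤ) (n : ℕ), L x = s • t n) := by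
    intro c
    have hrepc : ∀ x : A, ∃ (s : ℤ) (n : ℕ), c x = s • g (t n) := by
      intro x
      obtain ⟨n, hn⟩ := tors c x
      obtain ⟨s, hs⟩ := Lgen hp (hgt1 n) (hgtne n) hn
      exact ⟨s, n, hs⟩
    choose σc νc hσc using hrepc
    refine ⟨AddMonoidHom.mk' (fun x => σc x • t (νc x)) ?_, fun x => ?_, fun x => ⟨σc x, νc x, rfl⟩⟩
    · intro x y
      obtain ⟨s'', n'', hsum, hgsum⟩ := formAdd (σc x) (νc x) (σc y) (νc y)
      show σc (x+y) • t (νc (x+y)) = σc x • t (νc x) + σc y • t (νc y)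
      rw [hsum]
      apply Dinj
      rw [← hgsum, ← hσc, ← hσc, ← hσc]
      exact map_add c x y
    · show g (σc x • t (νc x)) = c x
      rw [map_zsmul, ← hσc]
  obtain ⟨E, hgE, hEform⟩ := mkL g
  have hEE : ∀ x, E (E x) = E x := by
    intro x
    obtain ⟨s1, n1, h1⟩ := hEform (E x)
    obtain ⟨s2, n2, h2⟩ := hEform x
    rw [h1, h2]
    apply Dinj
    rw [← map_zsmul, ← map_zsmul, ← h1, ← h2]
    exact hgE (E x)
  by_cases hker : ∀ x : A, g x = 0 → x = 0
  · -- A is isomorphic to the Prüfer group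
    have hmemP : ∀ x : A, g x ∈ Prufer p := by
      intro x
      obtain ⟨n, hn⟩ := hpgroup x
      exact ⟨n, by rw [← map_nsmul, hn, map_zero]⟩
    set gP : A →+ ↥(Prufer p) := g.codRestrict (Prufer p) hmemP with hgPdef
    have hgPapp : ∀ x, (gP x : QmodZ) = g x := fun x => rfl
    have hinj : Function.Injective gP := by
      rw [injective_iff_map_eq_zero]
      intro x hx
      apply hker
      rw [← hgPapp, hx]
      rfl
    have hsurj : Function.Surjective gP := by
      intro y
      obtain ⟨n, hn⟩ := y.2
      have h5 : (p:ℤ)^(n+1) • (y : QmodZ) = 0 := by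
        rw [pow_succ', mul_smul, nz_smul, hn, smul_zero]
      obtain ⟨s, hs⟩ := Lgen hp (hgt1 n) (hgtne n) h5
      refine ⟨s • t n, Subtype.ext ?_⟩
      rw [hgPapp, map_zsmul, ← hs]
    exact ⟨AddEquiv.ofBijective gP ⟨hinj, hsurj⟩⟩
  · push_neg at hker
    obtain ⟨w, hgw, hw0⟩ := hker
    -- an element of order p in the kernel of g
    have hWw := hpgroup w
    have hfindw : Nat.find hWw ≠ 0 := by
      intro hcon
      have h5 := Nat.find_spec hWw
      rw [hcon] at h5
      simp at h5
      exact hw0 h5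
    obtain ⟨m0, hm0⟩ := Nat.exists_eq_succ_of_ne_zero hfindw
    set w' : A := (p:ℤ)^m0 • w with hw'def
    have hw'p : (p:ℤ) • w' = 0 := by
      have h6 := Nat.find_spec hWw
      rw [hm0] at h6
      rw [hw'def, smul_smul, ← pow_succ', nz_smul]
      exact h6
    have hw'ne : w' ≠ 0 := by
      rw [hw'def, nz_smul]
      exact Nat.find_min hWw (by omega)
    have hgw' : g w' = 0 := by rw [hw'def, map_zsmul, hgw, smul_zero]
    have hw'1 : (p:ℤ)^(0+1) • w' = 0 := by rw [zero_add, pow_one]; exact hw'p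
    have hw'e : (p:ℤ)^0 • w' ≠ 0 := by rw [pow_zero, one_smul]; exact hw'ne
    have cond2 : ∀ s : ℤ, s • w' = 0 → s • uu p 1 = 0 := by
      intro s hs
      obtain ⟨c, hc⟩ := Ldvd hp (m := 0) hw'1 hw'e hs
      rw [zero_add, pow_one] at hc
      rw [hc, mul_comm, mul_smul]
      have h5 : (p:ℤ) • uu p 1 = 0 := by
        have := uu_order hp 1
        rwa [pow_one] at this
      rw [h5, smul_zero]
    obtain ⟨c, hcw⟩ := ext_cyc w' (uu p 1) cond2
    obtain ⟨X, hgX, hXform⟩ := mkL c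
    set F : AddMonoid.End A := X * (1 - E) with hFdef
    have hFapp : ∀ x, F x = X (x - E x) := fun x => rfl
    have hEw' : E w' = 0 := by
      obtain ⟨s, n, h1⟩ := hEform w'
      rw [h1]
      apply formZero
      rw [← map_zsmul, ← h1, hgE, hgw']
    have hF0 : F ≠ (0 : AddMonoid.End A) := by
      intro hcon
      have h5 : F w' = 0 := by rw [hcon, AddMonoid.End.zero_apply]
      rw [hFapp, hEw', sub_zero] at h5
      have h6 : g (X w') = uu p 1 := by rw [hgX, hcw]
      rw [h5, map_zero] at h6
      exact uu_one_ne hp h6.symm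
    have hFE : F * E = 0 := by
      apply DFunLike.ext
      intro x
      show F (E x) = (0 : AddMonoid.End A) x
      rw [AddMonoid.End.zero_apply, hFapp, hEE, sub_self, map_zero]
    have hEF : E * F = F := by
      apply DFunLike.ext
      intro x
      show E (F x) = F x
      obtain ⟨s2, n2, h2⟩ := hXform ((1 - E) x)
      have hFx2 : F x = s2 • t n2 := h2
      obtain ⟨s1, n1, h1⟩ := hEform (F x)
      rw [h1, hFx2]
      apply Dinj
      rw [← map_zsmul, ← map_zsmul, ← h1, ← hFx2]
      exact hgE (F x)
    exact (ce_lemA hce hF0 hEF hFE).elim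

end divisible
end CEAux


/-- the endomorphism ring of a nonzero abelian `p`-group `A` is centrally
essential iff `A ≅ ℤ/p^kℤ` for some `k ≥ 1` or `A ≅ ℤ(p^∞)`. -/
theorem isCentrallyEssential_end_of_pGroup_iff
    (p : ℕ) (hp : p.Prime) (A : Type*) [AddCommGroup A] (hA : ∃ a : A, a ≠ 0)
    (hpgroup : ∀ a : A, ∃ n : ℕ, p ^ n • a = 0) :
    IsCentrallyEssential (AddMonoid.End A) ↔
      (∃ k : ℕ, 1 ≤ k ∧ Nonempty (A ≃+ ZMod (p ^ k))) ∨
        Nonempty (A ≃+ ↥(Prufer p)) := by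
  constructor
  · intro hce
    by_cases hdiv : ∀ x : A, ∃ y : A, (p:ℤ) • y = x
    · exact Or.inr (CEAux.case_divisible hp hA hpgroup hce hdiv)
    · exact Or.inl (CEAux.case_reduced hp hpgroup hce hdiv)
  · rintro (⟨k, hk, he⟩ | he)
    · obtain ⟨e⟩ := he
      haveI : NeZero (p^k) := ⟨pow_ne_zero k hp.pos.ne'⟩
      exact CEAux.ce_of_comm hA (CEAux.comm_end_of_equiv e (CEAux.comm_end_zmod (p^k)))
    · obtain ⟨e⟩ := he
      exact CEAux.ce_of_comm hA (CEAux.comm_end_of_equiv e (CEAux.comm_end_prufer hp))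
end

section
/- Let A be a torsion abelian group (every element of A has finite order). If the endomorphism ring End(A) is centrally essential, then End(A) is commutative. -/
open AddSubgroup

namespace CEaux



variable {A : Type*} [AddCommGroup A]

lemma zsmul_killed {a : A} {n : ℕ} (h : n • a = 0) {t : ℤ} (ht : (n:ℤ) ∣ t) : t • a = 0 := by
  obtain ⟨c, rfl⟩ := ht
  rw [mul_comm, mul_zsmul, natCast_zsmul, h, smul_zero]

/-- Build a hom on the cyclic subgroup generated by `x`, sending `x` to `y`,
given that the order of `y` divides that of `x`. -/
noncomputable def homOfZmultiples {X Y : Type*} [AddCommGroup X] [AddCommGroup Y] (x : X) (y : Y)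
    (hxy : ∀ t : ℤ, t • x = 0 → t • y = 0) : (zmultiples x) →+ Y where
  toFun w := (mem_zmultiples_iff.mp w.2).choose • y
  map_zero' := by
    have h0 := (mem_zmultiples_iff.mp ((0 : zmultiples x)).2).choose_spec
    exact hxy _ h0
  map_add' w₁ w₂ := by
    have h1 := (mem_zmultiples_iff.mp w₁.2).choose_spec
    have h2 := (mem_zmultiples_iff.mp w₂.2).choose_spec
    have h3 := (mem_zmultiples_iff.mp (w₁ + w₂).2).choose_spec
    show (mem_zmultiples_iff.mp (w₁ + w₂).2).choose • y
      = (mem_zmultiples_iff.mp w₁.2).choose • y + (mem_zmultiples_iff.mp w₂.2).choose • y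
    set t₁ := (mem_zmultiples_iff.mp w₁.2).choose
    set t₂ := (mem_zmultiples_iff.mp w₂.2).choose
    set t₃ := (mem_zmultiples_iff.mp (w₁ + w₂).2).choose
    have hc : ((w₁ + w₂ : zmultiples x) : X) = (w₁ : X) + (w₂ : X) := rfl
    have hz : (t₃ - t₁ - t₂) • x = 0 := by
      rw [sub_smul, sub_smul, h1, h2, h3, hc]; abel
    have h4 := hxy _ hz
    rw [sub_smul, sub_smul, sub_eq_zero, sub_eq_iff_eq_add] at h4
    rw [h4]; abel

lemma homOfZmultiples_apply {X Y : Type*} [AddCommGroup X] [AddCommGroup Y] (x : X) (y : Y)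
    (hxy : ∀ t : ℤ, t • x = 0 → t • y = 0) (w : zmultiples x) (t : ℤ) (hw : (w : X) = t • x) :
    homOfZmultiples x y hxy w = t • y := by
  have h1 := (mem_zmultiples_iff.mp w.2).choose_spec
  show (mem_zmultiples_iff.mp w.2).choose • y = t • y
  set t₁ := (mem_zmultiples_iff.mp w.2).choose
  have hz : (t₁ - t) • x = 0 := by rw [sub_smul, h1, hw, sub_self]
  have h4 := hxy _ hz
  rw [sub_smul, sub_eq_zero] at h4
  exact h4

lemma exists_extension {X Q : Type*} [AddCommGroup X] [AddCommGroup Q] [DivisibleBy Q ℤ]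
    (K : AddSubgroup X) (g : ↥K →+ Q) : ∃ G : X →+ Q, ∀ k : ↥K, G k = g k := by
  obtain ⟨G, hG⟩ := Module.Baer.extension_property_addMonoidHom (Module.Baer.of_divisible Q)
    K.subtype Subtype.val_injective g
  exact ⟨G, fun k => by
    have := congrArg (fun φ => φ k) hG
    simpa using this⟩

/-- Build a `DivisibleBy _ ℤ` instance from surjectivity of all nonzero integer scalings. -/
noncomputable def divisibleOfSurj {Y : Type*} [AddCommGroup Y]
    (H : ∀ z : ℤ, z ≠ 0 → ∀ y : Y, ∃ y', z • y' = y) : DivisibleBy Y ℤ where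
  div y z := if hz : z = 0 then 0 else (H z hz y).choose
  div_zero y := dif_pos rfl
  div_cancel y hz := by simp_rw [dif_neg hz]; exact (H _ hz y).choose_spec

lemma kill_coprime {x : A} {k m : ℕ} (hk : k • x = 0) (hm : m • x = 0) (h : Nat.Coprime k m) :
    x = 0 := by
  obtain ⟨α, β, hab⟩ := Nat.isCoprime_iff_coprime.mpr h
  have h1 : (α * k) • x = 0 := zsmul_killed hk ⟨α, mul_comm _ _⟩
  have h2 : (β * m) • x = 0 := zsmul_killed hm ⟨β, mul_comm _ _⟩
  calc x = (1 : ℤ) • x := (one_zsmul x).symm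
    _ = (α * k + β * m) • x := by rw [hab]
    _ = (α * k) • x + (β * m) • x := add_zsmul x _ _
    _ = 0 := by rw [h1, h2, add_zero]

lemma addOrderOf_eq_prime_pow_of_killed {p : ℕ} (hp : p.Prime) {a : A} {k : ℕ}
    (hk : p ^ k • a = 0) : ∃ j ≤ k, addOrderOf a = p ^ j :=
  (Nat.dvd_prime_pow hp).mp (addOrderOf_dvd_iff_nsmul_eq_zero.mpr hk)

/-- p-primary part decomposition of an element. -/
lemma ppart (htor : ∀ a : A, ∃ n : ℕ, 0 < n ∧ n • a = 0) (p : ℕ) (hp : p.Prime) (y : A) :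
    ∃ (c d : A) (tc td : ℤ) (K m : ℕ), y = c + d ∧ p ^ K • c = 0 ∧ 0 < m ∧ ¬ p ∣ m ∧ m • d = 0 ∧
      c = tc • y ∧ d = td • y := by
  have hfin : IsOfFinAddOrder y := isOfFinAddOrder_iff_nsmul_eq_zero.mpr (htor y)
  have hn0 : addOrderOf y ≠ 0 := hfin.addOrderOf_pos.ne'
  set n := addOrderOf y with hn
  have hny : n • y = 0 := addOrderOf_nsmul_eq_zero y
  set K := n.factorization p
  set m := n / p ^ K with hm
  have hnm : p ^ K * m = n := Nat.ordProj_mul_ordCompl_eq_self n p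
  have hco : Nat.Coprime (p ^ K) m := (Nat.coprime_ordCompl hp hn0).pow_left _
  obtain ⟨α, β, hab⟩ := Nat.isCoprime_iff_coprime.mpr hco
  refine ⟨(β * m) • y, (α * p ^ K) • y, β * m, α * p ^ K, K, m, ?_, ?_, ?_, ?_, ?_, rfl, rfl⟩
  · calc y = (1:ℤ) • y := (one_zsmul y).symm
      _ = (α * (p ^ K : ℕ) + β * (m : ℕ)) • y := by rw [hab]
      _ = (α * p ^ K) • y + (β * m) • y := by rw [add_zsmul]; push_cast; ring_nf
      _ = (β * m) • y + (α * p ^ K) • y := add_comm _ _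
  · rw [← natCast_zsmul, smul_smul]
    refine zsmul_killed hny ⟨β, ?_⟩
    push_cast [← hnm]; ring
  · exact Nat.ordCompl_pos p hn0
  · exact Nat.not_dvd_ordCompl hp hn0
  · rw [← natCast_zsmul, smul_smul]
    refine zsmul_killed hny ⟨α, ?_⟩
    push_cast [← hnm]; ring


variable {A : Type*} [AddCommGroup A]

/-- In a centrally essential ring, idempotents are central. -/
lemma idem_central {R : Type*} [Ring R] (hce : IsCentrallyEssential R) (e : R) (he : e * e = e) :
    e ∈ Set.center R := by
  rw [Semigroup.mem_center_iff]
  intro f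
  have claim1 : e * f * (1 - e) = 0 := by
    by_contra hne
    obtain ⟨x, y, hx, hy, hx0, hy0, hxy⟩ := hce _ hne
    have h1 : e * y = y := by
      rw [← hxy]
      calc e * (e * f * (1 - e) * x) = (e * e) * f * (1 - e) * x := by noncomm_ring
        _ = e * f * (1 - e) * x := by rw [he]
    have h2 : y * e = 0 := by
      rw [← hxy]
      have hxe : x * e = e * x := ((Semigroup.mem_center_iff.mp hx) e).symm
      calc e * f * (1 - e) * x * e = e * f * ((1 - e) * (x * e)) := by noncomm_ring
        _ = e * f * ((1 - e) * (e * x)) := by rw [hxe]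
        _ = e * f * ((e - e * e) * x) := by noncomm_ring
        _ = 0 := by rw [he]; simp
    have h3 := (Semigroup.mem_center_iff.mp hy) e
    rw [h1, h2] at h3
    exact hy0 h3
  have claim2 : (1 - e) * f * e = 0 := by
    by_contra hne
    obtain ⟨x, y, hx, hy, hx0, hy0, hxy⟩ := hce _ hne
    have h1 : y * e = y := by
      rw [← hxy]
      have hxe : x * e = e * x := ((Semigroup.mem_center_iff.mp hx) e).symm
      calc (1 - e) * f * e * x * e = (1 - e) * f * (e * (x * e)) := by noncomm_ring
        _ = (1 - e) * f * (e * (e * x)) := by rw [hxe]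
        _ = (1 - e) * f * ((e * e) * x) := by noncomm_ring
        _ = (1 - e) * f * e * x := by rw [he]; noncomm_ring
    have h2 : e * y = 0 := by
      rw [← hxy]
      calc e * ((1 - e) * f * e * x) = (e - e * e) * f * e * x := by noncomm_ring
        _ = 0 := by rw [he]; simp
    have h3 := (Semigroup.mem_center_iff.mp hy) e
    rw [h2, h1] at h3
    exact hy0 h3.symm
  have e2 : e * f = e * f * e := by
    have h := claim1
    rwa [mul_sub, mul_one, sub_eq_zero] at h
  have e1 : f * e = e * f * e := by
    have h := claim2
    rwa [sub_mul, sub_mul, one_mul, sub_eq_zero] at h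
  exact e1.trans e2.symm

/-- Comparability of the order-`p` elements: the key structural property. -/
def SocleChain (A : Type*) [AddCommGroup A] (p : ℕ) : Prop :=
  ∀ s s' : A, p • s = 0 → p • s' = 0 → s ≠ 0 → ∃ t : ℤ, s' = t • s

lemma addOrderOf_eq_prime' {p : ℕ} (hp : p.Prime) {s : A} (h : p • s = 0) (h0 : s ≠ 0) :
    addOrderOf s = p := by
  have hd : addOrderOf s ∣ p := addOrderOf_dvd_iff_nsmul_eq_zero.mpr h
  rcases (Nat.dvd_prime hp).mp hd with h1 | h1
  · exact absurd (AddMonoid.addOrderOf_eq_one_iff.mp h1) h0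
  · exact h1

lemma zsmul_killed' {a : A} {n : ℕ} (h : n • a = 0) {t : ℤ} (ht : (n:ℤ) ∣ t) : t • a = 0 := by
  obtain ⟨c, rfl⟩ := ht
  rw [mul_comm, mul_zsmul, natCast_zsmul, h, smul_zero]

/-- From the chain property on the socle, comparability of all cyclic p-subgroups. -/
lemma chain_lemma {p : ℕ} (hp : p.Prime) (hch : SocleChain A p) :
    ∀ j : ℕ, ∀ c a : A, ∀ k : ℕ, addOrderOf c = p ^ j → addOrderOf a = p ^ k → j ≤ k →
      ∃ t : ℤ, c = t • a := by
  intro j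
  induction j using Nat.strong_induction_on with
  | _ j ih =>
    intro c a k hc ha hjk
    rcases Nat.eq_zero_or_pos j with hj | hj
    · subst hj
      simp only [pow_zero] at hc
      exact ⟨0, by rw [AddMonoid.addOrderOf_eq_one_iff.mp hc, zero_zsmul]⟩
    · have hk : 1 ≤ k := le_trans hj hjk
      set P := (p : ℤ) with hP
      set s := p ^ (k-1) • a with hs
      set s' := p ^ (j-1) • c with hs'
      have hsz : (P ^ (k-1)) • a = s := by rw [hs, hP, ← natCast_zsmul]; norm_cast
      have hsz' : (P ^ (j-1)) • c = s' := by rw [hs', hP, ← natCast_zsmul]; norm_cast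
      have hka : p ^ k • a = 0 := by rw [← ha]; exact addOrderOf_nsmul_eq_zero a
      have hjc : p ^ j • c = 0 := by rw [← hc]; exact addOrderOf_nsmul_eq_zero c
      have hps : p • s = 0 := by
        rw [hs, smul_smul, ← pow_succ']
        have hh : p ^ (k - 1 + 1) = p ^ k := by congr 1; omega
        rw [hh]; exact hka
      have hps' : p • s' = 0 := by
        rw [hs', smul_smul, ← pow_succ']
        have hh : p ^ (j - 1 + 1) = p ^ j := by congr 1; omega
        rw [hh]; exact hjc
      have hsne : s ≠ 0 := by
        intro h0
        have h1 : addOrderOf a ∣ p ^ (k-1) := addOrderOf_dvd_iff_nsmul_eq_zero.mpr (hs ▸ h0)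
        rw [ha] at h1
        have := (Nat.pow_dvd_pow_iff_le_right hp.one_lt).mp h1
        omega
      obtain ⟨t₁, ht₁⟩ := hch s s' hps hps' hsne
      set c' := c - (t₁ * P ^ (k - j)) • a with hc'
      have hkillz : (P ^ (j-1)) • c' = 0 := by
        rw [hc', smul_sub, smul_smul, hsz']
        have harith : P ^ (j-1) * (t₁ * P ^ (k-j)) = t₁ * P ^ (k-1) := by
          rw [mul_left_comm, ← pow_add]
          congr 2
          omega
        rw [harith, ht₁, mul_zsmul, hsz]
        exact sub_self _
      have hkill : p ^ (j-1) • c' = 0 := by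
        have : ((p ^ (j-1) : ℕ) : ℤ) • c' = 0 := by push_cast; exact hkillz
        rwa [natCast_zsmul] at this
      obtain ⟨j', hj'le, hj'⟩ := (Nat.dvd_prime_pow hp).mp
        (addOrderOf_dvd_iff_nsmul_eq_zero.mpr hkill)
      obtain ⟨t₂, ht₂⟩ := ih j' (by omega) c' a k hj' ha (by omega)
      refine ⟨t₂ + t₁ * P ^ (k - j), ?_⟩
      have : c = c' + (t₁ * P ^ (k - j)) • a := by rw [hc']; abel
      rw [this, ht₂, add_zsmul]

lemma addOrderOf_eq_prime_pow_of_killed' {p : ℕ} (hp : p.Prime) {a : A} {k : ℕ}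
    (hk : p ^ k • a = 0) : ∃ j ≤ k, addOrderOf a = p ^ j :=
  (Nat.dvd_prime_pow hp).mp (addOrderOf_dvd_iff_nsmul_eq_zero.mpr hk)

/-- A p-power torsion element is sent into its own cyclic subgroup by any endomorphism,
assuming the socle chain property. -/
lemma ppow_scalar {p : ℕ} (hp : p.Prime) (hch : SocleChain A p) (h : AddMonoid.End A) (a : A)
    (ha : ∃ k : ℕ, p ^ k • a = 0) : ∃ t : ℤ, h a = t • a := by
  obtain ⟨k, hk⟩ := ha
  obtain ⟨k', hk'le, hk'⟩ := addOrderOf_eq_prime_pow_of_killed' hp hk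
  have hka : p ^ k' • a = 0 := by rw [← hk']; exact addOrderOf_nsmul_eq_zero a
  have hhc : p ^ k' • (h a) = 0 := by rw [← map_nsmul, hka, map_zero]
  obtain ⟨j, hjle, hj⟩ := addOrderOf_eq_prime_pow_of_killed' hp hhc
  exact chain_lemma hp hch j (h a) a k' hj hk' hjle


/-- The group `ℚ/ℤ`. -/
abbrev QZ : Type := ℚ ⧸ zmultiples (1 : ℚ)

noncomputable instance : DivisibleBy ℚ ℕ := AddGroup.divisibleByNatOfDivisibleByInt _
noncomputable instance : DivisibleBy QZ ℤ := AddGroup.divisibleByIntOfDivisibleByNat _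

/-- Quotient map `ℚ → ℚ/ℤ`. -/
def qzmk : ℚ →+ QZ := QuotientAddGroup.mk' _

lemma qzmk_eq_zero_iff (r : ℚ) : qzmk r = 0 ↔ ∃ z : ℤ, (z : ℚ) = r := by
  rw [qzmk, QuotientAddGroup.mk'_apply, QuotientAddGroup.eq_zero_iff, mem_zmultiples_iff]
  constructor
  · rintro ⟨k, hk⟩; exact ⟨k, by rw [← hk, zsmul_eq_mul, mul_one]⟩
  · rintro ⟨k, hk⟩; exact ⟨k, by rw [zsmul_eq_mul, mul_one, hk]⟩

lemma qzmk_surjective : Function.Surjective qzmk := QuotientAddGroup.mk'_surjective _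

/-- The canonical element of order M in ℚ/ℤ. -/
noncomputable def qztau (M : ℕ) : QZ := qzmk ((M : ℚ)⁻¹)

lemma qztau_smul_eq_zero_iff (M : ℕ) (hM : 0 < M) (t : ℤ) :
    t • qztau M = 0 ↔ (M : ℤ) ∣ t := by
  have hM0 : (M : ℚ) ≠ 0 := Nat.cast_ne_zero.mpr hM.ne'
  rw [qztau, ← map_zsmul, qzmk_eq_zero_iff]
  constructor
  · rintro ⟨z, hz⟩
    have : (z : ℚ) * M = t := by
      rw [hz, zsmul_eq_mul]
      field_simp
    have h2 : z * (M:ℤ) = t := by exact_mod_cast this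
    exact ⟨z, by linarith⟩
  · rintro ⟨c, rfl⟩
    refine ⟨c, ?_⟩
    rw [zsmul_eq_mul]
    push_cast
    field_simp

lemma qz_torsion_mem (M : ℕ) (hM : 0 < M) (q : QZ) (h : (M : ℤ) • q = 0) :
    q ∈ zmultiples (qztau M) := by
  have hM0 : (M : ℚ) ≠ 0 := Nat.cast_ne_zero.mpr hM.ne'
  obtain ⟨r, rfl⟩ := qzmk_surjective q
  rw [← map_zsmul, qzmk_eq_zero_iff] at h
  obtain ⟨z, hz⟩ := h
  rw [mem_zmultiples_iff]
  refine ⟨z, ?_⟩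
  rw [qztau, ← map_zsmul]
  congr 1
  rw [zsmul_eq_mul] at hz ⊢
  field_simp at hz ⊢
  push_cast at hz ⊢
  linarith [hz]



lemma socleChain_of_finite_height (hce : IsCentrallyEssential (AddMonoid.End A))
    (htor : ∀ a : A, ∃ n : ℕ, 0 < n ∧ n • a = 0) {p : ℕ} (hp : p.Prime)
    (s : A) (hs0 : s ≠ 0) (hsp : p • s = 0) (hfin : ∃ N : ℕ, ¬ ∃ y : A, p ^ N • y = s) :
    SocleChain A p := by
  classical
  -- the exact (finite) height n of s
  have hN1 := Nat.find_spec hfin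
  have hN1ne : Nat.find hfin ≠ 0 := by
    intro h0
    rw [h0] at hN1
    exact hN1 ⟨s, by simp⟩
  set n := Nat.find hfin - 1 with hn
  have hn1 : n + 1 = Nat.find hfin := by omega
  have hmem : ∃ y : A, p ^ n • y = s := by
    have := Nat.find_min hfin (m := n) (by omega)
    exact not_not.mp this
  have hnot : ¬ ∃ y : A, p ^ (n+1) • y = s := by rw [hn1]; exact hN1
  -- pick b : the p-part of a height-n root of s
  obtain ⟨y, hy⟩ := hmem
  obtain ⟨c, d, tc, td, K, m, hycd, hKc, hm0, hpm, hmd, hc_eq, hd_eq⟩ := ppart htor p hp y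
  set b := c with hb
  have hbs : p ^ n • b = s := by
    have h1 : s = p ^ n • c + p ^ n • d := by rw [← smul_add, ← hycd, hy]
    have hz1 : s - p ^ n • c = p ^ n • d := by rw [h1]; abel
    have hz_p : p ^ (K+1) • (s - p ^ n • c) = 0 := by
      rw [smul_sub]
      have e1 : p ^ (K+1) • s = 0 := by
        rw [pow_succ, mul_smul, hsp, smul_zero]
      have e2 : p ^ (K+1) • (p ^ n • c) = 0 := by
        rw [smul_smul, ← pow_add, show K + 1 + n = (n+1) + K by omega, pow_add, mul_smul,
          hKc, smul_zero]
      rw [e1, e2, sub_zero]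
    have hz_m : m • (s - p ^ n • c) = 0 := by
      rw [hz1, smul_comm, hmd, smul_zero]
    have hco : Nat.Coprime (p^(K+1)) m := (hp.coprime_iff_not_dvd.mpr hpm).pow_left _
    have := kill_coprime hz_p hz_m hco
    have : s = p ^ n • c := by rwa [sub_eq_zero] at this
    exact this.symm
  have hbM : p ^ (n+1) • b = 0 := by
    rw [pow_succ', mul_smul, hbs, hsp]
  have hbord : addOrderOf b = p ^ (n+1) := by
    obtain ⟨j, hjle, hj⟩ := addOrderOf_eq_prime_pow_of_killed' hp hbM
    rcases Nat.lt_or_ge j (n+1) with hlt | hge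
    · exfalso
      have : p ^ n • b = 0 := by
        have hd : addOrderOf b ∣ p ^ n := by rw [hj]; exact pow_dvd_pow p (by omega)
        exact addOrderOf_dvd_iff_nsmul_eq_zero.mp hd
      rw [hbs] at this
      exact hs0 this
    · have : j = n + 1 := le_antisymm hjle hge
      rw [this] at hj; exact hj
  set M := p ^ (n+1) with hMdef
  have hMpos : 0 < M := pow_pos hp.pos _
  have hMz : (M : ℤ) ≠ 0 := by exact_mod_cast hMpos.ne'
  have hbMz : (M : ℤ) • b = 0 := by rw [natCast_zsmul]; exact hbM
  -- purity of ⟨b⟩ : multiples of b that are divisible by M vanish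
  have hpure : ∀ t : ℤ, (∃ w : A, (M:ℤ) • w = t • b) → t • b = 0 := by
    rintro t ⟨w, hw⟩
    by_contra htb
    set r := t % (M:ℤ) with hr
    have hrdvd : (M:ℤ) ∣ t - r := ⟨t / M, by rw [hr]; rw [Int.emod_def]; ring⟩
    have hrt : t • b = r • b := by
      have := zsmul_killed' hbM hrdvd
      rw [sub_smul, sub_eq_zero] at this
      exact this
    have hr0 : r ≠ 0 := by
      intro h0; rw [h0, zero_zsmul] at hrt; exact htb hrt
    have hrpos : 0 ≤ r := Int.emod_nonneg t hMz
    have hrlt : r < M := Int.emod_lt_of_pos t (by exact_mod_cast hMpos)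
    set u0 := r.toNat with hu0def
    have hu0 : (u0 : ℤ) = r := Int.toNat_of_nonneg hrpos
    have hu0ne : u0 ≠ 0 := by
      intro h0; apply hr0; rw [← hu0, h0]; rfl
    have hu0lt : u0 < M := by
      have : (u0:ℤ) < (M:ℤ) := by rw [hu0]; exact hrlt
      exact_mod_cast this
    set j := u0.factorization p with hjdef
    set u := u0 / p ^ j with hudef
    have huu : p ^ j * u = u0 := Nat.ordProj_mul_ordCompl_eq_self u0 p
    have hpu : ¬ p ∣ u := Nat.not_dvd_ordCompl hp hu0ne
    have hjn : j ≤ n := by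
      have h1 : p ^ j ∣ u0 := Nat.ordProj_dvd u0 p
      have h2 : p ^ j ≤ u0 := Nat.le_of_dvd (Nat.pos_of_ne_zero hu0ne) h1
      have h3 : p ^ j < p ^ (n+1) := lt_of_le_of_lt h2 hu0lt
      have := (Nat.pow_lt_pow_iff_right hp.one_lt).mp h3
      omega
    have hco : Nat.Coprime u M := ((Nat.coprime_ordCompl hp hu0ne).symm).pow_right _
    obtain ⟨α, β, hαβ⟩ := Nat.isCoprime_iff_coprime.mpr hco
    -- p^j • b is divisible by M
    have key : ((p:ℤ)^j) • b = (M:ℤ) • (α • w) := by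
      have h1 : ((u0:ℤ)) • b = (M:ℤ) • w := by
        rw [hu0, ← hrt, hw]
      calc ((p:ℤ)^j) • b = (α * u + β * M) • ((p:ℤ)^j • b) := by rw [hαβ, one_zsmul]
        _ = α • ((u0:ℤ) • b) + (β * (p:ℤ)^j) • ((M:ℤ) • b) := by
            rw [show ((u0:ℕ):ℤ) = ((p:ℤ)^j) * u by push_cast [← huu]; ring]
            module
        _ = α • ((M:ℤ) • w) := by rw [hbMz, smul_zero, h1, add_zero]
        _ = (M:ℤ) • (α • w) := by module
    apply hnot
    refine ⟨((p:ℤ)^(n-j) * α) • w, ?_⟩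
    have hs2 : s = ((p:ℤ)^n) • b := by
      rw [← hbs, ← natCast_zsmul]; norm_cast
    rw [hs2, show ((p:ℤ)^n) • b = ((p:ℤ)^(n-j)) • (((p:ℤ)^j) • b) by
      rw [smul_smul, ← pow_add, show n - j + j = n by omega]]
    rw [key, ← natCast_zsmul]
    have : ((p ^ (n+1) : ℕ) : ℤ) = (M:ℤ) := by rw [hMdef]
    rw [this]
    module
  -- now build the retraction ρ onto ⟨b⟩
  have hbordz : ∀ t : ℤ, t • b = 0 → (M:ℤ) ∣ t := by
    intro t ht
    rw [← hbord]
    exact addOrderOf_dvd_iff_zsmul_eq_zero.mpr ht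
  set H : AddSubgroup A := AddMonoidHom.range (M : AddMonoid.End A) with hHdef
  have hmemH : ∀ x : A, x ∈ H ↔ ∃ w : A, M • w = x := by
    intro x
    constructor
    · rintro ⟨w, hw⟩; exact ⟨w, hw⟩
    · rintro ⟨w, hw⟩; exact ⟨w, hw⟩
  set π : A →+ (A ⧸ H) := QuotientAddGroup.mk' H with hπdef
  have hπM : ∀ x : A, (M:ℤ) • π x = 0 := by
    intro x
    rw [← map_zsmul, natCast_zsmul]
    rw [QuotientAddGroup.mk'_apply, QuotientAddGroup.eq_zero_iff]
    exact (hmemH _).mpr ⟨x, rfl⟩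
  have hπbord : ∀ t : ℤ, t • π b = 0 → (M:ℤ) ∣ t := by
    intro t ht
    rw [← map_zsmul] at ht
    rw [QuotientAddGroup.mk'_apply, QuotientAddGroup.eq_zero_iff] at ht
    obtain ⟨w, hw⟩ := (hmemH _).mp ht
    have : t • b = 0 := hpure t ⟨w, by rw [natCast_zsmul]; exact hw⟩
    exact hbordz t this
  -- character of the quotient
  set τ : QZ := qztau M with hτdef
  have hτM : ∀ t : ℤ, t • τ = 0 ↔ (M:ℤ) ∣ t := fun t => qztau_smul_eq_zero_iff M hMpos t
  set χ₀ : (zmultiples (π b)) →+ QZ :=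
    homOfZmultiples (π b) τ (fun t ht => (hτM t).mpr (hπbord t ht)) with hχ₀def
  obtain ⟨Φ', hΦ'⟩ := exists_extension (zmultiples (π b)) χ₀
  set Φ : A →+ QZ := Φ'.comp π with hΦdef
  have hΦb : Φ b = τ := by
    have h1 : Φ b = Φ' ((⟨π b, mem_zmultiples (π b)⟩ : zmultiples (π b)) : A ⧸ H) := rfl
    rw [h1, hΦ' ⟨π b, mem_zmultiples (π b)⟩, hχ₀def,
      homOfZmultiples_apply _ _ _ _ 1 (by rw [one_zsmul])]
    exact one_zsmul τ
  have hΦmem : ∀ x : A, Φ x ∈ zmultiples τ := by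
    intro x
    apply qz_torsion_mem M hMpos
    have hx : π ((M:ℤ) • x) = 0 := by
      rw [natCast_zsmul, hπdef, QuotientAddGroup.mk'_apply]
      exact (QuotientAddGroup.eq_zero_iff _).mpr ((hmemH _).mpr ⟨x, rfl⟩)
    calc (M:ℤ) • Φ x = Φ ((M:ℤ) • x) := (map_zsmul Φ _ _).symm
      _ = Φ' (π ((M:ℤ) • x)) := rfl
      _ = 0 := by rw [hx, map_zero]
  set ξ : (zmultiples τ) →+ A :=
    homOfZmultiples τ b (fun t ht => zsmul_killed' hbM ((hτM t).mp ht)) with hξdef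
  set ρ : AddMonoid.End A := AddMonoidHom.comp ξ (Φ.codRestrict (zmultiples τ) hΦmem) with hρdef
  have hρval : ∀ x : A, ∀ t : ℤ, Φ x = t • τ → ρ x = t • b := by
    intro x t ht
    show ξ ((Φ.codRestrict (zmultiples τ) hΦmem) x) = t • b
    exact homOfZmultiples_apply τ b _ _ t ht
  have hρmul : ∀ x : A, ∃ t : ℤ, ρ x = t • b := by
    intro x
    obtain ⟨t, ht⟩ := mem_zmultiples_iff.mp (hΦmem x)
    exact ⟨t, hρval x t ht.symm⟩
  have hρb : ρ b = b := by
    rw [hρval b 1 (by rw [hΦb, one_zsmul]), one_zsmul]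
  have hρidem : ρ * ρ = ρ := by
    apply AddMonoidHom.ext
    intro x
    obtain ⟨t, ht⟩ := hρmul x
    show ρ (ρ x) = ρ x
    rw [ht, map_zsmul, hρb]
  have hρcent := idem_central hce ρ hρidem
  -- every order-p element is fixed by ρ, hence a multiple of s
  have hfix : ∀ v : A, p • v = 0 → ρ v = v := by
    intro v hv
    by_contra hne
    set w := v - ρ v with hwdef
    have hwne : w ≠ 0 := fun h0 => hne (by
      rw [hwdef, sub_eq_zero] at h0
      exact h0.symm)
    have hwp : p • w = 0 := by
      rw [hwdef, smul_sub, hv, ← map_nsmul, hv, map_zero, sub_zero]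
    have hwM : p ^ (n+1) • w = 0 := by
      rw [pow_succ, mul_smul, hwp, smul_zero]
    have hρw : ρ w = 0 := by
      have := DFunLike.congr_fun hρidem v
      have h2 : ρ (ρ v) = ρ v := this
      rw [hwdef, map_sub, h2, sub_self]
    have hmemb : ∀ x : A, ρ x ∈ zmultiples b := by
      intro x
      obtain ⟨t, ht⟩ := hρmul x
      exact mem_zmultiples_iff.mpr ⟨t, ht.symm⟩
    set f₀ : (zmultiples b) →+ A :=
      homOfZmultiples b w (fun t ht => zsmul_killed' hwM (hbordz t ht)) with hf₀def
    set f : AddMonoid.End A :=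
      AddMonoidHom.comp f₀ ((ρ : A →+ A).codRestrict (zmultiples b) hmemb) with hfdef
    have hfb : f b = w := by
      show f₀ (((ρ : A →+ A).codRestrict (zmultiples b) hmemb) b) = w
      have : (((ρ : A →+ A).codRestrict (zmultiples b) hmemb) b : A) = (1:ℤ) • b := by
        rw [one_zsmul]; exact hρb
      rw [hf₀def, homOfZmultiples_apply b w _ _ 1 this, one_zsmul]
    have hcomm := (Semigroup.mem_center_iff.mp hρcent) f
    have := DFunLike.congr_fun hcomm b
    have hL : (f * ρ) b = w := by
      show f (ρ b) = w
      rw [hρb, hfb]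
    have hR : (ρ * f) b = 0 := by
      show ρ (f b) = 0
      rw [hfb, hρw]
    rw [hL, hR] at this
    exact hwne this
  -- conclude the chain property
  intro s₁ s₂ hp1 hp2 h1ne
  have hval : ∀ v : A, p • v = 0 → ∃ t : ℤ, v = t • s := by
    intro v hv
    obtain ⟨t, ht⟩ := hρmul v
    rw [hfix v hv] at ht
    have hpt : ((p:ℤ) * t) • b = 0 := by
      rw [mul_zsmul, ← ht, natCast_zsmul]
      exact hv
    have hdvd : (M:ℤ) ∣ (p:ℤ) * t := hbordz _ hpt
    have hdvd2 : ((p:ℤ)^n) ∣ t := by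
      have h1 : ((p:ℤ)) * (p:ℤ)^n ∣ (p:ℤ) * t := by
        rw [show ((p:ℤ)) * (p:ℤ)^n = (M:ℤ) by rw [hMdef]; push_cast; ring]
        exact hdvd
      exact (mul_dvd_mul_iff_left (by exact_mod_cast hp.pos.ne' : (p:ℤ) ≠ 0)).mp h1
    obtain ⟨t', ht'⟩ := hdvd2
    refine ⟨t', ?_⟩
    rw [ht, ht', ← hbs, ← natCast_zsmul]
    push_cast
    module
  obtain ⟨t₁, ht₁⟩ := hval s₁ hp1
  obtain ⟨t₂, ht₂⟩ := hval s₂ hp2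
  have hpt₁ : ¬ ((p:ℤ) ∣ t₁) := by
    rintro ⟨c, rfl⟩
    apply h1ne
    rw [ht₁]
    have hcs : ((p:ℤ) * c) • s = c • ((p:ℤ) • s) := by module
    rw [hcs, natCast_zsmul, hsp, smul_zero]
  have hcop : IsCoprime ((p:ℤ)) t₁ := by
    have hpz : Prime ((p:ℤ)) := Nat.prime_iff_prime_int.mp hp
    exact (Prime.coprime_iff_not_dvd hpz).mpr hpt₁
  obtain ⟨α, β, hαβ⟩ := hcop
  refine ⟨t₂ * β, ?_⟩
  have hss : s = β • s₁ := by
    rw [ht₁]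
    calc s = (α * (p:ℤ) + β * t₁) • s := by rw [hαβ, one_zsmul]
      _ = α • ((p:ℤ) • s) + β • (t₁ • s) := by module
      _ = β • (t₁ • s) := by rw [natCast_zsmul, hsp, smul_zero, zero_add]
  rw [ht₂, hss]
  module

lemma socleChain_of_infinite_height (hce : IsCentrallyEssential (AddMonoid.End A))
    (htor : ∀ a : A, ∃ n : ℕ, 0 < n ∧ n • a = 0) {p : ℕ} (hp : p.Prime)
    (hdiv : ∀ s : A, p • s = 0 → ∀ n : ℕ, ∃ y : A, p ^ n • y = s) :
    SocleChain A p := by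
  classical
  intro s s' hps hps' hs0
  -- Step 1 : p-power torsion elements are p-divisible within p-power torsion
  have Dv : ∀ k : ℕ, ∀ c : A, addOrderOf c = p ^ k →
      ∃ c' : A, (∃ j : ℕ, p ^ j • c' = 0) ∧ p • c' = c := by
    intro k
    induction k using Nat.strong_induction_on with
    | _ k ih =>
      intro c hc
      rcases Nat.eq_zero_or_pos k with hk0 | hkpos
      · subst hk0
        rw [pow_zero] at hc
        have hc0 : c = 0 := AddMonoid.addOrderOf_eq_one_iff.mp hc
        exact ⟨0, ⟨0, by rw [pow_zero, one_smul]⟩, by rw [smul_zero, hc0]⟩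
      · have hkc : p ^ k • c = 0 := by rw [← hc]; exact addOrderOf_nsmul_eq_zero c
        set sc := p ^ (k-1) • c with hscdef
        have hpsc : p • sc = 0 := by
          rw [hscdef, smul_smul, ← pow_succ', show k - 1 + 1 = k by omega]
          exact hkc
        obtain ⟨x, hx⟩ := hdiv sc hpsc k
        set c₁ := c - p • x with hc₁def
        have hkill : p ^ (k-1) • c₁ = 0 := by
          rw [hc₁def, smul_sub, smul_smul, ← pow_succ, show k - 1 + 1 = k by omega,
            ← hscdef, hx, sub_self]
        obtain ⟨j, hjle, hj⟩ := addOrderOf_eq_prime_pow_of_killed' hp hkill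
        obtain ⟨c₁', hc₁'pow, hc₁'⟩ := ih j (by omega) c₁ hj
        have hy : p • (x + c₁') = c := by
          rw [smul_add, hc₁', hc₁def]; abel
        obtain ⟨cc, dd, tc, td, K, m, hsum, hKcc, hm0, hpm, hmdd, _, _⟩ := ppart htor p hp (x + c₁')
        refine ⟨cc, ⟨K, hKcc⟩, ?_⟩
        have h1 : c = p • cc + p • dd := by rw [← smul_add, ← hsum, hy]
        have hz1 : c - p • cc = p • dd := by rw [h1]; abel
        have hz_p : p ^ (k + K + 1) • (c - p • cc) = 0 := by
          rw [smul_sub]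
          have e1 : p ^ (k + K + 1) • c = 0 := by
            rw [show k + K + 1 = (K + 1) + k by omega, pow_add, mul_smul, hkc, smul_zero]
          have e2 : p ^ (k + K + 1) • (p • cc) = 0 := by
            rw [smul_smul, mul_comm, ← pow_succ', show k + K + 1 + 1 = (k + 2) + K by omega,
              pow_add, mul_smul, hKcc, smul_zero]
          rw [e1, e2, sub_zero]
        have hz_m : m • (c - p • cc) = 0 := by
          rw [hz1, smul_comm, hmdd, smul_zero]
        have hco : Nat.Coprime (p ^ (k + K + 1)) m := (hp.coprime_iff_not_dvd.mpr hpm).pow_left _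
        have hz0 := kill_coprime hz_p hz_m hco
        rw [sub_eq_zero] at hz0
        exact hz0.symm
  have Dv' : ∀ c : A, (∃ k : ℕ, p ^ k • c = 0) →
      ∃ c' : A, (∃ j : ℕ, p ^ j • c' = 0) ∧ p • c' = c := by
    intro c hc
    obtain ⟨k0, hk0⟩ := hc
    obtain ⟨k, _, hk⟩ := addOrderOf_eq_prime_pow_of_killed' hp hk0
    exact Dv k c hk
  choose next hnpow hnstep using Dv'
  -- Step 2 : a Prüfer chain above s
  let u : ℕ → {x : A // ∃ k : ℕ, p ^ k • x = 0} :=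
    fun n => Nat.rec ⟨s, 1, by rwa [pow_one]⟩
      (fun _ prev => ⟨next prev.1 prev.2, hnpow prev.1 prev.2⟩) n
  have hu0 : (u 0).1 = s := rfl
  have hustep : ∀ i : ℕ, p • (u (i+1)).1 = (u i).1 := fun i => hnstep _ _
  have hupow : ∀ i : ℕ, p ^ i • (u i).1 = s := by
    intro i
    induction i with
    | zero => rw [pow_zero, one_smul, hu0]
    | succ i ihi => rw [pow_succ, mul_smul, hustep, ihi]
  have huord : ∀ i : ℕ, addOrderOf (u i).1 = p ^ (i+1) := by
    intro i
    have hk : p ^ (i+1) • (u i).1 = 0 := by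
      rw [pow_succ', mul_smul, hupow i, hps]
    obtain ⟨j, hjle, hj⟩ := addOrderOf_eq_prime_pow_of_killed' hp hk
    rcases Nat.lt_or_ge j (i+1) with hlt | hge
    · exfalso
      have hd : addOrderOf (u i).1 ∣ p ^ i := by rw [hj]; exact pow_dvd_pow p (by omega)
      have : p ^ i • (u i).1 = 0 := addOrderOf_dvd_iff_nsmul_eq_zero.mp hd
      rw [hupow i] at this
      exact hs0 this
    · rw [le_antisymm hjle hge] at hj; exact hj
  have hmono : ∀ i L : ℕ, i ≤ L → (u i).1 = p ^ (L - i) • (u L).1 := by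
    intro i L hiL
    obtain ⟨d, rfl⟩ := Nat.exists_eq_add_of_le hiL
    rw [show i + d - i = d by omega]
    clear hiL
    induction d with
    | zero => rw [pow_zero, one_smul, Nat.add_zero]
    | succ d ihd =>
      rw [ihd, show i + (d+1) = (i + d) + 1 by omega, ← hustep (i+d), smul_smul, ← pow_succ]
  have hrep : ∀ i L : ℕ, i ≤ L → ∀ t : ℤ, t • (u i).1 = (t * (p:ℤ)^(L-i)) • (u L).1 := by
    intro i L hiL t
    rw [hmono i L hiL, ← natCast_zsmul, smul_smul]
    congr 1
  -- Step 3 : the divisible subgroup D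
  set D : AddSubgroup A :=
    { carrier := {x | ∃ i : ℕ, ∃ t : ℤ, x = t • (u i).1}
      zero_mem' := ⟨0, 0, by rw [zero_zsmul]⟩
      add_mem' := by
        rintro x y ⟨i, t, rfl⟩ ⟨j, r, rfl⟩
        refine ⟨max i j, t * (p:ℤ)^(max i j - i) + r * (p:ℤ)^(max i j - j), ?_⟩
        rw [hrep i (max i j) (le_max_left _ _) t, hrep j (max i j) (le_max_right _ _) r,
          add_zsmul]
      neg_mem' := by
        rintro x ⟨i, t, rfl⟩
        exact ⟨i, -t, by rw [neg_zsmul]⟩ } with hDdef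
  have hmemD : ∀ x : A, x ∈ D ↔ ∃ i : ℕ, ∃ t : ℤ, x = t • (u i).1 := fun x => Iff.rfl
  have hsD : s ∈ D := ⟨0, 1, by rw [one_zsmul, hu0]⟩
  have huD : ∀ i, (u i).1 ∈ D := fun i => ⟨i, 1, (one_zsmul _).symm⟩
  -- D is divisible
  have hordz : ∀ i : ℕ, ∀ t : ℤ, ((p:ℤ) ^ (i+1)) ∣ t → t • (u i).1 = 0 := by
    intro i t ht
    apply zsmul_killed' (n := p ^ (i+1))
    · rw [← huord i]; exact addOrderOf_nsmul_eq_zero _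
    · exact_mod_cast ht
  have hsurj : ∀ z : ℤ, z ≠ 0 → ∀ x : ↥D, ∃ x' : ↥D, z • x' = x := by
    intro z hz x
    obtain ⟨i, t, hx⟩ := x.2
    set e := z.natAbs.factorization p with hedef
    set m := z.natAbs / p ^ e with hmdef
    have hznat : p ^ e * m = z.natAbs := Nat.ordProj_mul_ordCompl_eq_self z.natAbs p
    have hzne : z.natAbs ≠ 0 := Int.natAbs_ne_zero.mpr hz
    have hpm : ¬ p ∣ m := Nat.not_dvd_ordCompl hp hzne
    have hcop : Nat.Coprime m (p ^ (i + e + 1)) :=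
      ((Nat.coprime_ordCompl hp hzne).symm).pow_right _
    obtain ⟨α, β, hαβ⟩ := Nat.isCoprime_iff_coprime.mpr hcop
    refine ⟨⟨(z.sign * α * t) • (u (i+e)).1, ⟨i+e, _, rfl⟩⟩, ?_⟩
    apply Subtype.ext
    have hcoe : ((z • (⟨(z.sign * α * t) • (u (i+e)).1, ⟨i+e, _, rfl⟩⟩ : ↥D) : ↥D) : A)
        = z • ((z.sign * α * t) • (u (i+e)).1) := rfl
    rw [hcoe, hx]
    rw [smul_smul]
    have hbig : z * (z.sign * α * t) = (p:ℤ)^e * (m * α) * t := by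
      have h1 : z * z.sign = (z.natAbs : ℤ) := Int.mul_sign_self z
      calc z * (z.sign * α * t) = (z * z.sign) * α * t := by ring
        _ = (z.natAbs : ℤ) * α * t := by rw [h1]
        _ = (p:ℤ)^e * (m * α) * t := by rw [← hznat]; push_cast; ring
    rw [hbig]
    have hsplit : (p:ℤ)^e * (m * α) * t = (p:ℤ)^e * t + ((m:ℤ) * α - 1) * ((p:ℤ)^e * t) := by
      ring
    rw [hsplit, add_zsmul]
    have hkillterm : (((m:ℤ) * α - 1) * ((p:ℤ)^e * t)) • (u (i+e)).1 = 0 := by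
      apply hordz (i+e)
      have : (m:ℤ) * α - 1 = -(β * (p:ℤ)^(i+e+1)) := by
        have := hαβ
        push_cast at this ⊢
        linarith
      rw [this]
      exact ⟨-(β * ((p:ℤ)^e * t)), by ring⟩
    rw [hkillterm, add_zero]
    rw [hrep i (i+e) (by omega) t, show i + e - i = e by omega]
    module
  letI : DivisibleBy ↥D ℤ := divisibleOfSurj hsurj
  -- Step 4 : the central idempotent π projecting onto D
  obtain ⟨π₀, hπ₀⟩ := exists_extension D (AddMonoidHom.id ↥D)
  set π : AddMonoid.End A := AddMonoidHom.comp D.subtype π₀ with hπdef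
  have hπd : ∀ x : A, ∀ hx : x ∈ D, π x = x := by
    intro x hx
    show D.subtype (π₀ x) = x
    have : π₀ x = (⟨x, hx⟩ : ↥D) := by
      have := hπ₀ ⟨x, hx⟩
      simpa using this
    rw [this]
    rfl
  have hπmem : ∀ x : A, π x ∈ D := fun x => (π₀ x).2
  have hπidem : π * π = π := by
    apply AddMonoidHom.ext
    intro x
    show π (π x) = π x
    exact hπd (π x) (hπmem x)
  have hπcent := idem_central hce π hπidem
  -- Step 5 : conclude
  set w := s' - π s' with hwdef
  rcases eq_or_ne w 0 with hw0 | hwne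
  · -- s' ∈ D, read off the coefficient
    have hs'D : s' ∈ D := by
      have : s' = π s' := by rwa [hwdef, sub_eq_zero] at hw0
      rw [this]; exact hπmem s'
    obtain ⟨i, t, hti⟩ := (hmemD s').mp hs'D
    have hpt : ((p:ℤ) * t) • (u i).1 = 0 := by
      have : ((p:ℤ) * t) • (u i).1 = (p:ℤ) • s' := by rw [hti, mul_zsmul]
      rw [this, natCast_zsmul, hps']
    have hdvd : ((p:ℤ) ^ (i+1)) ∣ (p:ℤ) * t := by
      have := addOrderOf_dvd_iff_zsmul_eq_zero.mpr hpt
      rw [huord i] at this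
      exact_mod_cast this
    have hdvd2 : ((p:ℤ)^i) ∣ t := by
      have h1 : (p:ℤ) * (p:ℤ)^i ∣ (p:ℤ) * t := by
        rw [← pow_succ']
        exact hdvd
      exact (mul_dvd_mul_iff_left (by exact_mod_cast hp.pos.ne' : (p:ℤ) ≠ 0)).mp h1
    obtain ⟨t', rfl⟩ := hdvd2
    refine ⟨t', ?_⟩
    rw [hti, ← hupow i, ← natCast_zsmul]
    push_cast
    module
  · -- contradiction via non-central idempotent behaviour
    exfalso
    have hwp : p • w = 0 := by
      rw [hwdef, smul_sub, hps', ← map_nsmul, hps', map_zero, sub_zero]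
    have hπw : π w = 0 := by
      have h2 : π (π s') = π s' := hπd (π s') (hπmem s')
      rw [hwdef, map_sub, h2, sub_self]
    have hword : addOrderOf w = p := addOrderOf_eq_prime' hp hwp hwne
    set f₀ : (zmultiples w) →+ ↥D :=
      homOfZmultiples w (⟨s, hsD⟩ : ↥D) (by
        intro t ht
        have hdp : (p:ℤ) ∣ t := by
          have := addOrderOf_dvd_iff_zsmul_eq_zero.mpr ht
          rw [hword] at this
          exact_mod_cast this
        apply Subtype.ext
        have hcoe : ((t • (⟨s, hsD⟩ : ↥D) : ↥D) : A) = t • s := rfl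
        rw [hcoe]
        have : t • s = 0 := zsmul_killed' (n := p) hps (by exact_mod_cast hdp)
        rw [this]
        rfl) with hf₀def
    obtain ⟨F, hF⟩ := exists_extension (zmultiples w) f₀
    set f : AddMonoid.End A := AddMonoidHom.comp D.subtype F with hfdef
    have hfw : f w = s := by
      show D.subtype (F w) = s
      have h1 : F w = f₀ ⟨w, mem_zmultiples w⟩ := hF ⟨w, mem_zmultiples w⟩
      rw [h1, hf₀def, homOfZmultiples_apply w _ _ _ 1 (by rw [one_zsmul]), one_zsmul]
      rfl
    have hcomm := (Semigroup.mem_center_iff.mp hπcent) f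
    have hb := DFunLike.congr_fun hcomm w
    have hL : (f * π) w = 0 := by
      show f (π w) = 0
      rw [hπw, map_zero]
    have hR : (π * f) w = s := by
      show π (f w) = s
      rw [hfw]
      exact hπd s hsD
    rw [hL, hR] at hb
    exact hs0 hb.symm

lemma socleChain_of_essential (hce : IsCentrallyEssential (AddMonoid.End A))
    (htor : ∀ a : A, ∃ n : ℕ, 0 < n ∧ n • a = 0) {p : ℕ} (hp : p.Prime) : SocleChain A p := by
  by_cases hfin : ∃ s : A, s ≠ 0 ∧ p • s = 0 ∧ ∃ N : ℕ, ¬ ∃ y : A, p ^ N • y = s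
  · obtain ⟨s, hs0, hsp, hN⟩ := hfin
    exact socleChain_of_finite_height hce htor hp s hs0 hsp hN
  · push_neg at hfin
    apply socleChain_of_infinite_height hce htor hp
    intro s hsp n
    rcases eq_or_ne s 0 with rfl | hs0
    · exact ⟨0, smul_zero _⟩
    · exact hfin s hs0 hsp n

/-- Under central essentiality, every endomorphism acts as an integer on each element. -/
lemma scalar_on_all (hce : IsCentrallyEssential (AddMonoid.End A))
    (htor : ∀ a : A, ∃ n : ℕ, 0 < n ∧ n • a = 0) (φ : AddMonoid.End A) :
    ∀ a : A, ∃ t : ℤ, φ a = t • a := by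
  suffices H : ∀ n : ℕ, ∀ a : A, addOrderOf a = n → ∃ t : ℤ, φ a = t • a by
    exact fun a => H (addOrderOf a) a rfl
  intro n
  induction n using Nat.strong_induction_on with
  | _ n ih =>
    intro a hn
    have hfina : IsOfFinAddOrder a := isOfFinAddOrder_iff_nsmul_eq_zero.mpr (htor a)
    have hnpos : 0 < n := hn ▸ hfina.addOrderOf_pos
    rcases eq_or_ne n 1 with h1 | h1
    · have ha0 : a = 0 := AddMonoid.addOrderOf_eq_one_iff.mp (hn.trans h1)
      exact ⟨0, by rw [ha0, map_zero, zero_zsmul]⟩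
    · set p := n.minFac with hpdef
      have hp : p.Prime := Nat.minFac_prime h1
      have hpn : p ∣ n := Nat.minFac_dvd n
      obtain ⟨c, d, tc, td, K, m, hsum, hKc, hm0, hpm, hmd, hc_eq, hd_eq⟩ := ppart htor p hp a
      have hch : SocleChain A p := socleChain_of_essential hce htor hp
      obtain ⟨t₁, ht₁⟩ := ppow_scalar hp hch φ c ⟨K, hKc⟩
      have hdord : addOrderOf d ∣ n := by
        apply addOrderOf_dvd_iff_nsmul_eq_zero.mpr
        rw [hd_eq, smul_comm]
        have : n • a = 0 := by rw [← hn]; exact addOrderOf_nsmul_eq_zero a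
        rw [this, smul_zero]
      have hdm : addOrderOf d ∣ m := addOrderOf_dvd_iff_nsmul_eq_zero.mpr hmd
      have hdn : addOrderOf d ≠ n := by
        intro he
        exact hpm (dvd_trans (he ▸ hpn) hdm)
      have hdlt : addOrderOf d < n := lt_of_le_of_ne (Nat.le_of_dvd hnpos hdord) hdn
      obtain ⟨t₂, ht₂⟩ := ih _ hdlt d rfl
      refine ⟨t₁ * tc + t₂ * td, ?_⟩
      calc φ a = φ c + φ d := by rw [hsum, map_add]
        _ = t₁ • c + t₂ • d := by rw [ht₁, ht₂]
        _ = t₁ • (tc • a) + t₂ • (td • a) := by rw [← hc_eq, ← hd_eq]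
        _ = (t₁ * tc + t₂ * td) • a := by module

end CEaux

/-- if the endomorphism ring of a torsion abelian group is centrally
essential, then it is commutative. -/
theorem comm_of_isCentrallyEssential_end_of_torsion
    (A : Type*) [AddCommGroup A]
    (htor : ∀ a : A, ∃ n : ℕ, 0 < n ∧ n • a = 0)
    (h : IsCentrallyEssential (AddMonoid.End A)) :
    ∀ f g : AddMonoid.End A, f * g = g * f := by
  intro f g
  apply AddMonoidHom.ext
  intro a
  obtain ⟨t, ht⟩ := CEaux.scalar_on_all h htor g a
  obtain ⟨r, hr⟩ := CEaux.scalar_on_all h htor f a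
  show f (g a) = g (f a)
  rw [ht, hr, map_zsmul, map_zsmul, ht, hr, smul_comm]
end

section
/- Let A be a torsion-free abelian group (n·a = 0 with n a positive integer implies a = 0), let E = End(A) be its endomorphism ring, and let ℚE = ℚ ⊗_ℤ E be its quasi-endomorphism ring. Then E is centrally essential if and only if ℚE is centrally essential. -/
open TensorProduct

section Aux
variable {E : Type*} [Ring E]

lemma aux_tmul_central (x : E) (hx : ∀ g : E, g * x = x * g) (q : ℚ)
    (t : ℚ ⊗[ℤ] E) : t * (q ⊗ₜ[ℤ] x) = (q ⊗ₜ[ℤ] x) * t := by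
  induction t using TensorProduct.induction_on with
  | zero => simp
  | tmul p e => simp [Algebra.TensorProduct.tmul_mul_tmul, mul_comm p q, hx e]
  | add a b ha hb => simp [add_mul, mul_add, ha, hb]

lemma aux_exists_repr (t : ℚ ⊗[ℤ] E) :
    ∃ (n : ℕ) (e : E), 0 < n ∧ t = ((n : ℚ)⁻¹) ⊗ₜ[ℤ] e := by
  induction t using TensorProduct.induction_on with
  | zero => exact ⟨1, 0, one_pos, by simp⟩
  | tmul q e =>
      refine ⟨q.den, q.num • e, q.pos, ?_⟩
      have h : (q.num • ((q.den : ℚ)⁻¹)) = q := by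
        rw [zsmul_eq_mul, ← div_eq_mul_inv, Rat.num_div_den]
      rw [← smul_tmul, h]
  | add a b ha hb =>
      obtain ⟨n, e, hn, rfl⟩ := ha
      obtain ⟨k, f, hk, rfl⟩ := hb
      refine ⟨n * k, (k : ℤ) • e + (n : ℤ) • f, Nat.mul_pos hn hk, ?_⟩
      have hn' : (n : ℚ) ≠ 0 := Nat.cast_ne_zero.2 hn.ne'
      have hk' : (k : ℚ) ≠ 0 := Nat.cast_ne_zero.2 hk.ne'
      have h1 : ((k : ℤ) • (((n * k : ℕ) : ℚ))⁻¹) = ((n : ℚ))⁻¹ := by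
        rw [zsmul_eq_mul]; push_cast; field_simp
      have h2 : ((n : ℤ) • (((n * k : ℕ) : ℚ))⁻¹) = ((k : ℚ))⁻¹ := by
        rw [zsmul_eq_mul]; push_cast; field_simp
      rw [tmul_add, ← smul_tmul, ← smul_tmul, h1, h2]

end Aux

/-- for a torsion-free abelian group `A`, the endomorphism ring
`E = End A` is centrally essential iff the quasi-endomorphism ring `ℚ ⊗ E` is
centrally essential. -/
theorem isCentrallyEssential_end_iff_quasiEnd
    (A : Type*) [AddCommGroup A]
    (htf : ∀ (n : ℕ) (a : A), 0 < n → n • a = 0 → a = 0) :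
    IsCentrallyEssential (AddMonoid.End A) ↔
      IsCentrallyEssential (ℚ ⊗[ℤ] AddMonoid.End A) := by
  set E := AddMonoid.End A with hEdef
  -- torsion-freeness of E
  have nsmul_apply : ∀ (n : ℕ) (f : E) (a : A), (n • f) a = n • f a := by
    intro n f a
    induction n with
    | zero => rw [zero_nsmul, zero_smul]; exact rfl
    | succ k ih => rw [succ_nsmul, succ_nsmul]; exact congrArg (· + f a) ih
  have torN : ∀ (n : ℕ) (f : E), 0 < n → n • f = 0 → f = 0 := by
    intro n f hn h
    refine AddMonoidHom.ext fun a => ?_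
    refine htf n (f a) hn ?_
    have := congrArg (fun g : E => g a) h
    exact (nsmul_apply n f a).symm.trans this
  have tor : ∀ (s : ℤ) (f : E), s ≠ 0 → s • f = 0 → f = 0 := by
    intro s f hs h
    have habs : (s.natAbs : ℤ) • f = 0 := by
      rcases Int.natAbs_eq s with he | he
      · rw [← he]; exact h
      · rw [← neg_eq_zero, ← neg_zsmul, ← he]; exact h
    rw [natCast_zsmul] at habs
    exact torN s.natAbs f (Int.natAbs_pos.2 hs) habs
  -- injectivity of the canonical map E → ℚ ⊗ E
  haveI loc : IsLocalizedModule (nonZeroDivisors ℤ) (TensorProduct.mk ℤ ℚ E 1) :=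
    (isLocalizedModule_iff_isBaseChange (nonZeroDivisors ℤ) ℚ _).2
      (TensorProduct.isBaseChange ℤ E ℚ)
  have inj : ∀ f : E, (1 : ℚ) ⊗ₜ[ℤ] f = 0 → f = 0 := by
    intro f h
    have h' : TensorProduct.mk ℤ ℚ E 1 f = 0 := h
    obtain ⟨s, hs⟩ := (IsLocalizedModule.eq_zero_iff (nonZeroDivisors ℤ)
      (TensorProduct.mk ℤ ℚ E 1)).1 h'
    exact tor s f (nonZeroDivisors.coe_ne_zero s) (by simpa [Submonoid.smul_def] using hs)
  have injq : ∀ (q : ℚ) (f : E), q ≠ 0 → q ⊗ₜ[ℤ] f = 0 → f = 0 := by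
    intro q f hq h
    refine inj f ?_
    have h1 : q • ((1 : ℚ) ⊗ₜ[ℤ] f) = q ⊗ₜ[ℤ] f := by
      rw [smul_tmul', smul_eq_mul, mul_one]
    calc (1 : ℚ) ⊗ₜ[ℤ] f = q⁻¹ • (q • ((1 : ℚ) ⊗ₜ[ℤ] f)) := by
            rw [smul_smul, inv_mul_cancel₀ hq, one_smul]
      _ = q⁻¹ • (q ⊗ₜ[ℤ] f) := by rw [h1]
      _ = q⁻¹ • (0 : ℚ ⊗[ℤ] E) := by rw [h]
      _ = 0 := smul_zero _
  constructor
  · intro hE t ht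
    obtain ⟨n, a, hn, rfl⟩ := aux_exists_repr t
    have hnq : ((n : ℚ))⁻¹ ≠ 0 := inv_ne_zero (Nat.cast_ne_zero.2 hn.ne')
    have ha : a ≠ 0 := by rintro rfl; exact ht (tmul_zero _ _)
    obtain ⟨x, y, hxc, hyc, hx0, hy0, hxy⟩ := hE a ha
    have hxcomm : ∀ g : E, g * x = x * g := fun g => Semigroup.mem_center_iff.mp hxc g
    have hycomm : ∀ g : E, g * y = y * g := fun g => Semigroup.mem_center_iff.mp hyc g
    refine ⟨(1 : ℚ) ⊗ₜ[ℤ] x, ((n : ℚ))⁻¹ ⊗ₜ[ℤ] y, ?_, ?_, ?_, ?_, ?_⟩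
    · exact Semigroup.mem_center_iff.mpr fun g => aux_tmul_central x hxcomm 1 g
    · exact Semigroup.mem_center_iff.mpr fun g => aux_tmul_central y hycomm _ g
    · exact fun h => hx0 (inj x h)
    · exact fun h => hy0 (injq _ y hnq h)
    · rw [Algebra.TensorProduct.tmul_mul_tmul, mul_one, hxy]
  · intro hQ a ha
    have h1 : (1 : ℚ) ⊗ₜ[ℤ] a ≠ 0 := fun h => ha (inj a h)
    obtain ⟨X, Y, hXc, hYc, hX0, hY0, hXY⟩ := hQ _ h1
    obtain ⟨n, x, hn, rfl⟩ := aux_exists_repr X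
    have hnq : ((n : ℚ))⁻¹ ≠ 0 := inv_ne_zero (Nat.cast_ne_zero.2 hn.ne')
    have hx0 : x ≠ 0 := by rintro rfl; exact hX0 (tmul_zero _ _)
    have hYrep : Y = ((n : ℚ))⁻¹ ⊗ₜ[ℤ] (a * x) := by
      rw [← hXY, Algebra.TensorProduct.tmul_mul_tmul, one_mul]
    have key : ∀ (T : ℚ ⊗[ℤ] E) (z : E), T ∈ Set.center (ℚ ⊗[ℤ] E) →
        T = ((n : ℚ))⁻¹ ⊗ₜ[ℤ] z → ∀ g : E, g * z = z * g := by
      intro T z hTc hT g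
      have := Semigroup.mem_center_iff.mp hTc ((1 : ℚ) ⊗ₜ[ℤ] g)
      rw [hT, Algebra.TensorProduct.tmul_mul_tmul, Algebra.TensorProduct.tmul_mul_tmul,
        one_mul, mul_one] at this
      have hsub : ((n : ℚ))⁻¹ ⊗ₜ[ℤ] (g * z - z * g) = 0 := by
        rw [tmul_sub, this, sub_self]
      exact sub_eq_zero.mp (injq _ _ hnq hsub)
    refine ⟨x, a * x, ?_, ?_, hx0, ?_, rfl⟩
    · exact Semigroup.mem_center_iff.mpr fun g => key _ x hXc rfl g
    · exact Semigroup.mem_center_iff.mpr fun g => key _ (a * x) hYc hYrep g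
    · rintro h
      exact hY0 (by rw [hYrep, h, tmul_zero])
end

section
/- Let A be a strongly indecomposable torsion-free abelian group with A = PSoc(A). Then the endomorphism ring End(A) is centrally essential if and only if End(A) is commutative. -/
/-- A subgroup `B` of an abelian group `A` is pure if every equation `n • x = b` (`b ∈ B`,
`n > 0`) solvable in `A` is solvable in `B`. -/
def IsPureSubgroup {A : Type*} [AddCommGroup A] (B : AddSubgroup A) : Prop :=
  ∀ n : ℕ, 0 < n → ∀ b ∈ B, (∃ x : A, n • x = b) → ∃ y ∈ B, n • y = b

/-- A subgroup `B` of an abelian group `A` is fully invariant if it is stable under every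
endomorphism of `A`. -/
def IsFullyInvariant {A : Type*} [AddCommGroup A] (B : AddSubgroup A) : Prop :=
  ∀ f : AddMonoid.End A, ∀ b ∈ B, f b ∈ B

/-- A minimal nonzero pure fully invariant subgroup. -/
def IsMinimalPureFullyInvariant {A : Type*} [AddCommGroup A] (B : AddSubgroup A) : Prop :=
  B ≠ ⊥ ∧ IsPureSubgroup B ∧ IsFullyInvariant B ∧
    ∀ C : AddSubgroup A, C ≠ ⊥ → IsPureSubgroup C → IsFullyInvariant C → C ≤ B → C = B

/-- The pseudo-socle of `A`: the smallest pure subgroup containing all minimal nonzero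
pure fully invariant subgroups of `A`. -/
def PSoc (A : Type*) [AddCommGroup A] : AddSubgroup A :=
  sInf {P : AddSubgroup A | IsPureSubgroup P ∧
    sSup {B : AddSubgroup A | IsMinimalPureFullyInvariant B} ≤ P}

/-- A torsion-free abelian group `A` is strongly indecomposable if there are no nonzero
subgroups `B, C` with `B ∩ C = 0` and `n • A ⊆ B + C` for some positive integer `n`. -/
def StronglyIndecomposable (A : Type*) [AddCommGroup A] : Prop :=
  ¬∃ B C : AddSubgroup A, B ≠ ⊥ ∧ C ≠ ⊥ ∧ B ⊓ C = ⊥ ∧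
    ∃ n : ℕ, 0 < n ∧ ∀ a : A, n • a ∈ B ⊔ C

section CEaux

variable {A : Type*} [AddCommGroup A]

private lemma ce_cancel (htf : ∀ (n : ℕ) (a : A), 0 < n → n • a = 0 → a = 0)
    {n : ℕ} (hn : 0 < n) {u v : A} (h : n • u = n • v) : u = v := by
  have := htf n (u - v) hn (by rw [smul_sub, h, sub_self])
  exact sub_eq_zero.mp this

private lemma ce_pure_mem (htf : ∀ (n : ℕ) (a : A), 0 < n → n • a = 0 → a = 0)
    {B : AddSubgroup A} (hB : IsPureSubgroup B)
    {n : ℕ} (hn : 0 < n) {a : A} (h : n • a ∈ B) : a ∈ B := by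
  obtain ⟨y, hy, hyn⟩ := hB n hn _ h ⟨a, rfl⟩
  exact (ce_cancel htf hn hyn) ▸ hy

/-- On a minimal pure fully invariant subgroup `B`, any endomorphism `z` commuting
with everything on `B` and not vanishing on `B` has pure-dense image in `B`. -/
private lemma ce_dense (htf : ∀ (n : ℕ) (a : A), 0 < n → n • a = 0 → a = 0)
    {B : AddSubgroup A} (hB : IsMinimalPureFullyInvariant B)
    (z : AddMonoid.End A)
    (hcomm : ∀ h : AddMonoid.End A, ∀ b ∈ B, h (z b) = z (h b))
    (hnz : ∃ b ∈ B, z b ≠ 0) :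
    ∀ b ∈ B, ∃ n : ℕ, 0 < n ∧ ∃ c ∈ B, n • b = z c := by
  obtain ⟨hBbot, hBpure, hBfi, hBmin⟩ := hB
  set C : AddSubgroup A :=
    { carrier := {a | ∃ n : ℕ, 0 < n ∧ ∃ c ∈ B, n • a = z c}
      zero_mem' := ⟨1, one_pos, 0, B.zero_mem, by simp⟩
      add_mem' := by
        rintro a a' ⟨n, hn, c, hcB, e⟩ ⟨m, hm, c2, hc2, e2⟩
        refine ⟨n * m, Nat.mul_pos hn hm, m • c + n • c2,
          B.add_mem (B.nsmul_mem hcB m) (B.nsmul_mem hc2 n), ?_⟩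
        have h1 : (n * m) • (a + a') = m • (n • a) + n • (m • a') := by
          rw [smul_add, ← mul_smul, ← mul_smul, Nat.mul_comm m n]
        rw [h1, e, e2, ← map_nsmul, ← map_nsmul, ← map_add]
      neg_mem' := by
        rintro a ⟨n, hn, c, hcB, e⟩
        exact ⟨n, hn, -c, B.neg_mem hcB, by rw [map_neg, ← e, smul_neg]⟩ } with hCdef
  have hCB : C ≤ B := by
    rintro a ⟨n, hn, c, hcB, e⟩
    exact ce_pure_mem htf hBpure hn (e ▸ hBfi z c hcB)
  have hCpure : IsPureSubgroup C := by
    rintro n hn b hb ⟨x, hx⟩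
    obtain ⟨m, hm, c, hcB, e⟩ := hb
    exact ⟨x, ⟨m * n, Nat.mul_pos hm hn, c, hcB, by rw [mul_smul, hx, e]⟩, hx⟩
  have hCfi : IsFullyInvariant C := by
    rintro fh a ⟨n, hn, c, hcB, e⟩
    exact ⟨n, hn, fh c, hBfi fh c hcB, by rw [← map_nsmul fh, e, hcomm fh c hcB]⟩
  have hCbot : C ≠ ⊥ := by
    obtain ⟨b, hb, hzb⟩ := hnz
    intro h
    have hmem : z b ∈ C := ⟨1, one_pos, b, hb, one_smul ℕ _⟩
    rw [h, AddSubgroup.mem_bot] at hmem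
    exact hzb hmem
  have hCeq : C = B := hBmin C hCbot hCpure hCfi hCB
  intro b hb
  have : b ∈ C := hCeq ▸ hb
  exact this

/-- If a central-like endomorphism vanishes on all minimal pure fully invariant
subgroups, it is zero (using `PSoc A = ⊤`). -/
private lemma ce_exists_min (htf : ∀ (n : ℕ) (a : A), 0 < n → n • a = 0 → a = 0)
    (hpsoc : PSoc A = ⊤) {z : AddMonoid.End A} (hz : z ≠ 0) :
    ∃ B : AddSubgroup A, IsMinimalPureFullyInvariant B ∧ ∃ b ∈ B, z b ≠ 0 := by
  by_contra hcon
  push_neg at hcon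
  apply hz
  set M := sSup {B : AddSubgroup A | IsMinimalPureFullyInvariant B} with hM
  have hMK : ∀ a ∈ M, z a = 0 := by
    set K : AddSubgroup A :=
      { carrier := {a | z a = 0}
        zero_mem' := map_zero z
        add_mem' := by rintro a a' (ha : z a = 0) (ha' : z a' = 0)
                       show z (a + a') = 0
                       rw [map_add, ha, ha', add_zero]
        neg_mem' := by rintro a (ha : z a = 0)
                       show z (-a) = 0
                       rw [map_neg, ha, neg_zero] }
    have : M ≤ K := sSup_le (fun B hB => fun b hb => hcon B hB b hb)
    exact fun a ha => this ha
  set D : AddSubgroup A :=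
    { carrier := {a | ∃ n : ℕ, 0 < n ∧ n • a ∈ M}
      zero_mem' := ⟨1, one_pos, by simpa using M.zero_mem⟩
      add_mem' := by
        rintro a a' ⟨n, hn, e⟩ ⟨m, hm, e2⟩
        refine ⟨n * m, Nat.mul_pos hn hm, ?_⟩
        have h1 : (n * m) • (a + a') = m • (n • a) + n • (m • a') := by
          rw [smul_add, ← mul_smul, ← mul_smul, Nat.mul_comm m n]
        rw [h1]
        exact M.add_mem (M.nsmul_mem e m) (M.nsmul_mem e2 n)
      neg_mem' := by
        rintro a ⟨n, hn, e⟩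
        exact ⟨n, hn, by rw [smul_neg]; exact M.neg_mem e⟩ }
  have hDpure : IsPureSubgroup D := by
    rintro n hn b hb ⟨x, hx⟩
    obtain ⟨m, hm, e⟩ := hb
    exact ⟨x, ⟨m * n, Nat.mul_pos hm hn, by rw [mul_smul, hx]; exact e⟩, hx⟩
  have hDmem : D ∈ {P : AddSubgroup A | IsPureSubgroup P ∧
      sSup {B : AddSubgroup A | IsMinimalPureFullyInvariant B} ≤ P} :=
    ⟨hDpure, fun b hb => ⟨1, one_pos, by rwa [one_smul]⟩⟩
  have h1 : PSoc A ≤ D := sInf_le hDmem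
  rw [hpsoc] at h1
  refine DFunLike.ext z 0 fun a => ?_
  show z a = 0
  obtain ⟨n, hn, hna⟩ := h1 (AddSubgroup.mem_top a)
  have h2 : z (n • a) = 0 := hMK _ hna
  rw [map_nsmul] at h2
  exact htf n (z a) hn h2

private lemma ce_ident {R : Type*} [Ring R] {d x y : R}
    (hx : ∀ g : R, x * g = g * x) (hy : ∀ g : R, y * g = g * y)
    (hdxy : d * x = y) (h : R) : (h * d - d * h) * x = 0 := by
  have h1 : (h * d - d * h) * x = h * (d * x) - d * (h * x) := by noncomm_ring
  rw [h1, hdxy, ← hx h, ← mul_assoc, hdxy, hy h, sub_self]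

private lemma ce_comm_on (htf : ∀ (n : ℕ) (a : A), 0 < n → n • a = 0 → a = 0)
    {B : AddSubgroup A} {x d : AddMonoid.End A}
    (hdense : ∀ b ∈ B, ∃ n : ℕ, 0 < n ∧ ∃ c ∈ B, n • b = x c)
    (hid : ∀ h : AddMonoid.End A, (h * d - d * h) * x = 0) :
    ∀ h : AddMonoid.End A, ∀ b ∈ B, h (d b) = d (h b) := by
  intro h b hb
  obtain ⟨n, hn, c, hc, e⟩ := hdense b hb
  have h0 : h (d (x c)) - d (h (x c)) = 0 := by
    have := congrArg (fun u : AddMonoid.End A => u c) (hid h)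
    exact this
  rw [← e, map_nsmul, map_nsmul, map_nsmul, map_nsmul, ← smul_sub] at h0
  exact sub_eq_zero.mp (htf n _ hn h0)

end CEaux

/-- for a strongly indecomposable torsion-free abelian group `A` with
`A = PSoc A`, the endomorphism ring of `A` is centrally essential iff it is
commutative. -/
theorem isCentrallyEssential_end_iff_comm_of_psoc_eq_top
    (A : Type*) [AddCommGroup A]
    (htf : ∀ (n : ℕ) (a : A), 0 < n → n • a = 0 → a = 0)
    (hsi : StronglyIndecomposable A) (hpsoc : PSoc A = ⊤) :
    IsCentrallyEssential (AddMonoid.End A) ↔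
      ∀ f g : AddMonoid.End A, f * g = g * f := by
  have hcen : ∀ {z : AddMonoid.End A}, z ∈ Set.center (AddMonoid.End A) →
      ∀ (u : AddMonoid.End A) (a : A), u (z a) = z (u a) := by
    intro z hz u a
    exact (congrArg (fun w : AddMonoid.End A => w a) ((Set.mem_center_iff.mp hz).comm u)).symm
  constructor
  · intro hce f g
    by_contra hne
    have hd0 : f * g - g * f ≠ 0 := sub_ne_zero.mpr hne
    obtain ⟨x, y, hxC, hyC, hx0, hy0, hdx⟩ := hce _ hd0
    set d : AddMonoid.End A := f * g - g * f with hddef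
    have hxc : ∀ u : AddMonoid.End A, x * u = u * x := fun u => (Set.mem_center_iff.mp hxC).comm u
    have hyc : ∀ u : AddMonoid.End A, y * u = u * y := fun u => (Set.mem_center_iff.mp hyC).comm u
    have hyd : ∀ a : A, y a = d (x a) :=
      fun a => (congrArg (fun w : AddMonoid.End A => w a) hdx).symm
    have hidd : ∀ h : AddMonoid.End A, (h * d - d * h) * x = 0 := fun h => ce_ident hxc hyc hdx h
    -- a minimal pure fully invariant subgroup on which y is nonzero
    obtain ⟨B₁, hB₁, b₁, hb₁, hyb₁⟩ := ce_exists_min htf hpsoc hy0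
    have hdxb₁ : d (x b₁) ≠ 0 := by rw [← hyd]; exact hyb₁
    have hxb₁ : x b₁ ≠ 0 := fun h => hdxb₁ (by rw [h, map_zero])
    have hxd₁ := ce_dense htf hB₁ x (fun h b _ => hcen hxC h b) ⟨b₁, hb₁, hxb₁⟩
    have hcd₁ : ∀ h : AddMonoid.End A, ∀ b ∈ B₁, h (d b) = d (h b) := ce_comm_on htf hxd₁ hidd
    have hxb₁B : x b₁ ∈ B₁ := hB₁.2.2.1 x b₁ hb₁
    have hdd₁ := ce_dense htf hB₁ d hcd₁ ⟨x b₁, hxb₁B, hdxb₁⟩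
    have hyd₁ := ce_dense htf hB₁ y (fun h b _ => hcen hyC h b) ⟨b₁, hb₁, hyb₁⟩
    -- f is nonzero on B₁
    have hfB₁ : ∃ b ∈ B₁, f b ≠ 0 := by
      by_contra hcon
      push_neg at hcon
      apply hdxb₁
      have h1 : g (x b₁) ∈ B₁ := hB₁.2.2.1 g _ hxb₁B
      show f (g (x b₁)) - g (f (x b₁)) = 0
      rw [hcon _ h1, hcon _ hxb₁B, map_zero, sub_zero]
    obtain ⟨b₂, hb₂, hfb₂⟩ := hfB₁
    obtain ⟨n₁, hn₁, c₁, hc₁, e₁⟩ := hdd₁ b₂ hb₂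
    have hfd₁ : f (d c₁) ≠ 0 := by
      rw [← e₁, map_nsmul]
      intro h
      exact hfb₂ (htf n₁ _ hn₁ h)
    -- the second commutator d₂ = [f², g] and d₃ = d₂ * y
    set d₂ : AddMonoid.End A := f * f * g - g * (f * f) with hd₂def
    have hd₂eq : d₂ = f * d + d * f := by rw [hd₂def, hddef]; noncomm_ring
    have hd₂gen : ∀ B' : AddSubgroup A, (∀ h : AddMonoid.End A, ∀ b ∈ B', h (d b) = d (h b)) →
        ∀ b ∈ B', d₂ b = 2 • f (d b) := by
      intro B' hc b hb
      have h1 : d₂ b = f (d b) + d (f b) := by rw [hd₂eq]; rfl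
      rw [h1, ← hc f b hb, ← two_nsmul]
    have hd₂c₁ : d₂ c₁ ≠ 0 := by
      rw [hd₂gen B₁ hcd₁ c₁ hc₁]
      intro h
      exact hfd₁ (htf 2 _ (by norm_num) h)
    obtain ⟨m₁, hm₁, c₂, hc₂, e₂⟩ := hyd₁ c₁ hc₁
    set d₃ : AddMonoid.End A := d₂ * y with hd₃def
    have hd₃c₂ : d₃ c₂ ≠ 0 := by
      show d₂ (y c₂) ≠ 0
      rw [← e₂, map_nsmul]
      intro h
      exact hd₂c₁ (htf m₁ _ hm₁ h)
    have hd₃0 : d₃ ≠ 0 := fun h => hd₃c₂ (by rw [h]; rfl)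
    obtain ⟨x₃, y₃, hx₃C, hy₃C, hx₃0, hy₃0, hd₃x⟩ := hce _ hd₃0
    have hx₃c : ∀ u : AddMonoid.End A, x₃ * u = u * x₃ :=
      fun u => (Set.mem_center_iff.mp hx₃C).comm u
    have hy₃c : ∀ u : AddMonoid.End A, y₃ * u = u * y₃ :=
      fun u => (Set.mem_center_iff.mp hy₃C).comm u
    have hid₃ : ∀ h : AddMonoid.End A, (h * d₃ - d₃ * h) * x₃ = 0 :=
      fun h => ce_ident hx₃c hy₃c hd₃x h
    -- the minimal subgroup B on which everything is alive
    obtain ⟨B, hB, bs, hbs, hy₃b⟩ := ce_exists_min htf hpsoc hy₃0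
    have hval : y₃ bs = d₂ (y (x₃ bs)) :=
      (congrArg (fun w : AddMonoid.End A => w bs) hd₃x).symm
    have hwB : x₃ bs ∈ B := hB.2.2.1 x₃ bs hbs
    have hyw : y (x₃ bs) ≠ 0 := by
      intro h
      apply hy₃b
      rw [hval, h, map_zero]
    have hw0 : x₃ bs ≠ 0 := fun h => hyw (by rw [h, map_zero])
    have hx₃dB := ce_dense htf hB x₃ (fun h b _ => hcen hx₃C h b) ⟨bs, hbs, hw0⟩
    have hydB := ce_dense htf hB y (fun h b _ => hcen hyC h b) ⟨x₃ bs, hwB, hyw⟩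
    have hdxw : d (x (x₃ bs)) ≠ 0 := by rw [← hyd]; exact hyw
    have hxw0 : x (x₃ bs) ≠ 0 := fun h => hdxw (by rw [h, map_zero])
    have hxdB := ce_dense htf hB x (fun h b _ => hcen hxC h b) ⟨x₃ bs, hwB, hxw0⟩
    have hcdB : ∀ h : AddMonoid.End A, ∀ b ∈ B, h (d b) = d (h b) := ce_comm_on htf hxdB hidd
    have hxwB : x (x₃ bs) ∈ B := hB.2.2.1 x _ hwB
    have hddB := ce_dense htf hB d hcdB ⟨x (x₃ bs), hxwB, hdxw⟩
    have hcd₃B : ∀ h : AddMonoid.End A, ∀ b ∈ B, h (d₃ b) = d₃ (h b) := ce_comm_on htf hx₃dB hid₃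
    -- peel off y : d₂ commutes with everything on B
    have hcd₂B : ∀ h : AddMonoid.End A, ∀ b ∈ B, h (d₂ b) = d₂ (h b) := by
      intro h b hb
      obtain ⟨n, hn, c, hc, e⟩ := hydB b hb
      have h1 : h (d₂ (y c)) = d₂ (y (h c)) := hcd₃B h c hc
      rw [← hcen hyC h c] at h1
      have h2 : n • h (d₂ b) = n • d₂ (h b) := by
        calc n • h (d₂ b) = h (d₂ (n • b)) := by rw [map_nsmul, map_nsmul]
          _ = h (d₂ (y c)) := by rw [e]
          _ = d₂ (h (y c)) := h1
          _ = d₂ (h (n • b)) := by rw [e]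
          _ = n • d₂ (h b) := by rw [map_nsmul, map_nsmul]
      exact ce_cancel htf hn h2
    -- hence f commutes with everything on d(B)
    have hfc : ∀ h : AddMonoid.End A, ∀ b ∈ B, h (f (d b)) = f (h (d b)) := by
      intro h b hb
      have hhbB : h b ∈ B := hB.2.2.1 h b hb
      have h1 : h (d₂ b) = d₂ (h b) := hcd₂B h b hb
      rw [hd₂gen B hcdB b hb, hd₂gen B hcdB (h b) hhbB, map_nsmul, ← hcdB h b hb] at h1
      exact ce_cancel htf (by norm_num) h1
    have hddzero : ∀ b ∈ B, d (d b) = 0 := by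
      intro b hb
      have h1 : g (f (d b)) = f (g (d b)) := hfc g b hb
      show f (g (d b)) - g (f (d b)) = 0
      rw [h1, sub_self]
    have hdB0 : ∀ b ∈ B, d b = 0 := by
      intro b hb
      obtain ⟨n, hn, c, hc, e⟩ := hddB b hb
      have h2 : n • d b = 0 := by rw [← map_nsmul, e, hddzero c hc]
      exact htf n _ hn h2
    exact hdxw (hdB0 (x (x₃ bs)) hxwB)
  · intro hcomm a ha
    by_cases hA : ∀ u : A, u = 0
    · exact absurd (DFunLike.ext a 0 fun u => by rw [hA u]; simp) ha
    · push_neg at hA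
      obtain ⟨u, hu⟩ := hA
      refine ⟨1, a, Set.one_mem_center, ?_, ?_, ha, mul_one a⟩
      · exact Set.mem_center_iff.mpr
          ⟨fun b => hcomm a b, fun b c => (mul_assoc a b c).symm,
            fun b c => mul_assoc b c a⟩
      · intro h
        apply hu
        have h2 : (1 : AddMonoid.End A) u = (0 : AddMonoid.End A) u := by rw [h]
        simpa using h2
end

section
/- Let R be a local Artinian ring that is not a division ring, with center C. If R is centrally essential, then the quotient ring R/J(R) is commutative and C ∩ M ≠ 0 for every minimal right ideal M of R. -/
/-- A right ideal of `R`: an additive subgroup stable under right multiplication. -/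
def IsRightIdeal {R : Type*} [Ring R] (M : AddSubgroup R) : Prop :=
  ∀ a ∈ M, ∀ r : R, a * r ∈ M

/-- A minimal right ideal: a nonzero right ideal properly containing no nonzero
right ideal. -/
def IsMinimalRightIdeal {R : Type*} [Ring R] (M : AddSubgroup R) : Prop :=
  M ≠ ⊥ ∧ IsRightIdeal M ∧
    ∀ N : AddSubgroup R, IsRightIdeal N → N ≤ M → N = ⊥ ∨ N = M

/-- In a (possibly noncommutative) local ring, a left multiple of a nonunit
is a nonunit. -/


lemma IsCentrallyEssentialAux.unit_or {R : Type*} [Ring R] [IsLocalRing R] (a : R) :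
    IsUnit a ∨ IsUnit (1 - a) :=
  IsLocalRing.isUnit_or_isUnit_of_add_one (by abel)

/-- In a local ring, a left-invertible element is a unit. -/
lemma IsCentrallyEssentialAux.isUnit_of_left_inv {R : Type*} [Ring R] [IsLocalRing R]
    {b c : R} (hbc : b * c = 1) : IsUnit c := by
  have he : (c * b) * (c * b) = c * b := by
    rw [mul_assoc, ← mul_assoc b, hbc, one_mul]
  rcases IsCentrallyEssentialAux.unit_or (c * b) with hcb | hcb
  · obtain ⟨v, hv⟩ := hcb
    have h0 : (c * b) * (1 - c * b) = 0 := by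
      rw [mul_sub, mul_one, he, sub_self]
    have h1 : (1 - c * b) = 0 := by
      calc (1 - c * b) = ↑v⁻¹ * (↑v * (1 - c * b)) := by
            rw [← mul_assoc, Units.inv_mul, one_mul]
      _ = ↑v⁻¹ * ((c * b) * (1 - c * b)) := by rw [hv]
      _ = 0 := by rw [h0, mul_zero]
    exact ⟨⟨c, b, (sub_eq_zero.mp h1).symm, hbc⟩, rfl⟩
  · obtain ⟨v, hv⟩ := hcb
    have h0 : (1 - c * b) * (c * b) = 0 := by
      rw [sub_mul, one_mul, he, sub_self]
    have h1 : c * b = 0 := by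
      calc c * b = ↑v⁻¹ * (↑v * (c * b)) := by
            rw [← mul_assoc, Units.inv_mul, one_mul]
      _ = ↑v⁻¹ * ((1 - c * b) * (c * b)) := by rw [hv]
      _ = 0 := by rw [h0, mul_zero]
    have hc0 : c = 0 := by
      calc c = c * (b * c) := by rw [hbc, mul_one]
      _ = (c * b) * c := by rw [mul_assoc]
      _ = 0 := by rw [h1, zero_mul]
    exact absurd (by rw [hc0, mul_zero] at hbc; exact hbc) (zero_ne_one (α := R))

/-- In a (possibly noncommutative) local ring, a left multiple of a nonunit
is a nonunit. -/
lemma IsCentrallyEssentialAux.nonunit_mul {R : Type*} [Ring R] [IsLocalRing R]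
    (r c : R) (hc : ¬IsUnit c) : ¬IsUnit (r * c) := by
  intro h
  obtain ⟨u, hu⟩ := h
  have hbc : (↑u⁻¹ * r) * c = 1 := by
    rw [mul_assoc, ← hu, Units.inv_mul]
  exact hc (IsCentrallyEssentialAux.isUnit_of_left_inv hbc)

/-- In a (possibly noncommutative) local ring, every nonunit lies in the
Jacobson radical. -/
lemma IsCentrallyEssentialAux.mem_jacobson {R : Type*} [Ring R] [IsLocalRing R]
    (c : R) (hc : ¬IsUnit c) : c ∈ Ideal.jacobson (⊥ : Ideal R) := by
  rw [Ideal.jacobson, Ideal.mem_sInf]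
  rintro J ⟨-, hJmax⟩
  by_contra hcJ
  have htop : J ⊔ Ideal.span {c} = ⊤ := by
    apply hJmax.out.2
    rw [left_lt_sup]
    intro hle
    exact hcJ (hle (Ideal.subset_span (Set.mem_singleton c)))
  have h1 : (1 : R) ∈ J ⊔ Ideal.span {c} := htop ▸ Submodule.mem_top
  obtain ⟨i, hiJ, z, hz, hiz⟩ := Submodule.mem_sup.mp h1
  obtain ⟨r, hr⟩ := Ideal.mem_span_singleton'.mp hz
  have hi : i = 1 - r * c := eq_sub_of_add_eq (by rw [hr]; exact hiz)
  have hiu : IsUnit i := by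
    rcases IsCentrallyEssentialAux.unit_or (r * c) with h | h
    · exact absurd h (IsCentrallyEssentialAux.nonunit_mul r c hc)
    · rwa [← hi] at h
  exact hJmax.ne_top (Ideal.eq_top_of_isUnit_mem J hiJ hiu)

/-- if a local Artinian ring `R` which is not a division ring is centrally
essential, then `R/J(R)` is commutative and `C(R) ∩ M ≠ 0` for every minimal right
ideal `M`. -/
theorem comm_mod_jacobson_and_center_meets_minimal_of_isCentrallyEssential
    (R : Type*) [Ring R] [IsLocalRing R] [IsArtinianRing R]
    (hnd : ∃ a : R, a ≠ 0 ∧ ¬IsUnit a)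
    (hce : IsCentrallyEssential R) :
    (∀ a b : R, a * b - b * a ∈ Ideal.jacobson (⊥ : Ideal R)) ∧
      ∀ M : AddSubgroup R, IsMinimalRightIdeal M →
        ∃ x : R, x ≠ 0 ∧ x ∈ Set.center R ∧ x ∈ M := by
  obtain ⟨a₀, ha₀, -⟩ := hnd
  haveI : Nontrivial R := nontrivial_of_ne a₀ 0 ha₀
  constructor
  · -- first part: commutators lie in the Jacobson radical
    -- Choose a minimal nonzero left ideal L
    obtain ⟨L, hLne, hLmin⟩ :=
      IsArtinian.set_has_minimal {I : Submodule R R | I ≠ ⊥}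
        ⟨⊤, by simp [bot_lt_top.ne']⟩
    simp only [Set.mem_setOf_eq] at hLne hLmin
    obtain ⟨l₀, hl₀L, hl₀⟩ := Submodule.ne_bot_iff L |>.mp hLne
    -- L is generated by any of its nonzero elements, in particular by l₀
    have hspan : Submodule.span R {l₀} = L := by
      have hle : Submodule.span R {l₀} ≤ L := by
        rw [Submodule.span_le, Set.singleton_subset_iff]; exact hl₀L
      have hb : Submodule.span R {l₀} ≠ ⊥ := by
        intro h
        have hmem : l₀ ∈ Submodule.span R {l₀} := Submodule.mem_span_singleton_self l₀
        rw [h, Submodule.mem_bot] at hmem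
        exact hl₀ hmem
      by_contra hne
      exact hLmin _ hb (lt_of_le_of_ne hle hne)
    -- central nonunits annihilate L
    have keyA : ∀ x ∈ Set.center R, ¬IsUnit x → ∀ l ∈ L, x * l = 0 := by
      intro x hxc hxm
      have hxcomm : ∀ g : R, g * x = x * g := Semigroup.mem_center_iff.mp hxc
      set N : Submodule R R :=
        { carrier := {y | ∃ l ∈ L, x * l = y}
          add_mem' := by
            rintro u v ⟨l, hl, rfl⟩ ⟨m, hm, rfl⟩
            exact ⟨l + m, L.add_mem hl hm, by rw [mul_add]⟩
          zero_mem' := ⟨0, L.zero_mem, by rw [mul_zero]⟩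
          smul_mem' := by
            rintro r u ⟨l, hl, rfl⟩
            refine ⟨r * l, L.smul_mem r hl, ?_⟩
            simp only [smul_eq_mul]
            rw [← mul_assoc, ← hxcomm r, mul_assoc] } with hN
      have hNle : N ≤ L := by
        rintro u ⟨l, hl, rfl⟩
        simpa using L.smul_mem x hl
      rcases eq_or_ne N ⊥ with hbot | hnb
      · intro l hl
        have : x * l ∈ N := ⟨l, hl, rfl⟩
        rwa [hbot, Submodule.mem_bot] at this
      · exfalso
        have hNL : N = L := by
          by_contra hne
          exact hLmin _ hnb (lt_of_le_of_ne hNle hne)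
        have hl₀N : l₀ ∈ N := hNL ▸ hl₀L
        obtain ⟨l, hl, hxl⟩ := hl₀N
        obtain ⟨r, rfl⟩ := Submodule.mem_span_singleton.mp (hspan ▸ hl)
        have hmem : ¬IsUnit (x * r) := by
          rw [← hxcomm r]
          exact IsCentrallyEssentialAux.nonunit_mul r x hxm
        have hu : IsUnit (1 - x * r) := by
          rcases IsCentrallyEssentialAux.unit_or (x * r) with h | h
          · exact absurd h hmem
          · exact h
        obtain ⟨u, hu'⟩ := hu
        have hz : (1 - x * r) * l₀ = 0 := by
          have hx' : x * (r • l₀) = x * r * l₀ := by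
            simp [smul_eq_mul, mul_assoc]
          rw [sub_mul, one_mul, sub_eq_zero]
          rw [hx'] at hxl
          exact hxl.symm
        apply hl₀
        calc l₀ = ↑u⁻¹ * (↑u * l₀) := by rw [← mul_assoc, Units.inv_mul, one_mul]
        _ = ↑u⁻¹ * ((1 - x * r) * l₀) := by rw [hu']
        _ = 0 := by rw [hz, mul_zero]
    -- every element of L is central
    have keyB : ∀ l ∈ L, l ∈ Set.center R := by
      intro l hl
      rcases eq_or_ne l 0 with rfl | hl0
      · exact Set.zero_mem_center
      obtain ⟨x, y, hxc, hyc, hx0, hy0, hxy⟩ := hce l hl0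
      have hxcomm : ∀ g : R, g * x = x * g := Semigroup.mem_center_iff.mp hxc
      have hycomm : ∀ g : R, g * y = y * g := Semigroup.mem_center_iff.mp hyc
      have hxu : IsUnit x := by
        by_contra hnu
        apply hy0
        rw [← hxy, hxcomm l]
        exact keyA x hxc hnu l hl
      obtain ⟨u, rfl⟩ := hxu
      have hlval : l = y * ↑u⁻¹ := by
        rw [Units.eq_mul_inv_iff_mul_eq]; exact hxy
      have huinv : ∀ g : R, g * ↑u⁻¹ = ↑u⁻¹ * g := by
        intro g
        calc g * ↑u⁻¹ = ↑u⁻¹ * (↑u * g) * ↑u⁻¹ := by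
              rw [← mul_assoc, Units.inv_mul, one_mul]
        _ = ↑u⁻¹ * (g * ↑u) * ↑u⁻¹ := by rw [← hxcomm g]
        _ = ↑u⁻¹ * g := by
              rw [mul_assoc (↑u⁻¹ : R), mul_assoc, Units.mul_inv, mul_one]
      rw [Semigroup.mem_center_iff]
      intro g
      rw [hlval, ← mul_assoc, hycomm g, mul_assoc, huinv g, ← mul_assoc]
    -- l₀ is a nonzero central element annihilating all commutators
    have hl₀c : ∀ g : R, g * l₀ = l₀ * g :=
      Semigroup.mem_center_iff.mp (keyB l₀ hl₀L)
    intro a b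
    have hla : l₀ * a ∈ L := by
      rw [← hl₀c a]; simpa using L.smul_mem a hl₀L
    have hlac : ∀ g : R, g * (l₀ * a) = (l₀ * a) * g :=
      Semigroup.mem_center_iff.mp (keyB _ hla)
    have hann : l₀ * (a * b - b * a) = 0 := by
      rw [mul_sub, sub_eq_zero]
      calc l₀ * (a * b) = (l₀ * a) * b := by rw [mul_assoc]
      _ = b * (l₀ * a) := (hlac b).symm
      _ = (b * l₀) * a := by rw [mul_assoc]
      _ = (l₀ * b) * a := by rw [hl₀c b]
      _ = l₀ * (b * a) := by rw [mul_assoc]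
    apply IsCentrallyEssentialAux.mem_jacobson
    intro hu
    obtain ⟨u, hu'⟩ := hu
    apply hl₀
    calc l₀ = l₀ * ↑u * ↑u⁻¹ := by rw [mul_assoc, Units.mul_inv, mul_one]
    _ = l₀ * (a * b - b * a) * ↑u⁻¹ := by rw [hu']
    _ = 0 := by rw [hann, zero_mul]
  · -- second part: the center meets every minimal right ideal
    rintro M ⟨hMne, hMri, -⟩
    obtain ⟨m, hmM, hm⟩ : ∃ m ∈ M, m ≠ 0 := by
      by_contra h
      push_neg at h
      refine hMne ?_
      ext z
      simp only [AddSubgroup.mem_bot]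
      exact ⟨fun hz => h z hz, fun hz => hz ▸ M.zero_mem⟩
    obtain ⟨x, y, hxc, hyc, hx0, hy0, hxy⟩ := hce m hm
    exact ⟨y, hy0, hyc, hxy ▸ hMri m hmM x⟩
end

section
/- Let R be a local Artinian ring that is not a division ring, with center C. If the quotient ring R/J(R) is commutative, the socle of R as a right R-module coincides with the socle of R as a C-module, and C ∩ M ≠ 0 for every minimal right ideal M of R, then R is a centrally essential ring. -/
/-- A `C(R)`-submodule of `R`: an additive subgroup stable under multiplication by
central elements. -/
def IsCenterSubmodule {R : Type*} [Ring R] (M : AddSubgroup R) : Prop :=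
  ∀ a ∈ M, ∀ c ∈ Set.center R, c * a ∈ M

/-- A minimal (simple) `C(R)`-submodule of `R`. -/
def IsMinimalCenterSubmodule {R : Type*} [Ring R] (M : AddSubgroup R) : Prop :=
  M ≠ ⊥ ∧ IsCenterSubmodule M ∧
    ∀ N : AddSubgroup R, IsCenterSubmodule N → N ≤ M → N = ⊥ ∨ N = M

/-- The socle of `R` as a right `R`-module: the sum of all minimal right ideals. -/
def rightSocle (R : Type*) [Ring R] : AddSubgroup R :=
  sSup {M : AddSubgroup R | IsMinimalRightIdeal M}

/-- The socle of `R` as a module over its center: the sum of all simple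
`C(R)`-submodules of `R`. -/
def centerSocle (R : Type*) [Ring R] : AddSubgroup R :=
  sSup {M : AddSubgroup R | IsMinimalCenterSubmodule M}



section CEAux

variable {R : Type*} [Ring R]

private def Jac (R : Type*) [Ring R] : Ideal R := Ideal.jacobson (⊥ : Ideal R)

private lemma ce_isUnit_of_mul_eq_one [IsLocalRing R] {x y : R} (h : x * y = 1) :
    IsUnit x ∧ IsUnit y := by
  have he : (y * x) * (y * x) = y * x := by
    rw [mul_assoc, ← mul_assoc x y x, h, one_mul]
  rcases IsLocalRing.isUnit_or_isUnit_of_add_one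
      (show (y * x) + (1 - y * x) = 1 by abel) with hu | hu
  · have h1 : y * x = 1 := hu.mul_left_cancel (by rw [he, mul_one])
    exact ⟨⟨⟨x, y, h, h1⟩, rfl⟩, ⟨⟨y, x, h1, h⟩, rfl⟩⟩
  · exfalso
    have h0 : (1 - y * x) * y = 0 := by
      rw [sub_mul, one_mul, mul_assoc, h, mul_one, sub_self]
    have hy0 : y = 0 := hu.mul_left_cancel (by rw [h0, mul_zero])
    rw [hy0, mul_zero] at h
    exact zero_ne_one h

private lemma ce_mem_jac [IsLocalRing R] {x : R} (h : ¬IsUnit x) : x ∈ Jac R := by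
  refine Submodule.mem_sInf.2 ?_
  rintro Mx ⟨-, hMx⟩
  by_contra hx
  have hlt : Mx < Mx ⊔ Ideal.span {x} := by
    refine lt_of_le_of_ne le_sup_left fun hEq => hx ?_
    have hxmem : x ∈ Mx ⊔ Ideal.span {x} :=
      Submodule.mem_sup_right (Submodule.mem_span_singleton_self x)
    rwa [← hEq] at hxmem
  have htop : Mx ⊔ Ideal.span {x} = ⊤ := hMx.1.2 _ hlt
  have h1 : (1 : R) ∈ Mx ⊔ Ideal.span {x} := htop ▸ Submodule.mem_top
  obtain ⟨m, hm, s, hs, hms⟩ := Submodule.mem_sup.1 h1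
  obtain ⟨r, hr⟩ := Submodule.mem_span_singleton.1 hs
  rcases IsLocalRing.isUnit_or_isUnit_of_add_one hms with hu | hu
  · exact hMx.ne_top (Ideal.eq_top_of_isUnit_mem _ hm hu)
  · obtain ⟨u, hu'⟩ := hu
    have hrx : r * x = (u : R) := by rw [← smul_eq_mul, hr, hu']
    have hx1 : ((↑u⁻¹ : R) * r) * x = 1 := by
      rw [mul_assoc, hrx, u.inv_mul]
    exact h (ce_isUnit_of_mul_eq_one hx1).2

private lemma ce_not_isUnit_of_mem_jac [IsLocalRing R] {x : R} (h : x ∈ Jac R) : ¬IsUnit x := by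
  obtain ⟨Mx, hMx⟩ := Ideal.exists_maximal R
  intro hu
  have hle : Jac R ≤ Mx := sInf_le ⟨bot_le, hMx⟩
  exact hMx.ne_top (Ideal.eq_top_of_isUnit_mem _ (hle h) hu)

private lemma ce_jac_mul_mem [IsLocalRing R] {j : R} (hj : j ∈ Jac R) (r : R) :
    j * r ∈ Jac R := by
  apply ce_mem_jac
  intro hu
  obtain ⟨u, hu'⟩ := hu
  have h1 : j * (r * (↑u⁻¹ : R)) = 1 := by rw [← mul_assoc, ← hu', u.mul_inv]
  exact ce_not_isUnit_of_mem_jac hj (ce_isUnit_of_mul_eq_one h1).1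

private def Jpow (R : Type*) [Ring R] : ℕ → Ideal R
  | 0 => ⊤
  | n + 1 => Jac R • Jpow R n

@[simp] private lemma Jpow_zero : Jpow R 0 = ⊤ := rfl

@[simp] private lemma Jpow_succ (n : ℕ) : Jpow R (n + 1) = Jac R • Jpow R n := rfl

private lemma ce_jpow_mul_mem [IsLocalRing R] (n : ℕ) :
    ∀ x ∈ Jpow R n, ∀ r : R, x * r ∈ Jpow R n := by
  induction n with
  | zero => intro x _ r; exact Submodule.mem_top
  | succ n ih =>
    intro x hx r
    rw [Jpow_succ] at hx ⊢
    refine Submodule.smul_induction_on (p := fun w => w * r ∈ Jac R • Jpow R n) hx ?_ ?_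
    · intro i hi y hy
      have h1 : i • y * r = i • (y * r) := by
        rw [smul_eq_mul, smul_eq_mul, mul_assoc]
      rw [h1]
      exact Submodule.smul_mem_smul hi (ih y hy r)
    · intro y z hy hz
      rw [add_mul]
      exact Submodule.add_mem _ hy hz

private lemma ce_jpow_mul_jac_mem [IsLocalRing R] (n : ℕ) :
    ∀ x ∈ Jpow R n, ∀ j ∈ Jac R, x * j ∈ Jpow R (n + 1) := by
  induction n with
  | zero =>
    intro x _ j hj
    have h1 : x * j ∈ Jac R := Ideal.mul_mem_left _ x hj
    have h2 : (x * j) • (1 : R) ∈ Jac R • (⊤ : Ideal R) :=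
      Submodule.smul_mem_smul h1 Submodule.mem_top
    simpa using h2
  | succ n ih =>
    intro x hx j hj
    rw [Jpow_succ] at hx
    rw [Jpow_succ]
    refine Submodule.smul_induction_on
      (p := fun w => w * j ∈ Jac R • Jpow R (n + 1)) hx ?_ ?_
    · intro i hi y hy
      have h1 : i • y * j = i • (y * j) := by
        rw [smul_eq_mul, smul_eq_mul, mul_assoc]
      rw [h1]
      exact Submodule.smul_mem_smul hi (ih y hy j hj)
    · intro y z hy hz
      rw [add_mul]
      exact Submodule.add_mem _ hy hz

private lemma ce_exists_jpow_bot [IsLocalRing R] [IsArtinianRing R] :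
    ∃ n, Jpow R n = ⊥ := by
  have hanti : Antitone (fun n => Jpow R n) :=
    antitone_nat_of_succ_le fun n =>
      Submodule.smul_le.2 fun r _ x hx => Submodule.smul_mem _ r hx
  obtain ⟨n, hn⟩ := IsArtinian.monotone_stabilizes
    (⟨fun n => OrderDual.toDual (Jpow R n), fun _ _ h => hanti h⟩ : ℕ →o (Ideal R)ᵒᵈ)
  have hstab : ∀ m, n ≤ m → Jpow R n = Jpow R m := fun m hm => hn m hm
  set I : Ideal R := Jpow R (n + 1) with hIdef
  have hJI : Jac R • I = I := by
    have e1 : Jpow R n = Jpow R (n + 1) := hstab (n + 1) (Nat.le_succ n)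
    have e2 : Jpow R n = Jpow R (n + 2) := hstab (n + 2) (by omega)
    show Jpow R (n + 2) = Jpow R (n + 1)
    rw [← e1, ← e2]
  have hIJ : I ≤ Jac R := by
    rw [hIdef, Jpow_succ]
    refine Submodule.smul_le.2 fun r hr x _ => ?_
    rw [smul_eq_mul]
    exact ce_jac_mul_mem hr x
  have hII : I • I = I := by
    have hk : ∀ k, Jpow R k • I = I := by
      intro k
      induction k with
      | zero => exact Submodule.top_smul I
      | succ k ih =>
        rw [Jpow_succ, Submodule.smul_assoc, ih, hJI]
    exact hk (n + 1)
  have hIbot : I = ⊥ := by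
    by_contra hIne
    set S : Set (Ideal R) := {N | I • N ≠ ⊥} with hSdef
    have hStop : (⊤ : Ideal R) ∈ S := by
      intro h0
      apply hIne
      refine (Submodule.eq_bot_iff _).2 fun x hx => ?_
      have hmem : x • (1 : R) ∈ I • (⊤ : Ideal R) :=
        Submodule.smul_mem_smul hx Submodule.mem_top
      rw [h0] at hmem
      simpa using hmem
    obtain ⟨N, hNS, hNmin⟩ := IsArtinian.set_has_minimal S ⟨⊤, hStop⟩
    have hex : ∃ x ∈ N, I • Ideal.span {x} ≠ ⊥ := by
      by_contra hc
      push_neg at hc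
      apply hNS
      refine (Submodule.eq_bot_iff _).2 fun y hy => ?_
      refine Submodule.smul_induction_on (p := fun w => w = 0) hy ?_ ?_
      · intro i hi m hm
        have hmem : i • m ∈ I • Ideal.span {m} :=
          Submodule.smul_mem_smul hi (Submodule.mem_span_singleton_self m)
        rw [hc m hm] at hmem
        simpa using hmem
      · intro y z hy0 hz0
        rw [hy0, hz0, add_zero]
    obtain ⟨x, hxN, hxS⟩ := hex
    have hN'S : (I • Ideal.span {x}) ∈ S := by
      show I • (I • Ideal.span {x}) ≠ ⊥
      rw [← Submodule.smul_assoc, hII]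
      exact hxS
    have hN'le : I • Ideal.span {x} ≤ N :=
      Submodule.smul_le.2 fun i _ m hm =>
        Submodule.smul_mem N i
          (Submodule.span_le.2 (Set.singleton_subset_iff.2 hxN) hm)
    have hEq : I • Ideal.span {x} = N :=
      hN'le.lt_or_eq.resolve_left (hNmin _ hN'S)
    have hxmem : x ∈ I • Ideal.span {x} := by rw [hEq]; exact hxN
    have hexe : ∃ e ∈ I, e * x = x := by
      refine Submodule.smul_induction_on (p := fun w => ∃ e ∈ I, e * x = w) hxmem ?_ ?_
      · intro i hi m hm
        obtain ⟨r, hr⟩ := Submodule.mem_span_singleton.1 hm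
        refine ⟨i * r, ce_jpow_mul_mem (n + 1) i hi r, ?_⟩
        simp only [smul_eq_mul] at hr ⊢
        rw [mul_assoc, hr]
      · rintro y z ⟨e1, he1, hy1⟩ ⟨e2, he2, hy2⟩
        exact ⟨e1 + e2, Submodule.add_mem _ he1 he2, by rw [add_mul, hy1, hy2]⟩
    obtain ⟨e, heI, hexe⟩ := hexe
    have hne : ¬IsUnit e := ce_not_isUnit_of_mem_jac (hIJ heI)
    have hu : IsUnit (1 - e) :=
      (IsLocalRing.isUnit_or_isUnit_of_add_one (show e + (1 - e) = 1 by abel)).resolve_left hne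
    have h0 : (1 - e) * x = 0 := by rw [sub_mul, one_mul, hexe, sub_self]
    have hx0 : x = 0 := hu.mul_left_cancel (by rw [h0, mul_zero])
    apply hxS
    rw [hx0]
    have hsp : Ideal.span ({(0 : R)} : Set R) = ⊥ := by simp
    rw [hsp, Submodule.smul_bot]
  exact ⟨n + 1, hIbot⟩

private def cp (R : Type*) [Ring R] : ℕ → Set R
  | 0 => {1}
  | n + 1 => {y | ∃ c ∈ cp R n, ∃ d, d ∈ Set.center R ∧ d ∈ Jac R ∧ y = c * d}

private lemma ce_cp_center (n : ℕ) : cp R n ⊆ Set.center R := by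
  induction n with
  | zero =>
    intro x hx
    rw [show x = 1 from hx]
    exact Set.one_mem_center
  | succ n ih =>
    rintro y ⟨c, hc, d, hdc, _, rfl⟩
    exact Set.mul_mem_center (ih hc) hdc

private lemma ce_cp_jpow (n : ℕ) : cp R n ⊆ (Jpow R n : Set R) := by
  induction n with
  | zero =>
    intro x _
    exact Submodule.mem_top
  | succ n ih =>
    rintro y ⟨c, hc, d, hdc, hdj, rfl⟩
    have h1 : c * d = d * c := ((Set.mem_center_iff.1 hdc).comm c).symm
    rw [Jpow_succ, SetLike.mem_coe, h1]
    have := Submodule.smul_mem_smul hdj (ih hc)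
    simpa using this

private lemma ce_exists_good [IsLocalRing R] [IsArtinianRing R] {a : R} (ha : a ≠ 0) :
    ∃ c, c ∈ Set.center R ∧ a * c ≠ 0 ∧
      ∀ d, d ∈ Set.center R → d ∈ Jac R → (a * c) * d = 0 := by
  obtain ⟨n, hn⟩ := ce_exists_jpow_bot (R := R)
  have hPn : ∀ c ∈ cp R n, a * c = 0 := by
    intro c hc
    have h1 := ce_cp_jpow n hc
    rw [SetLike.mem_coe, hn] at h1
    rw [(Submodule.mem_bot R).1 h1, mul_zero]
  have hP0 : ¬ (∀ c ∈ cp R 0, a * c = 0) := fun h => ha (by simpa using h 1 rfl)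
  have key : ∀ k, (∀ c ∈ cp R k, a * c = 0) →
      ∃ m, (¬ ∀ c ∈ cp R m, a * c = 0) ∧ (∀ c ∈ cp R (m + 1), a * c = 0) := by
    intro k
    induction k with
    | zero => intro h; exact absurd h hP0
    | succ k ih =>
      intro h
      by_cases hk : ∀ c ∈ cp R k, a * c = 0
      · exact ih hk
      · exact ⟨k, hk, h⟩
  obtain ⟨m, hm1, hm2⟩ := key n hPn
  push_neg at hm1
  obtain ⟨c, hc, hac⟩ := hm1
  refine ⟨c, ce_cp_center m hc, hac, fun d hdc hdj => ?_⟩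
  have h1 : a * (c * d) = 0 := hm2 _ ⟨c, hc, d, hdc, hdj, rfl⟩
  rw [← mul_assoc] at h1
  exact h1

private lemma ce_central_inv {c : R} (hc : c ∈ Set.center R) (u : Rˣ) (huc : (u : R) = c) :
    ((u⁻¹ : Rˣ) : R) ∈ Set.center R := by
  rw [Semigroup.mem_center_iff]
  intro g
  have hcg : c * g = g * c := (Set.mem_center_iff.1 hc).comm g
  calc g * (↑u⁻¹ : R) = ((↑u⁻¹ : R) * c) * (g * ↑u⁻¹) := by rw [← huc, u.inv_mul, one_mul]
    _ = (↑u⁻¹ : R) * ((c * g) * ↑u⁻¹) := by rw [mul_assoc, mul_assoc]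
    _ = (↑u⁻¹ : R) * (g * (c * ↑u⁻¹)) := by rw [hcg, mul_assoc]
    _ = (↑u⁻¹ : R) * g := by rw [← huc, u.mul_inv, mul_one]

private lemma ce_min_right_ideal_central [IsLocalRing R] [IsArtinianRing R]
    (hcomm : ∀ a b : R, a * b - b * a ∈ Ideal.jacobson (⊥ : Ideal R))
    (hmeet : ∀ M : AddSubgroup R, IsMinimalRightIdeal M →
      ∃ x : R, x ≠ 0 ∧ x ∈ Set.center R ∧ x ∈ M)
    {M : AddSubgroup R} (hM : IsMinimalRightIdeal M) :
    ∀ x ∈ M, x ∈ Set.center R := by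
  obtain ⟨hM0, hMri, hMmin⟩ := hM
  -- Step A : M is annihilated by the Jacobson radical on the right
  have hMJ : ∀ x ∈ M, ∀ j ∈ Jac R, x * j = 0 := by
    set gen : Set R := {y | ∃ x ∈ M, ∃ j ∈ Jac R, y = x * j} with hgen
    set MJ := AddSubgroup.closure gen with hMJdef
    have hri : IsRightIdeal MJ := by
      intro y hy r
      refine AddSubgroup.closure_induction (p := fun w _ => w * r ∈ MJ) ?_ ?_ ?_ ?_ hy
      · rintro w ⟨x, hx, j, hj, rfl⟩
        rw [mul_assoc]
        exact AddSubgroup.subset_closure ⟨x, hx, j * r, ce_jac_mul_mem hj r, rfl⟩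
      · show (0 : R) * r ∈ MJ
        rw [zero_mul]; exact zero_mem MJ
      · intro w z _ _ hwr hzr
        rw [add_mul]; exact add_mem hwr hzr
      · intro w _ hwr
        rw [neg_mul]; exact neg_mem hwr
    have hle : MJ ≤ M := by
      rw [hMJdef]
      refine (AddSubgroup.closure_le M).2 ?_
      rintro y ⟨x, hx, j, _, rfl⟩
      exact hMri x hx j
    rcases hMmin MJ hri hle with hbot | heq
    · intro x hx j hj
      have h1 : x * j ∈ MJ := AddSubgroup.subset_closure ⟨x, hx, j, hj, rfl⟩
      rw [hbot] at h1
      exact AddSubgroup.mem_bot.1 h1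
    · exfalso
      obtain ⟨n, hn⟩ := ce_exists_jpow_bot (R := R)
      have hsub : ∀ k, ∀ x ∈ M, x ∈ Jpow R k := by
        intro k
        induction k with
        | zero => intro x _; exact Submodule.mem_top
        | succ k ih =>
          intro x hx
          rw [← heq] at hx
          refine AddSubgroup.closure_induction (p := fun w _ => w ∈ Jpow R (k + 1)) ?_ ?_ ?_ ?_ hx
          · rintro w ⟨x', hx', j, hj, rfl⟩
            exact ce_jpow_mul_jac_mem k x' (ih x' hx') j hj
          · exact Submodule.zero_mem _
          · intro w z _ _ h1 h2; exact Submodule.add_mem _ h1 h2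
          · intro w _ h1; exact Submodule.neg_mem _ h1
      apply hM0
      rw [AddSubgroup.eq_bot_iff_forall]
      intro x hx
      have h1 := hsub n x hx
      rw [hn] at h1
      exact (Submodule.mem_bot R).1 h1
  -- Step B : M = zR for a central z
  obtain ⟨z, hz0, hzc, hzM⟩ := hmeet M ⟨hM0, hMri, hMmin⟩
  set zR : AddSubgroup R :=
    { carrier := {y : R | ∃ r : R, y = z * r}
      zero_mem' := ⟨0, (mul_zero z).symm⟩
      add_mem' := by
        rintro a b ⟨r1, rfl⟩ ⟨r2, rfl⟩
        exact ⟨r1 + r2, (mul_add z r1 r2).symm⟩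
      neg_mem' := by
        rintro a ⟨r, rfl⟩
        exact ⟨-r, (mul_neg z r).symm⟩ } with hzRdef
  have hzRri : IsRightIdeal zR := by
    rintro y ⟨r, rfl⟩ s
    exact ⟨r * s, mul_assoc z r s⟩
  have hzRle : zR ≤ M := by
    rintro y ⟨r, rfl⟩
    exact hMri z hzM r
  have hzRne : zR ≠ ⊥ := by
    intro h
    apply hz0
    have hz : z ∈ zR := ⟨1, (mul_one z).symm⟩
    rw [h] at hz
    exact AddSubgroup.mem_bot.1 hz
  have hzRM : zR = M := (hMmin zR hzRri hzRle).resolve_left hzRne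
  -- Step C : every element of M is central
  intro x hxM
  rw [← hzRM] at hxM
  obtain ⟨r, rfl⟩ := hxM
  rw [Semigroup.mem_center_iff]
  intro g
  have h1 : z * (g * r - r * g) = 0 := hMJ z hzM _ (hcomm g r)
  rw [mul_sub] at h1
  have h2 : z * (g * r) = z * (r * g) := sub_eq_zero.1 h1
  calc g * (z * r) = (g * z) * r := (mul_assoc g z r).symm
    _ = (z * g) * r := by rw [((Set.mem_center_iff.1 hzc).comm g).symm]
    _ = z * (g * r) := mul_assoc z g r
    _ = z * (r * g) := h2
    _ = (z * r) * g := (mul_assoc z r g).symm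

private def centerAdd (R : Type*) [Ring R] : AddSubgroup R :=
  { carrier := Set.center R
    zero_mem' := Set.zero_mem_center
    add_mem' := fun ha hb => Set.add_mem_center ha hb
    neg_mem' := fun ha => Set.neg_mem_center ha }

end CEAux

/-- a local Artinian ring `R` which is not a division ring is centrally
essential provided `R/J(R)` is commutative, `Soc(R_R) = Soc(R_{C(R)})`, and
`C(R) ∩ M ≠ 0` for every minimal right ideal `M`. -/
theorem isCentrallyEssential_of_comm_mod_jacobson
    (R : Type*) [Ring R] [IsLocalRing R] [IsArtinianRing R]
    (hnd : ∃ a : R, a ≠ 0 ∧ ¬IsUnit a)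
    (hcomm : ∀ a b : R, a * b - b * a ∈ Ideal.jacobson (⊥ : Ideal R))
    (hsoc : rightSocle R = centerSocle R)
    (hmeet : ∀ M : AddSubgroup R, IsMinimalRightIdeal M →
      ∃ x : R, x ≠ 0 ∧ x ∈ Set.center R ∧ x ∈ M) :
    IsCentrallyEssential R := by
  intro a ha
  obtain ⟨c, hc, hac, hkill⟩ := ce_exists_good ha
  set b := a * c with hb
  set BC : AddSubgroup R :=
    { carrier := {y | ∃ c', c' ∈ Set.center R ∧ y = b * c'}
      zero_mem' := ⟨0, Set.zero_mem_center, (mul_zero b).symm⟩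
      add_mem' := by
        rintro y z ⟨c1, h1, rfl⟩ ⟨c2, h2, rfl⟩
        exact ⟨c1 + c2, Set.add_mem_center h1 h2, (mul_add b c1 c2).symm⟩
      neg_mem' := by
        rintro y ⟨c1, h1, rfl⟩
        exact ⟨-c1, Set.neg_mem_center h1, (mul_neg b c1).symm⟩ } with hBCdef
  have hbBC : b ∈ BC := ⟨1, Set.one_mem_center, (mul_one b).symm⟩
  have hBCne : BC ≠ ⊥ := by
    intro h
    rw [h] at hbBC
    exact hac (AddSubgroup.mem_bot.1 hbBC)
  have hBCc : IsCenterSubmodule BC := by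
    rintro y ⟨c', hc', rfl⟩ d hd
    refine ⟨d * c', Set.mul_mem_center hd hc', ?_⟩
    rw [← mul_assoc, (Set.mem_center_iff.1 hd).comm b, mul_assoc]
  have hBCmin : IsMinimalCenterSubmodule BC := by
    refine ⟨hBCne, hBCc, fun N hN hNle => ?_⟩
    by_cases hNbot : N = ⊥
    · exact Or.inl hNbot
    right
    have hexx : ∃ x ∈ N, x ≠ 0 := by
      by_contra hcn
      push_neg at hcn
      exact hNbot ((AddSubgroup.eq_bot_iff_forall N).2 hcn)
    obtain ⟨x, hxN, hx0⟩ := hexx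
    obtain ⟨c', hc', hxe⟩ := hNle hxN
    have hcu : IsUnit c' := by
      by_contra hcu
      exact hx0 (by rw [hxe, hkill c' hc' (ce_mem_jac hcu)])
    obtain ⟨u, huc⟩ := hcu
    have hinv : ((u⁻¹ : Rˣ) : R) ∈ Set.center R := ce_central_inv hc' u huc
    have hbN : b ∈ N := by
      have h1 : ((u⁻¹ : Rˣ) : R) * x ∈ N := hN x hxN _ hinv
      have h3 : c' * ((u⁻¹ : Rˣ) : R) = 1 := by rw [← huc, u.mul_inv]
      have he : ((u⁻¹ : Rˣ) : R) * x = b := by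
        rw [(Set.mem_center_iff.1 hinv).comm x, hxe, mul_assoc, h3, mul_one]
      rwa [he] at h1
    refine le_antisymm hNle fun y hy => ?_
    obtain ⟨c'', hc'', rfl⟩ := hy
    have h1 : c'' * b ∈ N := hN b hbN c'' hc''
    rwa [(Set.mem_center_iff.1 hc'').comm b] at h1
  have hBCle : BC ≤ centerSocle R :=
    le_sSup (show BC ∈ {M : AddSubgroup R | IsMinimalCenterSubmodule M} from hBCmin)
  have hbsoc : b ∈ centerSocle R := hBCle hbBC
  rw [← hsoc] at hbsoc
  have hbc : b ∈ Set.center R := by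
    have hle : rightSocle R ≤ centerAdd R :=
      sSup_le fun M hM => fun x hx => ce_min_right_ideal_central hcomm hmeet hM x hx
    exact hle hbsoc
  have hc0 : c ≠ 0 := by
    intro h
    apply hac
    rw [hb, h, mul_zero]
  exact ⟨c, b, hc, hbc, hc0, hac, hb.symm⟩
end

section
/- Let R be an Artinian local ring that is not a division ring, let C be its center, and suppose C ∩ M ≠ 0 for every minimal right ideal M of R and the quotient R/J(R) is commutative. Then every minimal right ideal M of R is contained in the center C of R. -/
/-- The additive subgroup `cR`. -/
def leftMulRange {R : Type*} [Ring R] (c : R) : AddSubgroup R where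
  carrier := Set.range (fun r => c * r)
  add_mem' := by
    rintro a b ⟨r, rfl⟩ ⟨t, rfl⟩
    exact ⟨r + t, mul_add c r t⟩
  zero_mem' := ⟨0, mul_zero c⟩
  neg_mem' := by
    rintro a ⟨r, rfl⟩
    exact ⟨-r, mul_neg c r⟩

/-- The additive subgroup `cI` for an ideal `I`. -/
def leftMulImage {R : Type*} [Ring R] (c : R) (I : Ideal R) : AddSubgroup R where
  carrier := (fun t => c * t) '' (I : Set R)
  add_mem' := by
    rintro a b ⟨s, hs, rfl⟩ ⟨t, ht, rfl⟩
    exact ⟨s + t, I.add_mem hs ht, mul_add c s t⟩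
  zero_mem' := ⟨0, I.zero_mem, mul_zero c⟩
  neg_mem' := by
    rintro a ⟨s, hs, rfl⟩
    exact ⟨-s, I.neg_mem hs, mul_neg c s⟩

/-- in a local Artinian ring `R` which is not a division ring, if
`C(R) ∩ M ≠ 0` for every minimal right ideal `M` and `R/J(R)` is commutative, then
every minimal right ideal of `R` is contained in the center of `R`. -/
theorem minimal_right_ideal_subset_center
    (R : Type*) [Ring R] [IsLocalRing R] [IsArtinianRing R]
    (hnd : ∃ a : R, a ≠ 0 ∧ ¬IsUnit a)
    (hmeet : ∀ M : AddSubgroup R, IsMinimalRightIdeal M →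
      ∃ x : R, x ≠ 0 ∧ x ∈ Set.center R ∧ x ∈ M)
    (hcomm : ∀ a b : R, a * b - b * a ∈ Ideal.jacobson (⊥ : Ideal R)) :
    ∀ M : AddSubgroup R, IsMinimalRightIdeal M → ∀ x ∈ M, x ∈ Set.center R := by
  intro M hM x hxM
  obtain ⟨c, hc0, hcC, hcM⟩ := hmeet M hM
  obtain ⟨hMbot, hMri, hMmin⟩ := hM
  have hccomm : ∀ r : R, c * r = r * c := fun r =>
    (Semigroup.mem_center_iff.mp hcC r).symm
  -- the Jacobson radical is closed under right multiplication
  have hJr : ∀ j ∈ Ideal.jacobson (⊥ : Ideal R), ∀ r : R,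
      j * r ∈ Ideal.jacobson (⊥ : Ideal R) := by
    intro j hj r
    have h1 : j * r - r * j ∈ Ideal.jacobson (⊥ : Ideal R) := hcomm j r
    have h2 : r * j ∈ Ideal.jacobson (⊥ : Ideal R) := by
      simpa using Ideal.mul_mem_left _ r hj
    simpa using (Ideal.jacobson (⊥ : Ideal R)).add_mem h1 h2
  -- c * J = 0
  have hcJ : ∀ j ∈ Ideal.jacobson (⊥ : Ideal R), c * j = 0 := by
    intro j hj
    by_contra hne
    set P : AddSubgroup R := leftMulImage c (Ideal.jacobson (⊥ : Ideal R)) with hPdef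
    have hPri : IsRightIdeal P := by
      rintro a ⟨s, hs, rfl⟩ r
      exact ⟨s * r, hJr s hs r, (mul_assoc c s r).symm⟩
    have hPle : P ≤ M := by
      rintro a ⟨s, hs, rfl⟩
      exact hMri c hcM s
    rcases hMmin P hPri hPle with h | h
    · apply hne
      have : c * j ∈ P := ⟨j, hj, rfl⟩
      rw [h] at this
      exact this
    · -- then c ∈ P, so c = c * s with s ∈ J, so c * (1 - s) = 0 and 1 - s is a unit
      have hcP : c ∈ P := h ▸ hcM
      obtain ⟨s, hs, hcs⟩ := hcP
      have hns : ¬ IsUnit s := by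
        rintro ⟨v, rfl⟩
        have h1 : (1 : R) ∈ Ideal.jacobson (⊥ : Ideal R) := by
          have h2 := Ideal.mul_mem_left (Ideal.jacobson (⊥ : Ideal R)) (↑v⁻¹ : R) hs
          simpa using h2
        have hnt : Nontrivial R := ⟨⟨c, 0, hc0⟩⟩
        obtain ⟨m, hm⟩ := Ideal.exists_maximal R
        have hle : Ideal.jacobson (⊥ : Ideal R) ≤ m := sInf_le ⟨bot_le, hm⟩
        exact hm.ne_top ((Ideal.eq_top_iff_one m).mpr (hle h1))
      have hu : IsUnit (1 - s) := by
        rcases IsLocalRing.isUnit_or_isUnit_of_add_one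
          (a := 1 - s) (b := s) (by abel) with h' | h'
        · exact h'
        · exact absurd h' hns
      obtain ⟨u, hu⟩ := hu
      have hcs' : c * s = c := hcs
      have hz : c * (1 - s) = 0 := by
        rw [mul_sub, mul_one, hcs', sub_self]
      have h1 : (1 - s) * (↑u⁻¹ : R) = 1 := by rw [← hu]; exact u.mul_inv
      have : c = 0 := by
        have h2 := congrArg (fun y => y * (↑u⁻¹ : R)) hz
        simpa [mul_assoc, h1] using h2
      exact hc0 this
  -- N = cR equals M
  set N : AddSubgroup R := leftMulRange c with hNdef
  have hNri : IsRightIdeal N := by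
    rintro a ⟨r, rfl⟩ t
    exact ⟨r * t, (mul_assoc c r t).symm⟩
  have hNle : N ≤ M := by
    rintro a ⟨r, rfl⟩
    exact hMri c hcM r
  have hNM : N = M := by
    rcases hMmin N hNri hNle with h | h
    · exfalso
      apply hc0
      have hcN : c ∈ N := ⟨1, mul_one c⟩
      rw [h] at hcN
      exact hcN
    · exact h
  -- now x = c * r for some r, and c * r is central
  have hxN : x ∈ N := hNM ▸ hxM
  obtain ⟨r, hr⟩ := hxN
  have hr' : c * r = x := hr
  rw [Semigroup.mem_center_iff]
  intro g
  have hd : c * (r * g - g * r) = 0 := hcJ _ (hcomm r g)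
  calc g * x = g * (c * r) := by rw [hr']
    _ = c * (g * r) := by rw [← mul_assoc, ← hccomm g, mul_assoc]
    _ = c * (r * g) := by
        have h3 : c * (r * g) - c * (g * r) = 0 := by rw [← mul_sub]; exact hd
        exact (eq_of_sub_eq_zero h3).symm
    _ = (c * r) * g := (mul_assoc c r g).symm
    _ = x * g := by rw [hr']
end

section
/- Let A be a strongly indecomposable torsion-free abelian group of finite rank with quasi-endomorphism ring ℚEnd(A) = ℚ ⊗_ℤ End(A), and suppose A ≠ PSoc(A). If ℚEnd(A) is a centrally essential ring, then the quotient ring ℚEnd(A)/J(ℚEnd(A)) is commutative and C(ℚEnd(A)) ∩ M ≠ 0 for every minimal right ideal M of ℚEnd(A). -/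
open TensorProduct

section GeneralRing
open Polynomial

variable {R : Type*} [Ring R] [Algebra ℚ R]

/-- In a finite-dimensional ℚ-algebra with only trivial idempotents,
every element is a unit or nilpotent. -/
theorem unit_or_nilpotent [FiniteDimensional ℚ R]
    (hid : ∀ e : R, e * e = e → e = 0 ∨ e = 1) (x : R) :
    IsUnit x ∨ IsNilpotent x := by
  have hint : IsIntegral ℚ x := Algebra.IsIntegral.isIntegral x
  set p := minpoly ℚ x with hp
  have hp0 : p ≠ 0 := minpoly.ne_zero hint
  have hpx : aeval x p = 0 := minpoly.aeval ℚ x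
  set k := p.natTrailingDegree with hk
  rcases Nat.eq_zero_or_pos k with hk0 | hkpos
  · -- p.coeff 0 ≠ 0, x is a unit
    left
    have hc0 : p.coeff 0 ≠ 0 := by
      have := Polynomial.coeff_natTrailingDegree_ne_zero.mpr hp0
      rwa [← hk, hk0] at this
    set c := p.coeff 0
    set d := aeval x p.divX with hd
    have hxd : x * d + c • 1 = 0 := by
      have := congrArg (aeval x) (X_mul_divX_add p)
      rw [map_add, aeval_mul, aeval_X, aeval_C, hpx] at this
      rw [← this, hd, Algebra.algebraMap_eq_smul_one]
    have hcomm : Commute x d := by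
      have := (Commute.all (X : ℚ[X]) p.divX).map (aeval x)
      simpa [hd] using this
    have h1 : x * ((-c⁻¹) • d) = 1 := by
      rw [mul_smul_comm]
      have : x * d = -(c • 1) := by linear_combination (norm := noncomm_ring) hxd
      rw [this, smul_neg, neg_smul, neg_neg, smul_smul, inv_mul_cancel₀ hc0, one_smul]
    have h2 : ((-c⁻¹) • d) * x = 1 := by
      rw [smul_mul_assoc, ← hcomm.eq, ← mul_smul_comm]
      exact h1
    exact ⟨⟨x, (-c⁻¹) • d, h1, h2⟩, rfl⟩
  · -- general case: p = X^k * q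
    obtain ⟨q, hq⟩ : (X : ℚ[X]) ^ k ∣ p := by
      rw [X_pow_dvd_iff]
      exact fun d hd => Polynomial.coeff_eq_zero_of_lt_natTrailingDegree (by omega)
    have hq0 : q.coeff 0 ≠ 0 := by
      have h1 : p.coeff k ≠ 0 := Polynomial.coeff_natTrailingDegree_ne_zero.mpr hp0
      have h2 : p.coeff k = q.coeff 0 := by
        rw [hq, mul_comm]
        simpa using Polynomial.coeff_mul_X_pow q k 0
      rwa [h2] at h1
    have hcop : IsCoprime ((X : ℚ[X]) ^ k) q := by
      refine IsCoprime.pow_left ?_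
      exact (Polynomial.prime_X.coprime_iff_not_dvd).mpr (by rwa [Polynomial.X_dvd_iff])
    obtain ⟨a, b, hab⟩ := hcop
    set u := aeval x (a * X ^ k) with hu
    set v := aeval x (b * q) with hv
    have huv1 : u + v = 1 := by
      rw [hu, hv, ← map_add, hab, map_one]
    have huv0 : u * v = 0 := by
      rw [hu, hv, ← aeval_mul]
      have : a * X ^ k * (b * q) = a * b * p := by rw [hq]; ring
      rw [this, aeval_mul, hpx, mul_zero]
    have hidem : u * u = u := by
      have := congrArg (u * ·) huv1
      simp only [mul_add, mul_one, huv0, add_zero] at this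
      exact this
    rcases hid u hidem with h0 | h1
    · -- v = 1, then x^k = 0
      right
      have hv1 : v = 1 := by rw [← huv1, h0, zero_add]
      have hxk : x ^ k * aeval x q = 0 := by
        rw [← aeval_X_pow (R := ℚ) (x := x), ← aeval_mul, ← hq, hpx]
      have : x ^ k = 0 := by
        have hcb : Commute (x ^ k) (aeval x b) := by
          have := (Commute.all ((X : ℚ[X]) ^ k) b).map (aeval x)
          simpa using this
        calc x ^ k = x ^ k * (aeval x b * aeval x q) := by
              rw [← aeval_mul, ← hv, hv1, mul_one]
          _ = aeval x b * (x ^ k * aeval x q) := by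
              rw [← mul_assoc, hcb.eq, mul_assoc]
          _ = 0 := by rw [hxk, mul_zero]
      exact ⟨k, this⟩
    · -- u = 1, x is a unit
      left
      have hxk : aeval x a * x ^ k = 1 := by
        rw [← aeval_X_pow (R := ℚ) (x := x), ← aeval_mul, ← hu, h1]
      have hca : Commute x (aeval x a) := by
        have := (Commute.all (X : ℚ[X]) a).map (aeval x)
        simpa using this
      set s := aeval x a with hs
      have hcs : Commute (x ^ k) s := (hca.symm.pow_right k).symm
      have hxk' : x ^ k * s = 1 := by rw [hcs.eq]; exact hxk
      have hy1 : x * (x ^ (k - 1) * s) = 1 := by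
        rw [← mul_assoc, ← pow_succ', Nat.sub_add_cancel hkpos]
        exact hxk'
      have hy2 : (x ^ (k - 1) * s) * x = 1 := by
        have hcx : Commute s x := hca.symm
        rw [mul_assoc, hcx.eq, ← mul_assoc, ← pow_succ, Nat.sub_add_cancel hkpos]
        exact hxk'
      exact ⟨⟨x, x ^ (k - 1) * s, hy1, hy2⟩, rfl⟩


variable {R : Type*} [Ring R]

section UN
variable [Nontrivial R] (hUN : ∀ x : R, IsUnit x ∨ IsNilpotent x)
include hUN

theorem nonunit_mul_left {x : R} (hx : ¬IsUnit x) (r : R) : ¬IsUnit (r * x) := by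
  intro h
  rcases hUN x with h' | h'
  · exact hx h'
  obtain ⟨n, hn⟩ := h'
  obtain ⟨u, hu⟩ := h
  -- u⁻¹ * (r * x) = 1, so (u⁻¹ * r) * x = 1
  have h1 : ((u⁻¹ : Rˣ) : R) * r * x = 1 := by
    rw [mul_assoc, ← hu, Units.inv_mul]
  set t := ((u⁻¹ : Rˣ) : R) * r
  have key : ∀ m : ℕ, t ^ m * x ^ m = 1 := by
    intro m
    induction m with
    | zero => simp
    | succ m ih =>
      calc t ^ (m + 1) * x ^ (m + 1) = t ^ m * (t * x) * x ^ m := by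
            rw [pow_succ, pow_succ']; noncomm_ring
        _ = 1 := by rw [h1, mul_one, ih]
  have := key n
  rw [hn, mul_zero] at this
  exact one_ne_zero this.symm

theorem nonunit_mul_right {x : R} (hx : ¬IsUnit x) (r : R) : ¬IsUnit (x * r) := by
  intro h
  rcases hUN x with h' | h'
  · exact hx h'
  obtain ⟨n, hn⟩ := h'
  obtain ⟨u, hu⟩ := h
  have h1 : x * (r * ((u⁻¹ : Rˣ) : R)) = 1 := by
    rw [← mul_assoc, ← hu, Units.mul_inv]
  set t := r * ((u⁻¹ : Rˣ) : R)
  have key : ∀ m : ℕ, x ^ m * t ^ m = 1 := by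
    intro m
    induction m with
    | zero => simp
    | succ m ih =>
      calc x ^ (m + 1) * t ^ (m + 1) = x ^ m * (x * t) * t ^ m := by
            rw [pow_succ, pow_succ']; noncomm_ring
        _ = 1 := by rw [h1, mul_one, ih]
  have := key n
  rw [hn, zero_mul] at this
  exact one_ne_zero this.symm

theorem nonunit_add {x y : R} (hx : ¬IsUnit x) (hy : ¬IsUnit y) : ¬IsUnit (x + y) := by
  intro h
  obtain ⟨u, hu⟩ := h
  have h1 : ((u⁻¹ : Rˣ) : R) * x + ((u⁻¹ : Rˣ) : R) * y = 1 := by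
    rw [← mul_add, ← hu, Units.inv_mul]
  have hux : ¬IsUnit (((u⁻¹ : Rˣ) : R) * x) := nonunit_mul_left hUN hx _
  have hnil : IsNilpotent (((u⁻¹ : Rˣ) : R) * x) := (hUN _).resolve_left hux
  have : IsUnit (((u⁻¹ : Rˣ) : R) * y) := by
    have : ((u⁻¹ : Rˣ) : R) * y = 1 - ((u⁻¹ : Rˣ) : R) * x := by
      linear_combination (norm := noncomm_ring) h1
    rw [this]
    exact hnil.isUnit_one_sub
  exact nonunit_mul_left hUN hy _ this

/-- The set of non-units as an ideal. -/
def nonunitsIdeal : Ideal R where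
  carrier := {x | ¬IsUnit x}
  zero_mem' := fun h => not_isUnit_zero h
  add_mem' := fun hx hy => nonunit_add hUN hx hy
  smul_mem' := fun r x hx => by
    simpa only [smul_eq_mul, Set.mem_setOf_eq] using nonunit_mul_left hUN hx r

theorem nonunitsIdeal_isMaximal : (nonunitsIdeal hUN).IsMaximal := by
  constructor
  constructor
  · intro h
    have h1 : (1 : R) ∈ nonunitsIdeal hUN := h ▸ Submodule.mem_top
    exact h1 isUnit_one
  · intro b hb
    obtain ⟨x, hxb, hxn⟩ := SetLike.exists_of_lt hb
    have : IsUnit x := not_not.mp hxn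
    exact Ideal.eq_top_of_isUnit_mem b hxb this

theorem jacobson_bot_eq_nonunits : (⊥ : Ideal R).jacobson = nonunitsIdeal hUN := by
  apply le_antisymm
  · exact sInf_le ⟨bot_le, nonunitsIdeal_isMaximal hUN⟩
  · apply le_sInf
    rintro J ⟨-, hJ⟩
    have hle : J ≤ nonunitsIdeal hUN := by
      intro x hx hu
      exact hJ.ne_top (Ideal.eq_top_of_isUnit_mem J hx hu)
    rcases hle.lt_or_eq with hlt | heq
    · exact absurd (hJ.1.2 _ hlt) (nonunitsIdeal_isMaximal hUN).ne_top
    · exact heq.ge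
end UN

variable [Algebra ℚ R] [Nontrivial R] [FiniteDimensional ℚ R]

theorem exists_central_ann (hUN : ∀ x : R, IsUnit x ∨ IsNilpotent x)
    (hce : IsCentrallyEssential R) :
    ∃ z : R, z ≠ 0 ∧ z ∈ Set.center R ∧ ∀ n : R, ¬IsUnit n → z * n = 0 := by
  suffices H : ∀ d : ℕ, ∀ z : R, z ≠ 0 → z ∈ Set.center R →
      Module.finrank ℚ (LinearMap.range (LinearMap.mulLeft ℚ z)) ≤ d →
      ∃ z' : R, z' ≠ 0 ∧ z' ∈ Set.center R ∧ ∀ n : R, ¬IsUnit n → z' * n = 0 by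
    exact H _ 1 one_ne_zero (Set.one_mem_center) le_rfl
  intro d
  induction d with
  | zero =>
    intro z hz0 _ hd
    exfalso
    have : LinearMap.range (LinearMap.mulLeft ℚ z) = ⊥ :=
      Submodule.finrank_eq_zero.mp (Nat.le_zero.mp hd)
    have hmem : z ∈ LinearMap.range (LinearMap.mulLeft ℚ z) :=
      ⟨1, by simp [LinearMap.mulLeft_apply]⟩
    rw [this] at hmem
    exact hz0 hmem
  | succ d ih =>
    intro z hz0 hzc hd
    by_cases h : ∀ n : R, ¬IsUnit n → z * n = 0
    · exact ⟨z, hz0, hzc, h⟩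
    push_neg at h
    obtain ⟨n, hn, hzn⟩ := h
    obtain ⟨x, y, hx, hy, hx0, hy0, hxy⟩ := hce (z * n) hzn
    have hy0' : y ≠ 0 := hy0
    have hle : LinearMap.range (LinearMap.mulLeft ℚ y) ≤
        LinearMap.range (LinearMap.mulLeft ℚ z) := by
      rintro - ⟨r, rfl⟩
      exact ⟨n * (x * r), by simp only [LinearMap.mulLeft_apply, ← hxy]; noncomm_ring⟩
    have hlt : LinearMap.range (LinearMap.mulLeft ℚ y) <
        LinearMap.range (LinearMap.mulLeft ℚ z) := by
      refine lt_of_le_of_ne hle (fun heq => ?_)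
      have hmem : z ∈ LinearMap.range (LinearMap.mulLeft ℚ y) := by
        rw [heq]; exact ⟨1, by simp [LinearMap.mulLeft_apply]⟩
      obtain ⟨r, hr⟩ := hmem
      simp only [LinearMap.mulLeft_apply] at hr
      -- z = y * r = z * (n * (x * r))
      have hzm : z * (n * (x * r)) = z := by
        calc z * (n * (x * r)) = (z * n * x) * r := by noncomm_ring
          _ = y * r := by rw [hxy]
          _ = z := hr
      set m := n * (x * r) with hm
      have hmu : ¬IsUnit m := nonunit_mul_right hUN hn _
      have hmnil : IsNilpotent m := (hUN m).resolve_left hmu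
      have hunit : IsUnit (1 - m) := hmnil.isUnit_one_sub
      obtain ⟨u, hu⟩ := hunit
      have : z * (1 - m) = 0 := by rw [mul_sub, mul_one, hzm, sub_self]
      have : z = 0 := by
        calc z = z * ((1 - m) * ((u⁻¹ : Rˣ) : R)) := by rw [← hu, Units.mul_inv, mul_one]
          _ = (z * (1 - m)) * ((u⁻¹ : Rˣ) : R) := by rw [mul_assoc]
          _ = 0 := by rw [this, zero_mul]
      exact hz0 this
    have := Submodule.finrank_lt_finrank_of_lt hlt
    exact ih y hy0' hy (by omega)

theorem commutator_not_unit (hUN : ∀ x : R, IsUnit x ∨ IsNilpotent x)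
    (hce : IsCentrallyEssential R) (a b : R) : ¬IsUnit (a * b - b * a) := by
  obtain ⟨z, hz0, hzc, hzann⟩ := exists_central_ann hUN hce
  have hcentral : ∀ r : R, r * z ∈ Set.center R := by
    intro r
    rcases eq_or_ne (r * z) 0 with h | h
    · rw [h]; exact Set.zero_mem_center
    obtain ⟨x, y, hx, hy, hx0, hy0, hxy⟩ := hce (r * z) h
    have hxu : IsUnit x := by
      by_contra hxu
      have : z * x = 0 := hzann x hxu
      have : r * z * x = 0 := by rw [mul_assoc, this, mul_zero]
      exact hy0 (by rw [← hxy, this])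
    obtain ⟨u, hu⟩ := hxu
    have hinv : ((u⁻¹ : Rˣ) : R) ∈ Set.center R := by
      rw [Semigroup.mem_center_iff]
      intro g
      have hcx := Semigroup.mem_center_iff.mp hx
      calc g * ((u⁻¹ : Rˣ) : R)
          = ((u⁻¹ : Rˣ) : R) * (u : R) * g * ((u⁻¹ : Rˣ) : R) := by
            rw [Units.inv_mul, one_mul]
        _ = ((u⁻¹ : Rˣ) : R) * (g * (u : R)) * ((u⁻¹ : Rˣ) : R) := by
            rw [hu, mul_assoc ((u⁻¹ : Rˣ) : R) x g, ← hcx g]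
        _ = ((u⁻¹ : Rˣ) : R) * g := by
            rw [mul_assoc, mul_assoc, Units.mul_inv, mul_one]
    have hrz : r * z = y * ((u⁻¹ : Rˣ) : R) := by
      calc r * z = r * z * (x * ((u⁻¹ : Rˣ) : R)) := by
            rw [← hu, Units.mul_inv, mul_one]
        _ = (r * z * x) * ((u⁻¹ : Rˣ) : R) := by noncomm_ring
        _ = y * ((u⁻¹ : Rˣ) : R) := by rw [hxy]
    rw [hrz]
    exact Set.mul_mem_center hy hinv
  intro hcu
  have hkey : (a * b - b * a) * z = 0 := by
    have h1 : a * b * z = b * a * z := by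
      have hbz := Semigroup.mem_center_iff.mp (hcentral b)
      have hzc' := Semigroup.mem_center_iff.mp hzc
      calc a * b * z = a * (b * z) := by rw [mul_assoc]
        _ = (b * z) * a := hbz a
        _ = b * (z * a) := by rw [mul_assoc]
        _ = b * (a * z) := by rw [hzc' a]
        _ = b * a * z := by rw [mul_assoc]
    rw [sub_mul, h1, sub_self]
  obtain ⟨u, hu⟩ := hcu
  have : z = 0 := by
    calc z = ((u⁻¹ : Rˣ) : R) * ((a * b - b * a) * z) := by
          rw [← mul_assoc, ← hu, Units.inv_mul, one_mul]
      _ = 0 := by rw [hkey, mul_zero]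
  exact hz0 this

end GeneralRing

section Tensor

section tensor
variable {M : Type*} [AddCommGroup M]

theorem tmul_one_eq_zero_iff
    (htf : ∀ (n : ℕ) (m : M), 0 < n → n • m = 0 → m = 0)
    (m : M) (h : (1 : ℚ) ⊗ₜ[ℤ] m = 0) : m = 0 := by
  set S := nonZeroDivisors ℤ
  set g : M →ₗ[ℤ] ℚ ⊗[ℤ] M := TensorProduct.mk ℤ ℚ M 1 with hg
  have hbc : IsBaseChange ℚ g := TensorProduct.isBaseChange ℤ M ℚ
  have : IsLocalizedModule S g := (isLocalizedModule_iff_isBaseChange S ℚ g).mpr hbc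
  have h0 : g m = 0 := h
  obtain ⟨s, hs⟩ := (IsLocalizedModule.eq_zero_iff S g).mp h0
  have hs0 : (s : ℤ) ≠ 0 := nonZeroDivisors.coe_ne_zero s
  have hz : ((s : ℤ)) • m = 0 := hs
  have : ((s : ℤ).natAbs : ℤ) • m = 0 := by
    rcases Int.natAbs_eq (s : ℤ) with he | he
    · rw [← he]; exact hz
    · have h' : ((s : ℤ).natAbs : ℤ) = -(s : ℤ) := by omega
      rw [h', neg_smul, hz, neg_zero]
  refine htf (s : ℤ).natAbs m ?_ ?_
  · exact Int.natAbs_pos.mpr hs0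
  · rwa [natCast_zsmul] at this

theorem exists_nat_smul_eq_tmul (t : ℚ ⊗[ℤ] M) :
    ∃ n : ℕ, 0 < n ∧ ∃ m : M, (n : ℚ) • t = (1 : ℚ) ⊗ₜ[ℤ] m := by
  induction t with
  | zero => exact ⟨1, one_pos, 0, by simp⟩
  | tmul q m =>
    refine ⟨q.den, q.pos, q.num • m, ?_⟩
    have h1 : (q.den : ℚ) • (q ⊗ₜ[ℤ] m) = ((q.den : ℚ) * q) ⊗ₜ[ℤ] m := by
      rw [smul_tmul', smul_eq_mul]
    rw [h1, Rat.den_mul_eq_num]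
    rw [show ((q.num : ℚ) ⊗ₜ[ℤ] m) = (q.num • (1 : ℚ)) ⊗ₜ[ℤ] m by rw [zsmul_eq_mul, mul_one]]
    rw [smul_tmul]
  | add s t hs ht =>
    obtain ⟨n1, hn1, m1, h1⟩ := hs
    obtain ⟨n2, hn2, m2, h2⟩ := ht
    refine ⟨n1 * n2, Nat.mul_pos hn1 hn2, n2 • m1 + n1 • m2, ?_⟩
    rw [smul_add, Nat.cast_mul, tmul_add]
    rw [show ((1:ℚ) ⊗ₜ[ℤ] (n2 • m1)) = (n2:ℕ) • ((1:ℚ) ⊗ₜ[ℤ] m1) by rw [tmul_smul]]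
    rw [show ((1:ℚ) ⊗ₜ[ℤ] (n1 • m2)) = (n1:ℕ) • ((1:ℚ) ⊗ₜ[ℤ] m2) by rw [tmul_smul]]
    rw [← h1, ← h2]
    rw [← Nat.cast_smul_eq_nsmul ℚ n2 ((n1:ℚ) • s), ← Nat.cast_smul_eq_nsmul ℚ n1 ((n2:ℚ) • t)]
    rw [smul_smul, smul_smul, ← Nat.cast_mul, ← Nat.cast_mul, Nat.mul_comm n2 n1]
end tensor

section phi
variable (A : Type*) [AddCommGroup A]

noncomputable def Phi : (ℚ ⊗[ℤ] AddMonoid.End A) →ₐ[ℚ] Module.End ℚ (ℚ ⊗[ℤ] A) :=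
  Algebra.TensorProduct.lift (Algebra.ofId ℚ _)
    (((Module.End.baseChangeHom ℤ ℚ A).toRingHom.comp
      (addMonoidEndRingEquivInt A).toRingHom).toIntAlgHom)
    (fun q _ => Algebra.commutes q _)

theorem Phi_tmul (q : ℚ) (f : AddMonoid.End A) (a : ℚ ⊗[ℤ] A) :
    Phi A (q ⊗ₜ[ℤ] f) a = q • (LinearMap.baseChange ℚ (f.toIntLinearMap)) a := by
  simp [Phi, Algebra.TensorProduct.lift_tmul, Algebra.ofId_apply, Algebra.smul_def]
  rfl

variable {A}

theorem htfEnd (htf : ∀ (n : ℕ) (a : A), 0 < n → n • a = 0 → a = 0) :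
    ∀ (n : ℕ) (f : AddMonoid.End A), 0 < n → n • f = 0 → f = 0 := by
  intro n f hn hf
  refine DFunLike.ext f 0 fun a => ?_
  have : (n • f) a = 0 := by rw [hf]; rfl
  have hna : n • (f a) = 0 := by
    exact this
  exact htf n (f a) hn hna

theorem Phi_injective (htf : ∀ (n : ℕ) (a : A), 0 < n → n • a = 0 → a = 0) :
    Function.Injective (Phi A) := by
  rw [injective_iff_map_eq_zero]
  intro t ht
  obtain ⟨n, hn, m, hm⟩ := exists_nat_smul_eq_tmul t
  have h1 : Phi A ((1:ℚ) ⊗ₜ[ℤ] m) = 0 := by rw [← hm, map_smul, ht, smul_zero]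
  have h2 : ∀ a : A, (1:ℚ) ⊗ₜ[ℤ] (m a) = 0 := by
    intro a
    have h3 := congrArg (fun g : Module.End ℚ (ℚ ⊗[ℤ] A) => g ((1:ℚ) ⊗ₜ[ℤ] a)) h1
    simp only [Phi_tmul, one_smul, LinearMap.zero_apply] at h3
    rwa [LinearMap.baseChange_tmul] at h3
  have hm0 : m = 0 := by
    refine DFunLike.ext m 0 fun a => ?_
    exact tmul_one_eq_zero_iff htf _ (h2 a)
  have hz : (n:ℚ) • t = 0 := by rw [hm, hm0]; simp
  have hn0 : (n:ℚ) ≠ 0 := by exact_mod_cast hn.ne'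
  calc t = (n:ℚ)⁻¹ • ((n:ℚ) • t) := by rw [smul_smul, inv_mul_cancel₀ hn0, one_smul]
    _ = 0 := by rw [hz, smul_zero]

theorem fd_quasiEnd (htf : ∀ (n : ℕ) (a : A), 0 < n → n • a = 0 → a = 0)
    (hfr : FiniteDimensional ℚ (ℚ ⊗[ℤ] A)) :
    FiniteDimensional ℚ (ℚ ⊗[ℤ] AddMonoid.End A) :=
  FiniteDimensional.of_injective (Phi A).toLinearMap (Phi_injective htf)
end phi

section idem
variable {A : Type*} [AddCommGroup A]

theorem trivial_idempotents
    (htf : ∀ (n : ℕ) (a : A), 0 < n → n • a = 0 → a = 0)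
    (hsi : StronglyIndecomposable A)
    (e : ℚ ⊗[ℤ] AddMonoid.End A) (he : e * e = e) : e = 0 ∨ e = 1 := by
  by_contra hcon
  push_neg at hcon
  obtain ⟨he0, he1⟩ := hcon
  obtain ⟨n, hn, f, hf⟩ := exists_nat_smul_eq_tmul e
  have hinjE : ∀ g : AddMonoid.End A, (1:ℚ) ⊗ₜ[ℤ] g = 0 → g = 0 :=
    fun g => tmul_one_eq_zero_iff (htfEnd htf) g
  have hn0 : (n:ℚ) ≠ 0 := by exact_mod_cast hn.ne'
  have hscale : ∀ x y : ℚ ⊗[ℤ] AddMonoid.End A, (n:ℚ) • x = (n:ℚ) • y → x = y := by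
    intro x y hxy
    have := congrArg (fun t => (n:ℚ)⁻¹ • t) hxy
    simpa [smul_smul, inv_mul_cancel₀ hn0] using this
  have key : (1:ℚ) ⊗ₜ[ℤ] (f * f) = (1:ℚ) ⊗ₜ[ℤ] (n • f) := by
    calc (1:ℚ) ⊗ₜ[ℤ] (f * f) = ((1:ℚ) ⊗ₜ[ℤ] f) * ((1:ℚ) ⊗ₜ[ℤ] f) := by
          rw [Algebra.TensorProduct.tmul_mul_tmul, one_mul]
      _ = ((n:ℚ) • e) * ((n:ℚ) • e) := by rw [hf]
      _ = ((n:ℚ) * (n:ℚ)) • (e * e) := by rw [smul_mul_smul_comm]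
      _ = (n:ℚ) • ((n:ℚ) • e) := by rw [he, mul_smul]
      _ = (n:ℚ) • ((1:ℚ) ⊗ₜ[ℤ] f) := by rw [hf]
      _ = (n:ℕ) • ((1:ℚ) ⊗ₜ[ℤ] f) := by rw [Nat.cast_smul_eq_nsmul]
      _ = (1:ℚ) ⊗ₜ[ℤ] (n • f) := by exact (map_nsmul (TensorProduct.mk ℤ ℚ (AddMonoid.End A) 1) n f).symm
  have hff : f * f = n • f := by
    have h0 : (1:ℚ) ⊗ₜ[ℤ] (f * f - n • f) = 0 := by
      rw [TensorProduct.tmul_sub, key, sub_self]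
    exact sub_eq_zero.mp (hinjE _ h0)
  have hffa : ∀ a : A, f (f a) = n • (f a) := by
    intro a
    have : (f * f) a = (n • f) a := by rw [hff]
    simpa [AddMonoidHom.nsmul_apply] using this
  have hf0 : f ≠ 0 := by
    intro h
    apply he0
    apply hscale e 0
    rw [hf, h, smul_zero]
    simp
  have hfn : f ≠ n • (1 : AddMonoid.End A) := by
    intro h
    apply he1
    apply hscale e 1
    rw [hf, h]
    have : (1:ℚ) ⊗ₜ[ℤ] (n • (1 : AddMonoid.End A)) = (n:ℕ) • ((1:ℚ) ⊗ₜ[ℤ] (1 : AddMonoid.End A)) := by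
      exact map_nsmul (TensorProduct.mk ℤ ℚ (AddMonoid.End A) 1) n 1
    rw [this, ← Algebra.TensorProduct.one_def, Nat.cast_smul_eq_nsmul]
  set B := AddMonoidHom.range (f : A →+ A) with hB
  set C := AddMonoidHom.ker (f : A →+ A) with hC
  apply hsi
  refine ⟨B, C, ?_, ?_, ?_, n, hn, ?_⟩
  · -- B ≠ ⊥
    obtain ⟨a, ha⟩ := DFunLike.ne_iff.mp hf0
    intro hbot
    apply ha
    have : f a ∈ B := ⟨a, rfl⟩
    rw [hbot] at this
    simpa using this
  · -- C ≠ ⊥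
    obtain ⟨a, ha⟩ := DFunLike.ne_iff.mp hfn
    have ha' : f a ≠ n • a := by
      intro h; apply ha
      simpa [AddMonoidHom.nsmul_apply] using h
    intro hbot
    have hmem : n • a - f a ∈ C := by
      have : f (n • a - f a) = 0 := by
        rw [map_sub, map_nsmul, hffa a, sub_self]
      exact this
    rw [hbot] at hmem
    have : n • a - f a = 0 := by simpa using hmem
    exact ha' (sub_eq_zero.mp this).symm
  · -- B ⊓ C = ⊥
    rw [eq_bot_iff]
    intro x hx
    obtain ⟨⟨y, hy⟩, hker⟩ := hx
    have hker' : f x = 0 := hker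
    have : f x = n • x := by rw [← hy]; exact hffa y
    rw [hker'] at this
    have := htf n x hn this.symm
    simpa using this
  · -- n • a ∈ B ⊔ C
    intro a
    have h1 : f a ∈ B := ⟨a, rfl⟩
    have h2 : n • a - f a ∈ C := by
      have : f (n • a - f a) = 0 := by
        rw [map_sub, map_nsmul, hffa a, sub_self]
      exact this
    have : n • a = f a + (n • a - f a) := by abel
    rw [this]
    exact AddSubgroup.add_mem _ (AddSubgroup.mem_sup_left h1) (AddSubgroup.mem_sup_right h2)
end idem

theorem nontrivial_quasiEnd {A : Type*} [AddCommGroup A]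
    (htf : ∀ (n : ℕ) (a : A), 0 < n → n • a = 0 → a = 0)
    (hpsoc : PSoc A ≠ ⊤) : Nontrivial (ℚ ⊗[ℤ] AddMonoid.End A) := by
  refine ⟨1, 0, fun h10 => hpsoc ?_⟩
  have h1 : (1:ℚ) ⊗ₜ[ℤ] (1 : AddMonoid.End A) = 0 := by
    rw [← Algebra.TensorProduct.one_def]; exact h10
  have hid0 : (1 : AddMonoid.End A) = 0 := tmul_one_eq_zero_iff (htfEnd htf) _ h1
  have hA : ∀ a : A, a = 0 := by
    intro a
    have : (1 : AddMonoid.End A) a = (0 : AddMonoid.End A) a := by rw [hid0]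
    simpa using this
  ext x
  simp only [hA x, AddSubgroup.mem_top, iff_true]
  exact zero_mem _

end Tensor

/-- for a strongly indecomposable torsion-free abelian group `A` of finite
rank with `A ≠ PSoc A`, if the quasi-endomorphism ring `ℚEnd A = ℚ ⊗ End A` is
centrally essential then `ℚEnd A / J(ℚEnd A)` is commutative and
`C(ℚEnd A) ∩ M ≠ 0` for every minimal right ideal `M` of `ℚEnd A`. -/
theorem comm_mod_jacobson_of_isCentrallyEssential_quasiEnd
    (A : Type*) [AddCommGroup A]
    (htf : ∀ (n : ℕ) (a : A), 0 < n → n • a = 0 → a = 0)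
    (hsi : StronglyIndecomposable A)
    (hfr : FiniteDimensional ℚ (ℚ ⊗[ℤ] A))
    (hpsoc : PSoc A ≠ ⊤)
    (hce : IsCentrallyEssential (ℚ ⊗[ℤ] AddMonoid.End A)) :
    (∀ a b : ℚ ⊗[ℤ] AddMonoid.End A,
        a * b - b * a ∈ Ideal.jacobson (⊥ : Ideal (ℚ ⊗[ℤ] AddMonoid.End A))) ∧
      ∀ M : AddSubgroup (ℚ ⊗[ℤ] AddMonoid.End A), IsMinimalRightIdeal M →
        ∃ x : ℚ ⊗[ℤ] AddMonoid.End A,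
          x ≠ 0 ∧ x ∈ Set.center (ℚ ⊗[ℤ] AddMonoid.End A) ∧ x ∈ M := by
  classical
  haveI := hfr
  haveI hFD : FiniteDimensional ℚ (ℚ ⊗[ℤ] AddMonoid.End A) := fd_quasiEnd htf hfr
  haveI hNT : Nontrivial (ℚ ⊗[ℤ] AddMonoid.End A) := nontrivial_quasiEnd htf hpsoc
  have hid : ∀ e : ℚ ⊗[ℤ] AddMonoid.End A, e * e = e → e = 0 ∨ e = 1 :=
    trivial_idempotents htf hsi
  have hUN := unit_or_nilpotent hid
  constructor
  · intro a b
    rw [jacobson_bot_eq_nonunits hUN]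
    exact commutator_not_unit hUN hce a b
  · rintro M ⟨hM0, hMr, -⟩
    obtain ⟨a, haM, ha0⟩ : ∃ a ∈ M, a ≠ 0 := by
      by_contra h
      push_neg at h
      exact hM0 ((AddSubgroup.eq_bot_iff_forall M).mpr h)
    obtain ⟨x, y, hx, hy, hx0, hy0, hxy⟩ := hce a ha0
    exact ⟨y, hy0, hy, hxy ▸ hMr a haM x⟩
end
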